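/- Let n ≥ 4 and let S_n be the star graph on vertices {0,1,...,n-1}. The rank (minimum cardinality of a generating set) of the monoid PsEnd(S_n) of all partial strong endomorphisms of S_n is 6, the rank of PswEnd(S_n) is 7, the rank of PEnd(S_n) is 7, the rank of PwEnd(S_n) is 7, and the rank of IEnd(S_n) is 6. -/

import Mathlib

def pmul {V : Type*} (f g : V → Option V) : V → Option V := fun x => (f x).bind g

def pdom {V : Type*} (f : V → Option V) : Set V := {x | f x ≠ none}

def pim {V : Type*} (f : V → Option V) : Set V := {y | ∃ x, f x = some y}

def pker {V : Type*} (f : V → Option V) : V → V → Prop := fun x y => f x ≠ none ∧ f x = f y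

def PInj {V : Type*} (f : V → Option V) : Prop := ∀ u v a, f u = some a → f v = some a → u = v

def edge {n : ℕ} (u v : Fin n) : Prop := (u.val = 0 ∧ v.val ≠ 0) ∨ (v.val = 0 ∧ u.val ≠ 0)

def IsPEnd {n : ℕ} (α : Fin n → Option (Fin n)) : Prop :=
  ∀ u v a b, α u = some a → α v = some b → edge u v → edge a b

def IsPwEnd {n : ℕ} (α : Fin n → Option (Fin n)) : Prop :=
  ∀ u v a b, α u = some a → α v = some b → edge u v → a ≠ b → edge a b

def IsPsEnd {n : ℕ} (α : Fin n → Option (Fin n)) : Prop :=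
  ∀ u v a b, α u = some a → α v = some b → (edge u v ↔ edge a b)

def IsPswEnd {n : ℕ} (α : Fin n → Option (Fin n)) : Prop :=
  ∀ u v a b, α u = some a → α v = some b → ((edge u v ∧ a ≠ b) ↔ edge a b)

def PEndS (n : ℕ) : Set (Fin n → Option (Fin n)) := {α | IsPEnd α}
def PwEndS (n : ℕ) : Set (Fin n → Option (Fin n)) := {α | IsPwEnd α}
def PsEndS (n : ℕ) : Set (Fin n → Option (Fin n)) := {α | IsPsEnd α}
def PswEndS (n : ℕ) : Set (Fin n → Option (Fin n)) := {α | IsPswEnd α}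
def IEndS (n : ℕ) : Set (Fin n → Option (Fin n)) := {α | PInj α ∧ IsPEnd α}
def PAutS (n : ℕ) : Set (Fin n → Option (Fin n)) := {α | PInj α ∧ IsPsEnd α}

def RegularIn {V : Type*} (M : Set (V → Option V)) (a : V → Option V) : Prop :=
  ∃ b ∈ M, pmul (pmul a b) a = a

def GreenL {V : Type*} (M : Set (V → Option V)) (a b : V → Option V) : Prop :=
  (∃ g ∈ M, a = pmul g b) ∧ (∃ g ∈ M, b = pmul g a)

def GreenR {V : Type*} (M : Set (V → Option V)) (a b : V → Option V) : Prop :=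
  (∃ g ∈ M, a = pmul b g) ∧ (∃ g ∈ M, b = pmul a g)

def GreenH {V : Type*} (M : Set (V → Option V)) (a b : V → Option V) : Prop :=
  GreenL M a b ∧ GreenR M a b

def GreenJ {V : Type*} (M : Set (V → Option V)) (a b : V → Option V) : Prop :=
  (∃ g ∈ M, ∃ h ∈ M, a = pmul (pmul g b) h) ∧ (∃ g ∈ M, ∃ h ∈ M, b = pmul (pmul g a) h)

inductive genFrom {V : Type*} (S : Set (V → Option V)) : (V → Option V) → Prop
  | one : genFrom S (fun x => some x)
  | mem (a : V → Option V) (h : a ∈ S) : genFrom S a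
  | mul (a b : V → Option V) (ha : genFrom S a) (hb : genFrom S b) : genFrom S (pmul a b)

def rankIs {V : Type*} (M : Set (V → Option V)) (r : ℕ) : Prop :=
  IsLeast {k : ℕ | ∃ S : Set (V → Option V),
    S.Finite ∧ S.ncard = k ∧ S ⊆ M ∧ {a | genFrom S a} = M} r


theorem Equiv.Perm.inv_apply_self {α : Type*} (f : Equiv.Perm α) (x : α) : f⁻¹ (f x) = x :=
  f.symm_apply_apply x

namespace Star

variable {n : ℕ}

/-- total -/
def Tot {V : Type*} (f : V → Option V) : Prop := ∀ x, f x ≠ none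

/-- the unit candidates -/
def US {V : Type*} : Set (V → Option V) := {g | Tot g ∧ PInj g}

def idm (V : Type*) : V → Option V := fun x => some x

lemma pmul_assoc {V : Type*} (a b c : V → Option V) :
    pmul (pmul a b) c = pmul a (pmul b c) := by
  funext x
  simp only [pmul]
  cases a x <;> simp [pmul]

lemma tot_surj {V : Type*} [Finite V] {g : V → Option V} (ht : Tot g) (hi : PInj g) :
    ∀ y, ∃ x, g x = some y := by
  have hs : ∀ x, (g x).isSome := fun x => Option.ne_none_iff_isSome.mp (ht x)
  set f : V → V := fun x => (g x).get (hs x) with hf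
  have hinj : Function.Injective f := by
    intro x y hxy
    exact hi x y (f x) (by simp [hf, Option.some_get]) (by rw [hxy]; simp [hf, Option.some_get])
  have hsurj := (Finite.injective_iff_surjective.mp hinj)
  intro y
  obtain ⟨x, hx⟩ := hsurj y
  exact ⟨x, by rw [← hx]; simp [hf, Option.some_get]⟩

lemma US_closed {V : Type*} [Finite V] {b c : V → Option V} (h : pmul b c ∈ US) :
    b ∈ US ∧ c ∈ US := by
  obtain ⟨ht, hi⟩ := h
  have hbt : Tot b := by
    intro x hx
    exact ht x (by simp [pmul, hx])
  have hbi : PInj b := by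
    intro x y a hx hy
    have h1 : pmul b c x = pmul b c y := by simp [pmul, hx, hy]
    have h2 := ht x
    cases hcx : pmul b c x with
    | none => exact absurd hcx h2
    | some w => exact hi x y w hcx (h1 ▸ hcx)
  have hbsurj := tot_surj hbt hbi
  refine ⟨⟨hbt, hbi⟩, ?_, ?_⟩
  · intro y hy
    obtain ⟨x, hx⟩ := hbsurj y
    exact ht x (by simp [pmul, hx, hy])
  · intro y y' w hy hy'
    obtain ⟨x, hx⟩ := hbsurj y
    obtain ⟨x', hx'⟩ := hbsurj y'
    have e1 : pmul b c x = some w := by simp [pmul, hx, hy]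
    have e2 : pmul b c x' = some w := by simp [pmul, hx', hy']
    have := hi x x' w e1 e2
    rw [this, hx'] at hx
    exact (Option.some_injective _ hx).symm

lemma gen_units {V : Type*} [Finite V] {S : Set (V → Option V)} {a : V → Option V}
    (hg : genFrom S a) (ha : a ∈ US) : genFrom (S ∩ US) a := by
  induction hg with
  | one => exact genFrom.one
  | mem a h => exact genFrom.mem a ⟨h, ha⟩
  | mul b c hb hc ihb ihc =>
      obtain ⟨h1, h2⟩ := US_closed ha
      exact genFrom.mul _ _ (ihb h1) (ihc h2)

lemma gen_empty {V : Type*} {a : V → Option V} (hg : genFrom (∅ : Set (V → Option V)) a) :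
    a = idm V := by
  induction hg with
  | one => rfl
  | mem a h => exact absurd h (Set.notMem_empty a)
  | mul b c hb hc ihb ihc =>
      subst ihb; subst ihc
      funext x; simp [pmul, idm]

lemma gen_comm_single {V : Type*} {g : V → Option V} {a b : V → Option V}
    (ha : genFrom {g} a) (hb : genFrom {g} b) : pmul a b = pmul b a := by
  have key : ∀ x, genFrom ({g} : Set (V → Option V)) x → pmul x g = pmul g x := by
    intro x hx
    induction hx with
    | one => funext y; simp only [pmul]; cases h : g y <;> simp [h]
    | mem a h => rw [Set.mem_singleton_iff] at h; subst h; rfl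
    | mul u v hu hv ihu ihv =>
        rw [pmul_assoc, ihv, ← pmul_assoc, ihu, pmul_assoc]
  induction hb with
  | one =>
      funext y; simp only [pmul]; cases h : a y <;> simp [h]
  | mem b h =>
      rw [Set.mem_singleton_iff] at h; subst h; exact key a ha
  | mul u v hu hv ihu ihv =>
      rw [← pmul_assoc, ihu, pmul_assoc, ihv, ← pmul_assoc]

/-- The key lower-bound lemma. -/
lemma keyLB {V : Type*} {S M C : Set (V → Option V)}
    (hgen : {a | genFrom S a} = M)
    (hid : idm V ∉ C)
    (hclose : ∀ a b c, a ∈ C → b ∈ M → c ∈ M → a = pmul b c → b ∈ C ∨ c ∈ C) :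
    ∀ a, a ∈ M → a ∈ C → ∃ s ∈ S, s ∈ C := by
  have main : ∀ a, genFrom S a → a ∈ C → ∃ s ∈ S, s ∈ C := by
    intro a hg
    induction hg with
    | one => intro h; exact absurd h hid
    | mem a h => intro hc; exact ⟨a, h, hc⟩
    | mul b c hb hc ihb ihc =>
        intro hc'
        have hbM : b ∈ M := by rw [← hgen]; exact hb
        have hcM : c ∈ M := by rw [← hgen]; exact hc
        rcases hclose _ b c hc' hbM hcM rfl with h | h
        · exact ihb h
        · exact ihc h
  intro a haM haC
  exact main a (by rw [← Set.mem_setOf_eq (p := fun a => genFrom S a), hgen]; exact haM) haC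

lemma six_le_ncard {β : Type*} {S : Set β} (hfin : S.Finite)
    {x1 x2 x3 x4 x5 x6 : β}
    (h1 : x1 ∈ S) (h2 : x2 ∈ S) (h3 : x3 ∈ S) (h4 : x4 ∈ S) (h5 : x5 ∈ S) (h6 : x6 ∈ S)
    (d12 : x1 ≠ x2) (d13 : x1 ≠ x3) (d14 : x1 ≠ x4) (d15 : x1 ≠ x5) (d16 : x1 ≠ x6)
    (d23 : x2 ≠ x3) (d24 : x2 ≠ x4) (d25 : x2 ≠ x5) (d26 : x2 ≠ x6)
    (d34 : x3 ≠ x4) (d35 : x3 ≠ x5) (d36 : x3 ≠ x6)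
    (d45 : x4 ≠ x5) (d46 : x4 ≠ x6) (d56 : x5 ≠ x6) : 6 ≤ S.ncard := by
  have hsub : ({x1, x2, x3, x4, x5, x6} : Set β) ⊆ S := by
    intro x hx
    simp only [Set.mem_insert_iff, Set.mem_singleton_iff] at hx
    rcases hx with h|h|h|h|h|h <;> subst h <;> assumption
  have hc : ({x1, x2, x3, x4, x5, x6} : Set β).ncard = 6 := by
    rw [Set.ncard_insert_of_notMem (by simp [d12, d13, d14, d15, d16]),
        Set.ncard_insert_of_notMem (by simp [d23, d24, d25, d26]),
        Set.ncard_insert_of_notMem (by simp [d34, d35, d36]),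
        Set.ncard_insert_of_notMem (by simp [d45, d46]),
        Set.ncard_insert_of_notMem (by simp [d56]),
        Set.ncard_singleton]
  calc 6 = ({x1, x2, x3, x4, x5, x6} : Set β).ncard := hc.symm
    _ ≤ S.ncard := Set.ncard_le_ncard hsub hfin

lemma seven_le_ncard {β : Type*} {S : Set β} (hfin : S.Finite)
    {x1 x2 x3 x4 x5 x6 x7 : β}
    (h1 : x1 ∈ S) (h2 : x2 ∈ S) (h3 : x3 ∈ S) (h4 : x4 ∈ S) (h5 : x5 ∈ S) (h6 : x6 ∈ S)
    (h7 : x7 ∈ S)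
    (d12 : x1 ≠ x2) (d13 : x1 ≠ x3) (d14 : x1 ≠ x4) (d15 : x1 ≠ x5) (d16 : x1 ≠ x6)
    (d17 : x1 ≠ x7)
    (d23 : x2 ≠ x3) (d24 : x2 ≠ x4) (d25 : x2 ≠ x5) (d26 : x2 ≠ x6) (d27 : x2 ≠ x7)
    (d34 : x3 ≠ x4) (d35 : x3 ≠ x5) (d36 : x3 ≠ x6) (d37 : x3 ≠ x7)
    (d45 : x4 ≠ x5) (d46 : x4 ≠ x6) (d47 : x4 ≠ x7) (d56 : x5 ≠ x6) (d57 : x5 ≠ x7)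
    (d67 : x6 ≠ x7) : 7 ≤ S.ncard := by
  have hsub : ({x1, x2, x3, x4, x5, x6, x7} : Set β) ⊆ S := by
    intro x hx
    simp only [Set.mem_insert_iff, Set.mem_singleton_iff] at hx
    rcases hx with h|h|h|h|h|h|h <;> subst h <;> assumption
  have hc : ({x1, x2, x3, x4, x5, x6, x7} : Set β).ncard = 7 := by
    rw [Set.ncard_insert_of_notMem (by simp [d12, d13, d14, d15, d16, d17]),
        Set.ncard_insert_of_notMem (by simp [d23, d24, d25, d26, d27]),
        Set.ncard_insert_of_notMem (by simp [d34, d35, d36, d37]),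
        Set.ncard_insert_of_notMem (by simp [d45, d46, d47]),
        Set.ncard_insert_of_notMem (by simp [d56, d57]),
        Set.ncard_insert_of_notMem (by simp [d67]),
        Set.ncard_singleton]
  calc 7 = ({x1, x2, x3, x4, x5, x6, x7} : Set β).ncard := hc.symm
    _ ≤ S.ncard := Set.ncard_le_ncard hsub hfin

end Star
namespace Star

variable {n : ℕ} [NeZero n]

lemma val0_iff (x : Fin n) : x.val = 0 ↔ x = 0 := by
  constructor
  · intro h; exact Fin.ext (by simpa using h)
  · intro h; subst h; simp

def pe (σ : Equiv.Perm (Fin n)) : Fin n → Option (Fin n) := fun x => some (σ x)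

lemma pe_tot (σ : Equiv.Perm (Fin n)) : Tot (pe σ) := fun x => by simp [pe]

lemma pe_pinj (σ : Equiv.Perm (Fin n)) : PInj (pe σ) := by
  intro u v a hu hv
  simp only [pe, Option.some_inj] at hu hv
  exact σ.injective (hu.trans hv.symm)

lemma pe_mem_psEnd {σ : Equiv.Perm (Fin n)} (hσ : σ 0 = 0) : IsPsEnd (pe σ) := by
  have key : ∀ x : Fin n, (σ x).val = 0 ↔ x.val = 0 := by
    intro x
    rw [val0_iff, val0_iff]
    constructor
    · intro h; exact σ.injective (h.trans hσ.symm)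
    · intro h; rw [h]; exact hσ
  intro u v a b hu hv
  simp only [pe, Option.some_inj] at hu hv
  subst hu; subst hv
  unfold edge
  simp only [ne_eq, key]

lemma swap_zero {a b : Fin n} (ha : a ≠ 0) (hb : b ≠ 0) :
    Equiv.swap a b 0 = 0 :=
  Equiv.swap_apply_of_ne_of_ne (Ne.symm ha) (Ne.symm hb)

lemma exists_perm_two {β : Type*} [DecidableEq β] (a b c d : β) (hab : a ≠ b) (hcd : c ≠ d) :
    ∃ τ : Equiv.Perm β, τ a = c ∧ τ b = d := by
  refine ⟨Equiv.swap (Equiv.swap a c b) d * Equiv.swap a c, ?_, ?_⟩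
  · have h1 : Equiv.swap a c a = c := Equiv.swap_apply_left a c
    have h2 : c ≠ Equiv.swap a c b := fun h => hab (Equiv.injective _ (h1.trans h))
    simp only [Equiv.Perm.mul_apply, h1]
    exact Equiv.swap_apply_of_ne_of_ne h2 hcd
  · simp only [Equiv.Perm.mul_apply]
    exact Equiv.swap_apply_left _ d

def liftp (τ : Equiv.Perm {x : Fin n // x ≠ 0}) : Equiv.Perm (Fin n) :=
  τ.extendDomain (Equiv.refl _)

lemma liftp_zero (τ : Equiv.Perm {x : Fin n // x ≠ 0}) : liftp τ 0 = 0 :=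
  Equiv.Perm.extendDomain_apply_not_subtype τ (Equiv.refl _) (by simp)

lemma liftp_ne (τ : Equiv.Perm {x : Fin n // x ≠ 0}) (x : Fin n) (h : x ≠ 0) :
    liftp τ x = ↑(τ ⟨x, h⟩) := by
  have := Equiv.Perm.extendDomain_apply_subtype τ (Equiv.refl _) h
  simpa [liftp] using this

def psin (τ : Equiv.Perm {x : Fin n // x ≠ 0}) : Fin n → Option (Fin n) := pe (liftp τ)

lemma psin_injective : Function.Injective (psin (n := n)) := by
  intro τ1 τ2 h
  apply Equiv.ext
  intro x
  have hx := congrFun h x.1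
  simp only [psin, pe, Option.some_inj, liftp_ne _ _ x.2] at hx
  exact Subtype.ext hx

lemma psin_one : psin (n := n) 1 = (fun x => some x) := by
  funext x
  by_cases hx : x = 0
  · subst hx; simp [psin, pe, liftp_zero]
  · simp [psin, pe, liftp_ne _ _ hx]


lemma psin_mul (τ1 τ2 : Equiv.Perm {x : Fin n // x ≠ 0}) :
    pmul (psin τ1) (psin τ2) = psin (τ2 * τ1) := by
  funext x
  by_cases hx : x = 0
  · subst hx; simp [psin, pe, pmul, liftp_zero]
  · have h1 : liftp τ1 x = ↑(τ1 ⟨x, hx⟩) := liftp_ne _ _ hx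
    have h2 : liftp τ2 ↑(τ1 ⟨x, hx⟩) = ↑(τ2 (τ1 ⟨x, hx⟩)) := by
      rw [liftp_ne _ _ (τ1 ⟨x, hx⟩).2, Subtype.coe_eta]
    have h3 : liftp (τ2 * τ1) x = ↑((τ2 * τ1) ⟨x, hx⟩) := liftp_ne _ _ hx
    simp [psin, pe, pmul, h1, h2, h3]

lemma exists_units (hn : 4 ≤ n) : ∃ g1 g2 : Fin n → Option (Fin n),
    g1 ≠ g2 ∧
    (∃ σ : Equiv.Perm (Fin n), σ 0 = 0 ∧ g1 = pe σ) ∧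
    (∃ σ : Equiv.Perm (Fin n), σ 0 = 0 ∧ g2 = pe σ) ∧
    (∀ S : Set (Fin n → Option (Fin n)), g1 ∈ S → g2 ∈ S →
       ∀ σ : Equiv.Perm (Fin n), σ 0 = 0 → genFrom S (pe σ)) := by
  obtain ⟨k, hk⟩ : ∃ k, n - 1 = k + 2 := ⟨n - 3, by omega⟩
  have hk1 : 1 ≤ k := by omega
  have hcard : Fintype.card {x : Fin n // x ≠ 0} = k + 2 := by
    have h1 := Fintype.card_subtype_compl (fun x : Fin n => x = 0)
    simp only [Fintype.card_subtype_eq, Fintype.card_fin] at h1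
    exact h1.trans hk
  let e : {x : Fin n // x ≠ 0} ≃ Fin (k + 2) := Fintype.equivFinOfCardEq hcard
  let ρ : Equiv.Perm (Fin (k + 2)) := finRotate (k + 2)
  have hclos : Subgroup.closure {ρ, Equiv.swap 0 (ρ 0)} = ⊤ :=
    Equiv.Perm.closure_cycle_adjacent_swap isCycle_finRotate support_finRotate 0
  let Φ : Equiv.Perm (Fin (k + 2)) → Equiv.Perm {x : Fin n // x ≠ 0} :=
    fun f => e.symm.permCongr f
  have hΦ1 : Φ 1 = 1 := by ext z; simp [Φ]
  have hΦmul : ∀ f g, Φ (f * g) = Φ f * Φ g := by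
    intro f g; ext z; simp [Φ]
  have hΦinj : Function.Injective Φ := (Equiv.permCongr e.symm).injective
  have hρ0 : ρ 0 = 1 := by
    show finRotate (k + 2) 0 = 1
    rw [finRotate_succ_apply, zero_add]
  have hne10 : (0 : Fin (k + 2)) ≠ ρ 0 := by
    rw [hρ0]
    intro h
    have := congrArg Fin.val h
    rw [Fin.val_zero, Fin.val_one] at this
    exact absurd this (by omega)
  refine ⟨psin (Φ (Equiv.swap 0 (ρ 0))), psin (Φ ρ), ?_, ?_, ?_, ?_⟩
  · intro h
    have h2 : Equiv.swap 0 (ρ 0) = ρ := hΦinj (psin_injective h)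
    have hcs := Equiv.Perm.card_support_swap hne10
    rw [h2] at hcs
    have hsupp : ρ.support = Finset.univ := support_finRotate
    rw [hsupp, Finset.card_univ, Fintype.card_fin] at hcs
    omega
  · exact ⟨liftp (Φ (Equiv.swap 0 (ρ 0))), liftp_zero _, rfl⟩
  · exact ⟨liftp (Φ ρ), liftp_zero _, rfl⟩
  · intro S hg1 hg2 σ hσ
    have key : ∀ τ : Equiv.Perm {x : Fin n // x ≠ 0}, genFrom S (psin τ) := by
      have hT : ∀ f ∈ Subgroup.closure {ρ, Equiv.swap 0 (ρ 0)}, genFrom S (psin (Φ f)) := by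
        intro f hf
        induction hf using Subgroup.closure_induction with
        | mem x hx =>
            rcases hx with h | h
            · subst h; exact genFrom.mem _ hg2
            · rw [Set.mem_singleton_iff] at h; subst h; exact genFrom.mem _ hg1
        | one => rw [hΦ1, psin_one]; exact genFrom.one
        | mul x y hx hy ihx ihy =>
            rw [hΦmul, ← psin_mul (Φ y) (Φ x)]
            exact genFrom.mul _ _ ihy ihx
        | inv x hx ih =>
            have hpow : ∀ m, genFrom S (psin (Φ (x ^ m))) := by
              intro m; induction m with
              | zero => rw [pow_zero, hΦ1, psin_one]; exact genFrom.one
              | succ m ihm =>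
                  rw [pow_succ, hΦmul, ← psin_mul (Φ x) (Φ (x ^ m))]
                  exact genFrom.mul _ _ ih ihm
            have hx1 : x ^ (orderOf x - 1) * x = 1 := by
              rw [← pow_succ, Nat.sub_add_cancel (orderOf_pos x)]
              exact pow_orderOf_eq_one x
            rw [inv_eq_of_mul_eq_one_left hx1]
            exact hpow _
      intro τ
      have hτ : Φ (e.permCongr τ) = τ := by ext z; simp [Φ]
      rw [← hτ]
      exact hT _ (by rw [hclos]; trivial)
    have hz : ∀ x : Fin n, σ x = 0 ↔ x = 0 :=
      fun x => ⟨fun h => σ.injective (h.trans hσ.symm), fun h => by rw [h, hσ]⟩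
    have h' : ∀ x : Fin n, x ≠ 0 ↔ σ x ≠ 0 := fun x => not_congr (hz x).symm
    have hpe : pe σ = psin (σ.subtypePerm (fun x => (h' x).symm)) := by
      funext x
      by_cases hx : x = 0
      · subst hx; simp [pe, psin, liftp_zero, hσ]
      · simp [pe, psin, liftp_ne _ _ hx, Equiv.Perm.subtypePerm_apply]
    rw [hpe]
    exact key _

lemma ext_perm {β : Fin n → Option (Fin n)} (hinj : PInj β)
    (h0 : β 0 = some 0) :
    ∃ σ : Equiv.Perm (Fin n), σ 0 = 0 ∧ ∀ x v, β x = some v → σ x = v := by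
  classical
  set I : Finset (Fin n) := Finset.univ.filter (fun x => (β x).isSome) with hI
  set J : Finset (Fin n) := I.image (fun x => (β x).getD 0) with hJ
  have hmemI : ∀ x : Fin n, (β x).isSome → x ∈ I := by
    intro x hx; rw [hI, Finset.mem_filter]; exact ⟨Finset.mem_univ x, hx⟩
  have hcard : J.card = I.card := by
    rw [hJ]
    apply Finset.card_image_of_injOn
    intro x hx y hy hxy
    have hx2 : (β x).isSome := by
      have := Finset.mem_coe.mp hx; rw [hI, Finset.mem_filter] at this; exact this.2
    have hy2 : (β y).isSome := by
      have := Finset.mem_coe.mp hy; rw [hI, Finset.mem_filter] at this; exact this.2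
    obtain ⟨vx, hvx⟩ := Option.isSome_iff_exists.mp hx2
    obtain ⟨vy, hvy⟩ := Option.isSome_iff_exists.mp hy2
    simp only [hvx, hvy, Option.getD_some] at hxy
    subst hxy
    exact hinj x y vx hvx hvy
  have hccard : Iᶜ.card = Jᶜ.card := by
    rw [Finset.card_compl, Finset.card_compl, hcard]
  let e2 : {x // x ∈ Iᶜ} ≃ {x // x ∈ Jᶜ} := Finset.equivOfCardEq hccard
  have hmem : ∀ x : Fin n, ¬(β x).isSome → x ∈ Iᶜ := by
    intro x hx; rw [Finset.mem_compl, hI, Finset.mem_filter]; simp [hx]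
  let g : Fin n → Fin n := fun x =>
    if h : (β x).isSome then (β x).get h else ↑(e2 ⟨x, hmem x h⟩)
  have hgval : ∀ x v, β x = some v → g x = v := by
    intro x v hxv
    have hs : (β x).isSome := by rw [hxv]; rfl
    simp only [g, dif_pos hs]
    simp [Option.get_of_mem hs hxv]
  have hmemJ : ∀ x, (h : (β x).isSome) → g x ∈ J := by
    intro x hx
    obtain ⟨v, hv⟩ := Option.isSome_iff_exists.mp hx
    rw [hJ, Finset.mem_image]
    exact ⟨x, hmemI x hx, by rw [hv, Option.getD_some, ← hgval x v hv]⟩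
  have hginj : Function.Injective g := by
    intro x y hxy
    by_cases hx : (β x).isSome <;> by_cases hy : (β y).isSome
    · obtain ⟨vx, hvx⟩ := Option.isSome_iff_exists.mp hx
      obtain ⟨vy, hvy⟩ := Option.isSome_iff_exists.mp hy
      rw [hgval x vx hvx, hgval y vy hvy] at hxy
      subst hxy
      exact hinj x y vx hvx hvy
    · exfalso
      have h1 : g x ∈ J := hmemJ x hx
      have h2 : g y ∈ Jᶜ := by
        have : g y = ↑(e2 ⟨y, hmem y hy⟩) := by simp only [g, dif_neg hy]
        rw [this]
        exact (e2 ⟨y, hmem y hy⟩).2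
      rw [hxy] at h1
      exact (Finset.mem_compl.mp h2) h1
    · exfalso
      have h1 : g y ∈ J := hmemJ y hy
      have h2 : g x ∈ Jᶜ := by
        have : g x = ↑(e2 ⟨x, hmem x hx⟩) := by simp only [g, dif_neg hx]
        rw [this]
        exact (e2 ⟨x, hmem x hx⟩).2
      rw [← hxy] at h1
      exact (Finset.mem_compl.mp h2) h1
    · have hxy' : (e2 ⟨x, hmem x hx⟩) = (e2 ⟨y, hmem y hy⟩) := by
        apply Subtype.ext
        simpa only [g, dif_neg hx, dif_neg hy] using hxy
      have := e2.injective hxy'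
      exact congrArg Subtype.val this
  let σ : Equiv.Perm (Fin n) := Equiv.ofBijective g (Finite.injective_iff_bijective.mp hginj)
  have happ : ∀ x, σ x = g x := fun x => rfl
  refine ⟨σ, ?_, ?_⟩
  · rw [happ]; exact hgval 0 0 h0
  · intro x v hxv; rw [happ]; exact hgval x v hxv

end Star
namespace Star

variable {n : ℕ} [NeZero n]

lemma zval : ((0 : Fin n)).val = 0 := (val0_iff 0).mpr rfl

def lone (hn : 4 ≤ n) : Fin n := ⟨1, by omega⟩
def ltwo (hn : 4 ≤ n) : Fin n := ⟨2, by omega⟩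
def lthree (hn : 4 ≤ n) : Fin n := ⟨3, by omega⟩
def llast (hn : 4 ≤ n) : Fin n := ⟨n - 1, by omega⟩

variable {hn : 4 ≤ n}

lemma lone_ne_zero : lone hn ≠ 0 := by
  intro h; have := congrArg Fin.val h; rw [zval] at this; simp [lone] at this

lemma ltwo_ne_zero : ltwo hn ≠ 0 := by
  intro h; have := congrArg Fin.val h; rw [zval] at this; simp [ltwo] at this

lemma lthree_ne_zero : lthree hn ≠ 0 := by
  intro h; have := congrArg Fin.val h; rw [zval] at this; simp [lthree] at this

lemma llast_ne_zero : llast hn ≠ 0 := by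
  intro h; have := congrArg Fin.val h; rw [zval] at this; simp [llast] at this; omega

lemma lone_ne_ltwo : lone hn ≠ ltwo hn := by
  intro h; have := congrArg Fin.val h; simp [lone, ltwo] at this

lemma lone_ne_lthree : lone hn ≠ lthree hn := by
  intro h; have := congrArg Fin.val h; simp [lone, lthree] at this

lemma ltwo_ne_lthree : ltwo hn ≠ lthree hn := by
  intro h; have := congrArg Fin.val h; simp [ltwo, lthree] at this

lemma llast_ne_lone : llast hn ≠ lone hn := by
  intro h; have := congrArg Fin.val h; simp [llast, lone] at this; omega

def pid (p : Fin n → Prop) [DecidablePred p] : Fin n → Option (Fin n) :=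
  fun x => if p x then some x else none

def tmap (hn : 4 ≤ n) : Fin n → Option (Fin n) :=
  fun x => if x = llast hn then some (lone hn) else some x

def emap (hn : 4 ≤ n) : Fin n → Option (Fin n) := pid (· ≠ llast hn)

def dmap : Fin n → Option (Fin n) := fun x => if x = 0 then none else some x

def gam (hn : 4 ≤ n) : Fin n → Option (Fin n) :=
  fun x => if x = 0 then some (lone hn) else some 0

def gam' (hn : 4 ≤ n) : Fin n → Option (Fin n) :=
  fun x => if x = 0 then some (lone hn) else if x = lone hn then some 0 else none

def del (hn : 4 ≤ n) : Fin n → Option (Fin n) :=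
  fun x => if x = 0 then none else if x = lone hn then some 0 else some x

def wmap (hn : 4 ≤ n) : Fin n → Option (Fin n) :=
  fun x => if x = lone hn then some 0 else some x

def zmap : Fin n → Option (Fin n) := fun _ => some (0 : Fin n)

def cmap (v w : Fin n) : Fin n → Option (Fin n) := fun x => some (if x = v then w else x)

section Gen

variable {S : Set (Fin n → Option (Fin n))}
variable (hGP : ∀ σ : Equiv.Perm (Fin n), σ 0 = 0 → genFrom S (pe σ))

include hGP

lemma gen_collapse (ht : tmap hn ∈ S) :
    ∀ v w : Fin n, v ≠ 0 → w ≠ 0 → v ≠ w → genFrom S (cmap v w) := by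
  intro v w hv hw hvw
  obtain ⟨τ, hτ1, hτ2⟩ := exists_perm_two (⟨v, hv⟩ : {x : Fin n // x ≠ 0}) ⟨w, hw⟩
    ⟨llast hn, llast_ne_zero⟩ ⟨lone hn, lone_ne_zero⟩
    (fun h => hvw (congrArg Subtype.val h)) (fun h => llast_ne_lone (hn := hn) (congrArg Subtype.val h))
  set σ := liftp τ with hσdef
  have hσ0 : σ 0 = 0 := liftp_zero τ
  have hσv : σ v = llast hn := by rw [hσdef, liftp_ne _ _ hv, hτ1]
  have hσw : σ w = lone hn := by rw [hσdef, liftp_ne _ _ hw, hτ2]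
  have hinv0 : σ⁻¹ 0 = 0 := by rw [← hσ0]; exact Equiv.Perm.inv_apply_self σ 0
  have hcalc : cmap v w = pmul (pmul (pe σ) (tmap hn)) (pe σ⁻¹) := by
    funext x
    simp only [pmul, pe, Option.bind_some, cmap, tmap]
    by_cases hxv : x = v
    · subst hxv
      rw [hσv, if_pos rfl, if_pos rfl]
      simp only [Option.bind_some, pe]
      rw [← hσw, Equiv.Perm.inv_apply_self]
    · have hne : σ x ≠ llast hn := by
        rw [← hσv]; exact fun h => hxv (σ.injective h)
      rw [if_neg hne, if_neg hxv]
      simp only [Option.bind_some, pe, Equiv.Perm.inv_apply_self]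
  rw [hcalc]
  exact genFrom.mul _ _ (genFrom.mul _ _ (hGP σ hσ0) (genFrom.mem _ ht)) (hGP σ⁻¹ hinv0)

lemma gen_total (ht : tmap hn ∈ S) :
    ∀ f : Fin n → Fin n, f 0 = 0 → (∀ x, x ≠ 0 → f x ≠ 0) →
      genFrom S (fun x => some (f x)) := by
  classical
  suffices H : ∀ m, ∀ f : Fin n → Fin n,
      (Finset.univ.filter (fun y => y ∉ Finset.image f Finset.univ)).card = m →
      f 0 = 0 → (∀ x, x ≠ 0 → f x ≠ 0) → genFrom S (fun x => some (f x)) by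
    intro f h0 hl; exact H _ f rfl h0 hl
  intro m
  induction m using Nat.strong_induction_on with
  | _ m IH =>
    intro f hm h0 hl
    by_cases hinj : Function.Injective f
    · have hbij := Finite.injective_iff_bijective.mp hinj
      have : (fun x => some (f x)) = pe (Equiv.ofBijective f hbij) := rfl
      rw [this]
      exact hGP _ h0
    · obtain ⟨i, j, hfij, hij⟩ := Function.not_injective_iff.mp hinj
      have hi0 : i ≠ 0 := by
        rintro rfl; exact hl j (Ne.symm hij) (hfij.symm.trans h0)
      have hj0 : j ≠ 0 := by
        rintro rfl; exact hl i hij (hfij.trans h0)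
      have hvex : ∃ v, v ∈ Finset.univ.filter (fun y => y ∉ Finset.image f Finset.univ) := by
        by_contra hc
        push_neg at hc
        have hsurj : Function.Surjective f := by
          intro y
          have := hc y
          rw [Finset.mem_filter] at this
          push_neg at this
          have hy := this (Finset.mem_univ y)
          rw [Finset.mem_image] at hy
          obtain ⟨x, _, hx⟩ := hy
          exact ⟨x, hx⟩
        exact hinj (Finite.injective_iff_surjective.mpr hsurj)
      obtain ⟨v, hv⟩ := hvex
      rw [Finset.mem_filter] at hv
      have hvim : v ∉ Finset.image f Finset.univ := hv.2
      have hv0 : v ≠ 0 := by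
        rintro rfl; exact hvim (Finset.mem_image.mpr ⟨0, Finset.mem_univ _, h0⟩)
      have hvfi : v ≠ f i := by
        intro h; exact hvim (h ▸ Finset.mem_image.mpr ⟨i, Finset.mem_univ _, rfl⟩)
      set f' := Function.update f i v with hf'def
      have hf'0 : f' 0 = 0 := by rw [hf'def, Function.update_of_ne (Ne.symm hi0)]; exact h0
      have hf'l : ∀ x, x ≠ 0 → f' x ≠ 0 := by
        intro x hx
        by_cases hxi : x = i
        · subst hxi; rw [hf'def, Function.update_self]; exact hv0
        · rw [hf'def, Function.update_of_ne hxi]; exact hl x hx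
      have himage : Finset.image f' Finset.univ = insert v (Finset.image f Finset.univ) := by
        ext y
        simp only [Finset.mem_image, Finset.mem_insert]
        constructor
        · rintro ⟨x, _, hx⟩
          by_cases hxi : x = i
          · subst hxi; rw [hf'def, Function.update_self] at hx; exact Or.inl hx.symm
          · rw [hf'def, Function.update_of_ne hxi] at hx
            exact Or.inr ⟨x, Finset.mem_univ _, hx⟩
        · rintro (rfl | ⟨x, _, hx⟩)
          · exact ⟨i, Finset.mem_univ _, by rw [hf'def, Function.update_self]⟩
          · by_cases hxi : x = i
            · subst hxi
              exact ⟨j, Finset.mem_univ _, by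
                rw [hf'def, Function.update_of_ne (Ne.symm hij), ← hfij]; exact hx⟩
            · exact ⟨x, Finset.mem_univ _, by rw [hf'def, Function.update_of_ne hxi]; exact hx⟩
      have hssub : (Finset.univ.filter (fun y => y ∉ Finset.image f' Finset.univ)) ⊂
          (Finset.univ.filter (fun y => y ∉ Finset.image f Finset.univ)) := by
        constructor
        · intro y hy
          rw [Finset.mem_filter] at hy ⊢
          refine ⟨Finset.mem_univ _, ?_⟩
          intro hc
          exact hy.2 (by rw [himage]; exact Finset.mem_insert_of_mem hc)
        · intro hsub
          have hvmem : v ∈ Finset.univ.filter (fun y => y ∉ Finset.image f Finset.univ) := by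
            rw [Finset.mem_filter]; exact ⟨Finset.mem_univ _, hvim⟩
          have := hsub hvmem
          rw [Finset.mem_filter, himage] at this
          exact this.2 (Finset.mem_insert_self v _)
      have hlt : (Finset.univ.filter (fun y => y ∉ Finset.image f' Finset.univ)).card < m := by
        rw [← hm]; exact Finset.card_lt_card hssub
      have hrec := IH _ hlt f' rfl hf'0 hf'l
      have hcoll := gen_collapse hGP ht v (f i) hv0 (hl i hi0) hvfi
      have heq : (fun x => some (f x)) = pmul (fun x => some (f' x)) (cmap v (f i)) := by
        funext x
        simp only [pmul, Option.bind_some, cmap]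
        by_cases hxi : x = i
        · subst hxi
          rw [hf'def, Function.update_self, if_pos rfl]
        · rw [hf'def, Function.update_of_ne hxi]
          have : f x ≠ v := fun h =>
            hvim (h ▸ Finset.mem_image.mpr ⟨x, Finset.mem_univ _, rfl⟩)
          rw [if_neg this]
      rw [heq]
      exact genFrom.mul _ _ hrec hcoll

lemma gen_pid_one (he : emap hn ∈ S) :
    ∀ l : Fin n, l ≠ 0 → genFrom S (pid (· ≠ l)) := by
  intro l hl
  set τ := Equiv.swap (⟨l, hl⟩ : {x : Fin n // x ≠ 0}) ⟨llast hn, llast_ne_zero⟩ with hτdef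
  set σ := liftp τ with hσdef
  have hσ0 : σ 0 = 0 := liftp_zero τ
  have hσl : σ l = llast hn := by
    rw [hσdef, liftp_ne _ _ hl, hτdef]
    rw [Equiv.swap_apply_left]
  have hinv0 : σ⁻¹ 0 = 0 := by rw [← hσ0]; exact Equiv.Perm.inv_apply_self σ 0
  have hcalc : pid (· ≠ l) = pmul (pmul (pe σ) (emap hn)) (pe σ⁻¹) := by
    funext x
    simp only [pmul, pe, Option.bind_some, pid, emap]
    by_cases hxl : x = l
    · subst hxl
      rw [hσl]
      simp
    · have hne : σ x ≠ llast hn := by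
        rw [← hσl]; exact fun h => hxl (σ.injective h)
      rw [if_pos hne, if_pos hxl]
      simp only [Option.bind_some, pe, Equiv.Perm.inv_apply_self]
  rw [hcalc]
  exact genFrom.mul _ _ (genFrom.mul _ _ (hGP σ hσ0) (genFrom.mem _ he)) (hGP σ⁻¹ hinv0)

lemma gen_pid (he : emap hn ∈ S) :
    ∀ K : Finset (Fin n), (0 : Fin n) ∉ K → genFrom S (pid (· ∉ K)) := by
  classical
  intro K
  induction K using Finset.induction_on with
  | empty =>
      intro _
      have : pid (n := n) (· ∉ (∅ : Finset (Fin n))) = (fun x => some x) := by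
        funext x; simp [pid]
      rw [this]; exact genFrom.one
  | @insert a K hne ih =>
      intro h0
      have ha0 : a ≠ 0 := fun h => h0 (h ▸ Finset.mem_insert_self a K)
      have h0K : (0 : Fin n) ∉ K := fun h => h0 (Finset.mem_insert_of_mem h)
      have heq : pid (n := n) (· ∉ insert a K) = pmul (pid (· ∉ K)) (pid (· ≠ a)) := by
        funext x
        by_cases hK : x ∈ K <;> by_cases hxa : x = a
        · exact absurd (hxa ▸ hK) hne
        · simp [pmul, pid, Finset.mem_insert, hK, hxa]
        · subst hxa; simp [pmul, pid, Finset.mem_insert, hK, hne]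
        · simp [pmul, pid, Finset.mem_insert, hK, hxa]
      rw [heq]
      exact genFrom.mul _ _ (ih h0K) (gen_pid_one hGP he a ha0)

lemma gen_pid0 (he : emap hn ∈ S) (hd : dmap ∈ S) :
    ∀ K : Finset (Fin n), (0 : Fin n) ∉ K →
      genFrom S (fun x => if x = 0 ∨ x ∈ K then none else some x) := by
  classical
  intro K h0
  have heq : (fun x : Fin n => if x = 0 ∨ x ∈ K then none else some x) =
      pmul (pid (· ∉ K)) dmap := by
    funext x
    by_cases hK : x ∈ K <;> by_cases hx0 : x = 0
    · exact absurd (hx0 ▸ hK) h0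
    · simp [pmul, pid, dmap, hK, hx0]
    · subst hx0; simp [pmul, pid, dmap, hK]
    · simp [pmul, pid, dmap, hK, hx0]
  rw [heq]
  exact genFrom.mul _ _ (gen_pid hGP he K h0) (genFrom.mem _ hd)

lemma gen_classI (ht : tmap hn ∈ S) (he : emap hn ∈ S) :
    ∀ α : Fin n → Option (Fin n), α 0 = some 0 →
      (∀ x v, x ≠ 0 → α x = some v → v ≠ 0) → genFrom S α := by
  classical
  intro α h0 hlv
  set K := Finset.univ.filter (fun x => α x = none) with hK
  have h0K : (0 : Fin n) ∉ K := by rw [hK]; simp [h0]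
  set f : Fin n → Fin n := fun x => (α x).getD (lone hn) with hf
  have hf0 : f 0 = 0 := by rw [hf]; simp [h0]
  have hfl : ∀ x, x ≠ 0 → f x ≠ 0 := by
    intro x hx
    rw [hf]
    cases hax : α x with
    | none => simpa [hax] using lone_ne_zero (hn := hn)
    | some v => simpa [hax] using hlv x v hx hax
  have heq : α = pmul (pid (· ∉ K)) (fun x => some (f x)) := by
    funext x
    cases hax : α x with
    | none =>
        have hxK : x ∈ K := by rw [hK]; simp [hax]
        simp [pmul, pid, hxK, hax]
    | some v =>
        have hxK : x ∉ K := by rw [hK]; simp [hax]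
        simp [pmul, pid, hxK, hf, hax]
  rw [heq]
  exact genFrom.mul _ _ (gen_pid hGP he K h0K) (gen_total hGP ht f hf0 hfl)

lemma gen_pinj (he : emap hn ∈ S) :
    ∀ α : Fin n → Option (Fin n), PInj α → α 0 = some 0 → genFrom S α := by
  classical
  intro α hinj h0
  obtain ⟨σ, hσ0, hσ⟩ := ext_perm hinj h0
  set K := Finset.univ.filter (fun x => α x = none) with hK
  have h0K : (0 : Fin n) ∉ K := by rw [hK]; simp [h0]
  have heq : α = pmul (pid (· ∉ K)) (pe σ) := by
    funext x
    cases hax : α x with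
    | none =>
        have hxK : x ∈ K := by rw [hK]; simp [hax]
        simp [pmul, pid, hxK, hax]
    | some v =>
        have hxK : x ∉ K := by rw [hK]; simp [hax]
        simp [pmul, pid, hxK, pe, hσ x v hax, hax]
  rw [heq]
  exact genFrom.mul _ _ (gen_pid hGP he K h0K) (hGP σ hσ0)

end Gen

end Star
namespace Star

variable {n : ℕ} [NeZero n]

lemma edge_iff (u v : Fin n) : edge u v ↔ (u = 0 ∧ v ≠ 0) ∨ (v = 0 ∧ u ≠ 0) := by
  unfold edge
  simp only [ne_eq, val0_iff]

lemma not_edge_self (u : Fin n) : ¬ edge u u := by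
  rw [edge_iff]; rintro (⟨h1, h2⟩ | ⟨h1, h2⟩) <;> exact h2 h1

lemma edge_zero_iff (v : Fin n) : edge 0 v ↔ v ≠ 0 := by
  rw [edge_iff]; constructor
  · rintro (⟨_, h⟩ | ⟨h1, h2⟩); exact h; exact absurd rfl h2
  · intro h; exact Or.inl ⟨rfl, h⟩

lemma not_edge_of_ne_zero {u v : Fin n} (hu : u ≠ 0) (hv : v ≠ 0) : ¬ edge u v := by
  rw [edge_iff]; rintro (⟨h, _⟩ | ⟨h, _⟩); exacts [hu h, hv h]

-- implications
lemma IsPsEnd.toPEnd {α : Fin n → Option (Fin n)} (h : IsPsEnd α) : IsPEnd α :=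
  fun u v a b hu hv he => (h u v a b hu hv).mp he

lemma IsPEnd.toPwEnd {α : Fin n → Option (Fin n)} (h : IsPEnd α) : IsPwEnd α :=
  fun u v a b hu hv he _ => h u v a b hu hv he

lemma edge_ne {a b : Fin n} (h : edge a b) : a ≠ b := by
  rw [edge_iff] at h
  rcases h with ⟨h1, h2⟩ | ⟨h1, h2⟩
  · exact fun hc => h2 (hc ▸ h1)
  · exact fun hc => h2 (hc ▸ h1.symm ▸ rfl)

lemma IsPsEnd.toPswEnd {α : Fin n → Option (Fin n)} (h : IsPsEnd α) : IsPswEnd α := by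
  intro u v a b hu hv
  constructor
  · rintro ⟨he, _⟩; exact (h u v a b hu hv).mp he
  · intro he; exact ⟨(h u v a b hu hv).mpr he, edge_ne he⟩

lemma IsPswEnd.toPwEnd {α : Fin n → Option (Fin n)} (h : IsPswEnd α) : IsPwEnd α :=
  fun u v a b hu hv he hne => (h u v a b hu hv).mp ⟨he, hne⟩

-- closure under pmul
lemma pmul_eq_some {α β : Fin n → Option (Fin n)} {u : Fin n} {a : Fin n}
    (h : pmul α β u = some a) : ∃ m, α u = some m ∧ β m = some a := by
  simp only [pmul] at h
  cases hu : α u with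
  | none => rw [hu] at h; simp at h
  | some m => rw [hu] at h; simp at h; exact ⟨m, rfl, h⟩

lemma IsPEnd.pmul {α β : Fin n → Option (Fin n)} (hα : IsPEnd α) (hβ : IsPEnd β) :
    IsPEnd (pmul α β) := by
  intro u v a b hu hv he
  obtain ⟨m1, hm1, hm1'⟩ := pmul_eq_some hu
  obtain ⟨m2, hm2, hm2'⟩ := pmul_eq_some hv
  exact hβ m1 m2 a b hm1' hm2' (hα u v m1 m2 hm1 hm2 he)

lemma IsPwEnd.pmul {α β : Fin n → Option (Fin n)} (hα : IsPwEnd α) (hβ : IsPwEnd β) :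
    IsPwEnd (pmul α β) := by
  intro u v a b hu hv he hne
  obtain ⟨m1, hm1, hm1'⟩ := pmul_eq_some hu
  obtain ⟨m2, hm2, hm2'⟩ := pmul_eq_some hv
  have hm : m1 ≠ m2 := by
    intro hc; subst hc; rw [hm1'] at hm2'; exact hne (Option.some_injective _ hm2')
  exact hβ m1 m2 a b hm1' hm2' (hα u v m1 m2 hm1 hm2 he hm) hne

lemma IsPsEnd.pmul {α β : Fin n → Option (Fin n)} (hα : IsPsEnd α) (hβ : IsPsEnd β) :
    IsPsEnd (pmul α β) := by
  intro u v a b hu hv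
  obtain ⟨m1, hm1, hm1'⟩ := pmul_eq_some hu
  obtain ⟨m2, hm2, hm2'⟩ := pmul_eq_some hv
  exact (hα u v m1 m2 hm1 hm2).trans (hβ m1 m2 a b hm1' hm2')

lemma IsPswEnd.pmul {α β : Fin n → Option (Fin n)} (hα : IsPswEnd α) (hβ : IsPswEnd β) :
    IsPswEnd (pmul α β) := by
  intro u v a b hu hv
  obtain ⟨m1, hm1, hm1'⟩ := pmul_eq_some hu
  obtain ⟨m2, hm2, hm2'⟩ := pmul_eq_some hv
  constructor
  · rintro ⟨he, hne⟩
    have hm : m1 ≠ m2 := by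
      intro hc; subst hc; rw [hm1'] at hm2'; exact hne (Option.some_injective _ hm2')
    exact (hβ m1 m2 a b hm1' hm2').mp ⟨(hα u v m1 m2 hm1 hm2).mp ⟨he, hm⟩, hne⟩
  · intro he
    have h2 := (hβ m1 m2 a b hm1' hm2').mpr he
    have h1 := (hα u v m1 m2 hm1 hm2).mpr h2.1
    exact ⟨h1.1, h2.2⟩

lemma PInj.pmul {α β : Fin n → Option (Fin n)} (hα : PInj α) (hβ : PInj β) :
    PInj (pmul α β) := by
  intro u v a hu hv
  obtain ⟨m1, hm1, hm1'⟩ := pmul_eq_some hu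
  obtain ⟨m2, hm2, hm2'⟩ := pmul_eq_some hv
  have := hβ m1 m2 a hm1' hm2'
  subst this
  exact hα u v m1 hm1 hm2

-- identity
lemma isPsEnd_id : IsPsEnd (fun x : Fin n => some x) := by
  intro u v a b hu hv
  simp only [Option.some_inj] at hu hv
  subst hu; subst hv; rfl

lemma pinj_id : PInj (fun x : Fin n => some x) := by
  intro u v a hu hv
  simp only [Option.some_inj] at hu hv
  subst hu; exact hv.symm

-- structure lemmas
lemma hf2_pw {α : Fin n → Option (Fin n)} (hα : IsPwEnd α) {u : Fin n}
    (h0 : α 0 = some u) (hu : u ≠ 0) : ∀ x v, α x = some v → v = 0 ∨ v = u := by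
  intro x v hxv
  by_cases hx : x = 0
  · subst hx; rw [h0] at hxv; exact Or.inr (Option.some_injective _ hxv).symm
  · by_contra hc
    push_neg at hc
    have he := hα 0 x u v h0 hxv ((edge_zero_iff x).mpr hx) (fun h => hc.2 h.symm)
    rw [edge_iff] at he
    rcases he with ⟨h1, _⟩ | ⟨h1, _⟩
    · exact hu h1
    · exact hc.1 h1

lemma hf2_psw {α : Fin n → Option (Fin n)} (hα : IsPswEnd α) {u : Fin n}
    (h0 : α 0 = some u) (hu : u ≠ 0) : ∀ x v, α x = some v → v = 0 ∨ v = u := by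
  intro x v hxv
  by_cases hx : x = 0
  · subst hx; rw [h0] at hxv; exact Or.inr (Option.some_injective _ hxv).symm
  · by_contra hc
    push_neg at hc
    have he := (hα 0 x u v h0 hxv).mp ⟨(edge_zero_iff x).mpr hx, fun h => hc.2 h.symm⟩
    rw [edge_iff] at he
    rcases he with ⟨h1, _⟩ | ⟨h1, _⟩
    · exact hu h1
    · exact hc.1 h1

lemma hf3_p {α : Fin n → Option (Fin n)} (hα : IsPEnd α)
    (h0 : α 0 = some 0) : ∀ x v, x ≠ 0 → α x = some v → v ≠ 0 := by
  intro x v hx hxv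
  have he := hα 0 x 0 v h0 hxv ((edge_zero_iff x).mpr hx)
  rw [edge_zero_iff] at he
  exact he

lemma p_0c {α : Fin n → Option (Fin n)} (hα : IsPEnd α) {c : Fin n}
    (h0 : α 0 = some c) (hc : c ≠ 0) : ∀ x v, x ≠ 0 → α x = some v → v = 0 := by
  intro x v hx hxv
  have he := hα 0 x c v h0 hxv ((edge_zero_iff x).mpr hx)
  rw [edge_iff] at he
  rcases he with ⟨h1, _⟩ | ⟨h1, _⟩
  · exact absurd h1 hc
  · exact h1

lemma ps_pair {α : Fin n → Option (Fin n)} (hα : IsPsEnd α) {x y v w : Fin n}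
    (hx : x ≠ 0) (hy : y ≠ 0) (hxv : α x = some v) (hyw : α y = some w) :
    v = 0 ↔ w = 0 := by
  have hne : ¬ edge v w := fun h => not_edge_of_ne_zero hx hy ((hα x y v w hxv hyw).mpr h)
  rw [edge_iff] at hne
  push_neg at hne
  exact ⟨hne.1, hne.2⟩

lemma psw_pair {α : Fin n → Option (Fin n)} (hα : IsPswEnd α) {x y v w : Fin n}
    (hx : x ≠ 0) (hy : y ≠ 0) (hxv : α x = some v) (hyw : α y = some w) :
    v = 0 ↔ w = 0 := by
  have hne : ¬ edge v w := fun h =>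
    not_edge_of_ne_zero hx hy ((hα x y v w hxv hyw).mpr h).1
  rw [edge_iff] at hne
  push_neg at hne
  exact ⟨hne.1, hne.2⟩

-- membership builders
lemma mk_ps_pres {α : Fin n → Option (Fin n)}
    (h : ∀ x v, α x = some v → (x = 0 ↔ v = 0)) : IsPsEnd α := by
  intro u v a b hu hv
  rw [edge_iff, edge_iff]
  have h1 := h u a hu
  have h2 := h v b hv
  constructor
  · rintro (⟨e1, e2⟩ | ⟨e1, e2⟩)
    · exact Or.inl ⟨h1.mp e1, fun hb => e2 (h2.mpr hb)⟩
    · exact Or.inr ⟨h2.mp e1, fun ha => e2 (h1.mpr ha)⟩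
  · rintro (⟨e1, e2⟩ | ⟨e1, e2⟩)
    · exact Or.inl ⟨h1.mpr e1, fun hv0 => e2 (h2.mp hv0)⟩
    · exact Or.inr ⟨h2.mpr e1, fun hu0 => e2 (h1.mp hu0)⟩

lemma mk_ps_swap {α : Fin n → Option (Fin n)} {c : Fin n} (h0 : α 0 = some c) (hc : c ≠ 0)
    (hl : ∀ x v, x ≠ 0 → α x = some v → v = 0) : IsPsEnd α := by
  intro u v a b hu hv
  rw [edge_iff, edge_iff]
  by_cases hu0 : u = 0 <;> by_cases hv0 : v = 0
  · subst hu0; subst hv0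
    rw [h0] at hu hv
    have : a = c := (Option.some_injective _ hu).symm
    have hb : b = c := (Option.some_injective _ hv).symm
    subst this; subst hb
    constructor
    · rintro (⟨h1, h2⟩ | ⟨h1, h2⟩) <;> exact absurd h1 h2
    · rintro (⟨h1, h2⟩ | ⟨h1, h2⟩) <;> exact absurd h1 h2
  · subst hu0
    rw [h0] at hu
    have ha : a = c := (Option.some_injective _ hu).symm
    have hb : b = 0 := hl v b hv0 hv
    subst ha; subst hb
    constructor
    · intro _; exact Or.inr ⟨rfl, hc⟩
    · intro _; exact Or.inl ⟨rfl, hv0⟩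
  · subst hv0
    rw [h0] at hv
    have hb : b = c := (Option.some_injective _ hv).symm
    have ha : a = 0 := hl u a hu0 hu
    subst ha; subst hb
    constructor
    · intro _; exact Or.inl ⟨rfl, hc⟩
    · intro _; exact Or.inr ⟨rfl, hu0⟩
  · have ha : a = 0 := hl u a hu0 hu
    have hb : b = 0 := hl v b hv0 hv
    subst ha; subst hb
    constructor
    · rintro (⟨h1, _⟩ | ⟨h1, _⟩) <;> [exact absurd h1 hu0; exact absurd h1 hv0]
    · rintro (⟨_, h2⟩ | ⟨_, h2⟩) <;> exact absurd rfl h2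

lemma mk_p_nodom0 {α : Fin n → Option (Fin n)} (h0 : α 0 = none) : IsPEnd α := by
  intro u v a b hu hv he
  rw [edge_iff] at he
  rcases he with ⟨h1, _⟩ | ⟨h1, _⟩
  · subst h1; rw [h0] at hu; exact absurd hu (by simp)
  · subst h1; rw [h0] at hv; exact absurd hv (by simp)

end Star
namespace Star

variable {n : ℕ} [NeZero n]

-- the classes
def Ce (n : ℕ) [NeZero n] : Set (Fin n → Option (Fin n)) :=
  {a | a 0 = some 0 ∧ PInj a ∧ ∃! x, a x = none}

def Cd (n : ℕ) [NeZero n] : Set (Fin n → Option (Fin n)) :=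
  {a | a 0 = none ∧ PInj a ∧ (∀ x, x ≠ 0 → a x ≠ none) ∧ (∀ x v, a x = some v → v ≠ 0)}

def Cz (n : ℕ) [NeZero n] : Set (Fin n → Option (Fin n)) :=
  {a | a 0 = none ∧ PInj a ∧ (∀ x, x ≠ 0 → a x ≠ none) ∧ ∃ x, a x = some 0}

def offp {n : ℕ} (i : Fin n) (a : Fin n → Option (Fin n)) : Fin n → Option (Fin n) :=
  fun x => if x = i then none else a x

def Ct (n : ℕ) [NeZero n] : Set (Fin n → Option (Fin n)) :=
  {a | Tot a ∧ a 0 = some 0 ∧ ¬ PInj a ∧ ∃ i, i ≠ 0 ∧ PInj (offp i a)}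

def Cw (n : ℕ) [NeZero n] : Set (Fin n → Option (Fin n)) :=
  {a | Tot a ∧ a 0 = some 0 ∧ ∃ i, i ≠ 0 ∧ a i = some 0 ∧ PInj (offp i a)}

def Cswap0 (n : ℕ) [NeZero n] : Set (Fin n → Option (Fin n)) :=
  {a | ∃ u, a 0 = some u ∧ u ≠ 0}

def Cswap (n : ℕ) [NeZero n] : Set (Fin n → Option (Fin n)) :=
  {a | (∃ u, a 0 = some u ∧ u ≠ 0) ∨ (∃ x, x ≠ 0 ∧ a x = some 0)}

def Cgam (n : ℕ) [NeZero n] : Set (Fin n → Option (Fin n)) :=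
  {a | (∃ u, a 0 = some u ∧ u ≠ 0) ∧ (∃ x, x ≠ 0 ∧ a x = some 0)}

def Cseven (n : ℕ) [NeZero n] : Set (Fin n → Option (Fin n)) :=
  {a | ∃ w, a 0 = some w ∧ ∃ i, i ≠ 0 ∧ a i = some w}

def Ctp (n : ℕ) [NeZero n] : Set (Fin n → Option (Fin n)) :=
  Ct n ∩ {a | ∀ x, x ≠ 0 → a x ≠ some 0}

-- pigeonhole helpers
lemma not_three_in_two {A B x y z : Option (Fin n)}
    (hx : x = A ∨ x = B) (hy : y = A ∨ y = B) (hz : z = A ∨ z = B)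
    (hxy : x ≠ y) (hxz : x ≠ z) (hyz : y ≠ z) : False := by
  rcases hx with h1 | h1 <;> rcases hy with h2 | h2 <;> rcases hz with h3 | h3 <;>
    first
      | exact hxy (h1.trans h2.symm)
      | exact hxz (h1.trans h3.symm)
      | exact hyz (h2.trans h3.symm)

lemma pick3 (hn : 4 ≤ n) (bad : Fin n) :
    ∃ p q r : Fin n, p ≠ bad ∧ q ≠ bad ∧ r ≠ bad ∧ p ≠ q ∧ p ≠ r ∧ q ≠ r := by
  by_cases h0 : bad = 0
  · exact ⟨lone hn, ltwo hn, lthree hn,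
      fun h => lone_ne_zero (h.trans h0), fun h => ltwo_ne_zero (h.trans h0),
      fun h => lthree_ne_zero (h.trans h0),
      lone_ne_ltwo, lone_ne_lthree, ltwo_ne_lthree⟩
  by_cases h1 : bad = lone hn
  · exact ⟨0, ltwo hn, lthree hn,
      fun h => h0 (h.symm), fun h => lone_ne_ltwo (h1 ▸ h).symm,
      fun h => lone_ne_lthree (h1 ▸ h).symm,
      fun h => ltwo_ne_zero h.symm, fun h => lthree_ne_zero h.symm, ltwo_ne_lthree⟩
  by_cases h2 : bad = ltwo hn
  · exact ⟨0, lone hn, lthree hn,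
      fun h => h0 (h.symm), fun h => h1 h.symm,
      fun h => ltwo_ne_lthree (h2 ▸ h).symm,
      fun h => lone_ne_zero h.symm, fun h => lthree_ne_zero h.symm, lone_ne_lthree⟩
  · exact ⟨0, lone hn, ltwo hn,
      fun h => h0 (h.symm), fun h => h1 h.symm, fun h => h2 h.symm,
      fun h => lone_ne_zero h.symm, fun h => ltwo_ne_zero h.symm, lone_ne_ltwo⟩

lemma b0_ne_zero_contra {b c : Fin n → Option (Fin n)} {u : Fin n}
    (hb : ∀ x v, b x = some v → v = 0 ∨ v = u)
    {p q r : Fin n}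
    {vp vq vr : Fin n}
    (hp : pmul b c p = some vp) (hq : pmul b c q = some vq) (hr : pmul b c r = some vr)
    (dpq : vp ≠ vq) (dpr : vp ≠ vr) (dqr : vq ≠ vr) : False := by
  have key : ∀ x v, pmul b c x = some v → some v = c 0 ∨ some v = c u := by
    intro x v hx
    obtain ⟨m, hm, hm'⟩ := pmul_eq_some hx
    rcases hb x m hm with h | h
    · subst h; exact Or.inl hm'.symm
    · subst h; exact Or.inr hm'.symm
  exact not_three_in_two (key p vp hp) (key q vq hq) (key r vr hr)
    (fun h => dpq (Option.some_injective _ h))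
    (fun h => dpr (Option.some_injective _ h))
    (fun h => dqr (Option.some_injective _ h))

end Star
namespace Star

section Closures

variable {n : ℕ} [NeZero n] (hn : 4 ≤ n)
variable {M : Set (Fin n → Option (Fin n))}
variable (hHF2 : ∀ a ∈ M, ∀ u : Fin n, a 0 = some u → u ≠ 0 →
  ∀ x v, a x = some v → v = 0 ∨ v = u)

include hn hHF2 in
lemma Ce_closed : ∀ a b c, a ∈ Ce n → b ∈ M → c ∈ M → a = pmul b c →
    b ∈ Ce n ∨ c ∈ Ce n := by
  intro a b c haC hbM hcM heq
  obtain ⟨ha0, hainj, xbar, hxbar, huniq⟩ := haC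
  subst heq
  have hdef : ∀ x, x ≠ xbar → ∃ v, pmul b c x = some v := by
    intro x hx
    cases hax : pmul b c x with
    | none => exact absurd (huniq x hax) hx
    | some v => exact ⟨v, rfl⟩
  have hb0 : b 0 = some 0 := by
    cases hb0' : b 0 with
    | none =>
        rw [show pmul b c 0 = none by simp [pmul, hb0']] at ha0
        exact absurd ha0 (by simp)
    | some u =>
        by_cases hu : u = 0
        · subst hu; exact rfl
        · exfalso
          obtain ⟨p, q, r, hpb, hqb, hrb, hpq, hpr, hqr⟩ := pick3 hn xbar
          obtain ⟨vp, hvp⟩ := hdef p hpb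
          obtain ⟨vq, hvq⟩ := hdef q hqb
          obtain ⟨vr, hvr⟩ := hdef r hrb
          exact b0_ne_zero_contra (hHF2 b hbM u hb0' hu) hvp hvq hvr
            (fun h => hpq (hainj p q vp hvp (by rw [h]; exact hvq)))
            (fun h => hpr (hainj p r vp hvp (by rw [h]; exact hvr)))
            (fun h => hqr (hainj q r vq hvq (by rw [h]; exact hvr)))
  have hbinj : PInj b := by
    intro x y v hbx hby
    have hxy : pmul b c y = pmul b c x := by simp [pmul, hbx, hby]
    cases haxv : pmul b c x with
    | none =>
        have h1 := huniq x haxv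
        have h2 := huniq y (hxy.trans haxv)
        exact h1.trans h2.symm
    | some w =>
        exact hainj x y w haxv (hxy.trans haxv)
  cases hbx : b xbar with
  | none =>
      left
      refine ⟨hb0, hbinj, xbar, hbx, ?_⟩
      intro y hy
      exact huniq y (by simp [pmul, hy])
  | some v =>
      right
      have hbtot : Tot b := by
        intro y hy
        have h1 := huniq y (by simp [pmul, hy])
        subst h1
        rw [hbx] at hy
        exact absurd hy (by simp)
      have hbsurj := tot_surj hbtot hbinj
      have hc0 : c 0 = some 0 := by
        have h1 := ha0
        simp only [pmul, hb0, Option.bind_some] at h1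
        exact h1
      refine ⟨hc0, ?_, v, ?_, ?_⟩
      · intro y y' w hcy hcy'
        obtain ⟨x, hx⟩ := hbsurj y
        obtain ⟨x', hx'⟩ := hbsurj y'
        have h3 := hainj x x' w (by simp [pmul, hx, hcy]) (by simp [pmul, hx', hcy'])
        subst h3
        rw [hx] at hx'
        exact Option.some_injective _ hx'
      · have h1 := hxbar
        simp only [pmul, hbx, Option.bind_some] at h1
        exact h1
      · intro z hz
        obtain ⟨x, hx⟩ := hbsurj z
        have h1 := huniq x (by simp [pmul, hx, hz])
        subst h1
        rw [hbx] at hx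
        exact (Option.some_injective _ hx).symm

include hn hHF2 in
lemma Cd_closed : ∀ a b c, a ∈ Cd n → b ∈ M → c ∈ M → a = pmul b c →
    b ∈ Cd n ∨ c ∈ Cd n := by
  intro a b c haC hbM hcM heq
  obtain ⟨ha0, hainj, hadom, haim⟩ := haC
  subst heq
  have hdef : ∀ x : Fin n, x ≠ 0 → ∃ v, pmul b c x = some v ∧ v ≠ 0 := by
    intro x hx
    cases hax : pmul b c x with
    | none => exact absurd hax (hadom x hx)
    | some v => exact ⟨v, rfl, haim x v hax⟩
  obtain ⟨vp, hvp, hvp0⟩ := hdef (lone hn) lone_ne_zero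
  obtain ⟨vq, hvq, hvq0⟩ := hdef (ltwo hn) ltwo_ne_zero
  obtain ⟨vr, hvr, hvr0⟩ := hdef (lthree hn) lthree_ne_zero
  have dpq : vp ≠ vq := fun h =>
    lone_ne_ltwo (hn := hn) (hainj _ _ vp hvp (by rw [h]; exact hvq))
  have dpr : vp ≠ vr := fun h =>
    lone_ne_lthree (hn := hn) (hainj _ _ vp hvp (by rw [h]; exact hvr))
  have dqr : vq ≠ vr := fun h =>
    ltwo_ne_lthree (hn := hn) (hainj _ _ vq hvq (by rw [h]; exact hvr))
  have hbdef : ∀ x : Fin n, x ≠ 0 → b x ≠ none := by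
    intro x hx hbx
    exact hadom x hx (by simp [pmul, hbx])
  cases hb0 : b 0 with
  | some u =>
      by_cases hu : u = 0
      · subst hu
        right
        have hc0 : c 0 = none := by
          have h1 := ha0
          simp only [pmul, hb0, Option.bind_some] at h1
          exact h1
        have hbinj : PInj b := by
          intro x y v hbx hby
          by_cases hx0 : x = 0 <;> by_cases hy0 : y = 0
          · exact hx0.trans hy0.symm
          · exfalso
            subst hx0
            rw [hb0] at hbx
            have hv : v = 0 := (Option.some_injective _ hbx).symm
            subst hv
            exact hadom y hy0 (by simp [pmul, hby, hc0])
          · exfalso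
            subst hy0
            rw [hb0] at hby
            have hv : v = 0 := (Option.some_injective _ hby).symm
            subst hv
            exact hadom x hx0 (by simp [pmul, hbx, hc0])
          · cases hcv : c v with
            | none =>
                exact absurd (show pmul b c x = none by simp [pmul, hbx, hcv])
                  (hadom x hx0)
            | some w =>
                exact hainj x y w (by simp [pmul, hbx, hcv]) (by simp [pmul, hby, hcv])
        have hbtot : Tot b := by
          intro y hy
          by_cases hy0 : y = 0
          · subst hy0; rw [hb0] at hy; exact absurd hy (by simp)
          · exact hbdef y hy0 hy
        have hbsurj := tot_surj hbtot hbinj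
        refine ⟨hc0, ?_, ?_, ?_⟩
        · intro y y' w hcy hcy'
          obtain ⟨x, hx⟩ := hbsurj y
          obtain ⟨x', hx'⟩ := hbsurj y'
          have h3 := hainj x x' w (by simp [pmul, hx, hcy]) (by simp [pmul, hx', hcy'])
          subst h3
          rw [hx] at hx'
          exact Option.some_injective _ hx'
        · intro z hz hcz
          obtain ⟨x, hx⟩ := hbsurj z
          have hx0 : x ≠ 0 := by
            rintro rfl
            rw [hb0] at hx
            exact hz (Option.some_injective _ hx).symm
          exact hadom x hx0 (by simp [pmul, hx, hcz])
        · intro z v hcz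
          obtain ⟨x, hx⟩ := hbsurj z
          exact haim x v (by simp [pmul, hx, hcz])
      · exact (b0_ne_zero_contra (hHF2 b hbM u hb0 hu) hvp hvq hvr dpq dpr dqr).elim
  | none =>
      left
      have hbinj : PInj b := by
        intro x y v hbx hby
        have hx0 : x ≠ 0 := by rintro rfl; rw [hb0] at hbx; simp at hbx
        have hy0 : y ≠ 0 := by rintro rfl; rw [hb0] at hby; simp at hby
        cases hcv : c v with
        | none =>
            exact absurd (show pmul b c x = none by simp [pmul, hbx, hcv]) (hadom x hx0)
        | some w =>
            exact hainj x y w (by simp [pmul, hbx, hcv]) (by simp [pmul, hby, hcv])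
      refine ⟨hb0, hbinj, hbdef, ?_⟩
      intro x v hbx hv0
      subst hv0
      have hx0 : x ≠ 0 := by rintro rfl; rw [hb0] at hbx; simp at hbx
      obtain ⟨w, hw, hw0⟩ := hdef x hx0
      have hc0 : c 0 = some w := by
        have h1 := hw
        simp only [pmul, hbx, Option.bind_some] at h1
        exact h1
      have hvals := hHF2 c hcM w hc0 hw0
      have h1 : vp = 0 ∨ vp = w := by
        obtain ⟨m, hm, hm'⟩ := pmul_eq_some hvp
        exact hvals m vp hm'
      have h2 : vq = 0 ∨ vq = w := by
        obtain ⟨m, hm, hm'⟩ := pmul_eq_some hvq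
        exact hvals m vq hm'
      rcases h1 with h1 | h1
      · exact hvp0 h1
      rcases h2 with h2 | h2
      · exact hvq0 h2
      exact dpq (h1.trans h2.symm)

lemma Cswap0_closed : ∀ a b c : Fin n → Option (Fin n), a ∈ Cswap0 n →
    a = pmul b c → b ∈ Cswap0 n ∨ c ∈ Cswap0 n := by
  intro a b c haC heq
  obtain ⟨u, ha0, hu⟩ := haC
  subst heq
  obtain ⟨m, hm, hm'⟩ := pmul_eq_some ha0
  by_cases hm0 : m = 0
  · subst hm0; exact Or.inr ⟨u, hm', hu⟩
  · exact Or.inl ⟨m, hm, hm0⟩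

lemma Cswap_closed : ∀ a b c : Fin n → Option (Fin n), a ∈ Cswap n →
    a = pmul b c → b ∈ Cswap n ∨ c ∈ Cswap n := by
  intro a b c haC heq
  subst heq
  rcases haC with ⟨u, ha0, hu⟩ | ⟨x, hx, hax⟩
  · obtain ⟨m, hm, hm'⟩ := pmul_eq_some ha0
    by_cases hm0 : m = 0
    · subst hm0; exact Or.inr (Or.inl ⟨u, hm', hu⟩)
    · exact Or.inl (Or.inl ⟨m, hm, hm0⟩)
  · obtain ⟨m, hm, hm'⟩ := pmul_eq_some hax
    by_cases hm0 : m = 0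
    · subst hm0; exact Or.inl (Or.inr ⟨x, hx, hm⟩)
    · exact Or.inr (Or.inr ⟨m, hm0, hm'⟩)

include hHF2 in
lemma Cgam_closed : ∀ a b c, a ∈ Cgam n → b ∈ M → c ∈ M → a = pmul b c →
    b ∈ Cgam n ∨ c ∈ Cgam n := by
  intro a b c haC hbM hcM heq
  obtain ⟨⟨cc, ha0, hcc⟩, ⟨x0, hx0, hax0⟩⟩ := haC
  subst heq
  obtain ⟨u, hbu, hcu⟩ := pmul_eq_some ha0
  obtain ⟨v, hbv, hcv⟩ := pmul_eq_some hax0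
  by_cases hu : u = 0
  · subst hu
    right
    have hv0 : v ≠ 0 := by
      rintro rfl
      rw [hcu] at hcv
      exact hcc (Option.some_injective _ hcv.symm).symm
    exact ⟨⟨cc, hcu, hcc⟩, ⟨v, hv0, hcv⟩⟩
  · rcases hHF2 b hbM u hbu hu x0 v hbv with hv | hv
    · subst hv
      left
      exact ⟨⟨u, hbu, hu⟩, ⟨x0, hx0, hbv⟩⟩
    · subst hv
      rw [hcu] at hcv
      exact absurd (Option.some_injective _ hcv) hcc

include hHF2 in
lemma Cseven_closed : ∀ a b c, a ∈ Cseven n → b ∈ M → c ∈ M → a = pmul b c →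
    b ∈ Cseven n ∨ c ∈ Cseven n := by
  intro a b c haC hbM hcM heq
  obtain ⟨w, ha0, i, hi, hai⟩ := haC
  subst heq
  obtain ⟨u, hbu, hcu⟩ := pmul_eq_some ha0
  obtain ⟨v, hbv, hcv⟩ := pmul_eq_some hai
  by_cases huv : u = v
  · subst huv
    left
    exact ⟨u, hbu, i, hi, hbv⟩
  · by_cases hu : u = 0
    · subst hu
      right
      refine ⟨w, hcu, v, ?_, hcv⟩
      exact fun h => huv (h.symm)
    · by_cases hv : v = 0
      · subst hv
        right
        exact ⟨w, hcv, u, hu, hcu⟩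
      · rcases hHF2 b hbM u hbu hu i v hbv with h | h
        · exact absurd h hv
        · exact absurd h.symm huv

end Closures

end Star
namespace Star

section Closures2

variable {n : ℕ} [NeZero n] (hn : 4 ≤ n)
variable {M : Set (Fin n → Option (Fin n))}
variable (hHF2 : ∀ a ∈ M, ∀ u : Fin n, a 0 = some u → u ≠ 0 →
  ∀ x v, a x = some v → v = 0 ∨ v = u)
variable (hHF3 : ∀ a ∈ M, a 0 = some 0 → ∀ x v, x ≠ 0 → a x = some v → v ≠ 0)

include hn hHF2 hHF3 in
lemma Cz_closed : ∀ a b c, a ∈ Cz n → b ∈ M → c ∈ M → a = pmul b c →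
    b ∈ Cz n ∨ c ∈ Cz n := by
  intro a b c haC hbM hcM heq
  obtain ⟨ha0, hainj, hadom, x0, hax0⟩ := haC
  subst heq
  have hx00 : x0 ≠ 0 := by rintro rfl; rw [ha0] at hax0; simp at hax0
  have hdef : ∀ x : Fin n, x ≠ 0 → ∃ v, pmul b c x = some v := by
    intro x hx
    cases hax : pmul b c x with
    | none => exact absurd hax (hadom x hx)
    | some v => exact ⟨v, rfl⟩
  obtain ⟨vp, hvp⟩ := hdef (lone hn) lone_ne_zero
  obtain ⟨vq, hvq⟩ := hdef (ltwo hn) ltwo_ne_zero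
  obtain ⟨vr, hvr⟩ := hdef (lthree hn) lthree_ne_zero
  have dpq : vp ≠ vq := fun h =>
    lone_ne_ltwo (hn := hn) (hainj _ _ vp hvp (by rw [h]; exact hvq))
  have dpr : vp ≠ vr := fun h =>
    lone_ne_lthree (hn := hn) (hainj _ _ vp hvp (by rw [h]; exact hvr))
  have dqr : vq ≠ vr := fun h =>
    ltwo_ne_lthree (hn := hn) (hainj _ _ vq hvq (by rw [h]; exact hvr))
  have hbdef : ∀ x : Fin n, x ≠ 0 → b x ≠ none := fun x hx hbx =>
    hadom x hx (by simp [pmul, hbx])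
  cases hb0 : b 0 with
  | some u =>
      by_cases hu : u = 0
      · subst hu
        right
        have hc0 : c 0 = none := by
          have h1 := ha0
          simp only [pmul, hb0, Option.bind_some] at h1
          exact h1
        have hbnz : ∀ x, x ≠ 0 → b x ≠ some 0 := by
          intro x hx hbx
          exact hadom x hx (by simp [pmul, hbx, hc0])
        have hbinj : PInj b := by
          intro x y v hbx hby
          by_cases hx0 : x = 0 <;> by_cases hy0 : y = 0
          · exact hx0.trans hy0.symm
          · exfalso
            subst hx0
            rw [hb0] at hbx
            have hv := (Option.some_injective _ hbx).symm
            subst hv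
            exact hbnz y hy0 hby
          · exfalso
            subst hy0
            rw [hb0] at hby
            have hv := (Option.some_injective _ hby).symm
            subst hv
            exact hbnz x hx0 hbx
          · cases hcv : c v with
            | none =>
                exact absurd (show pmul b c x = none by simp [pmul, hbx, hcv])
                  (hadom x hx0)
            | some w =>
                exact hainj x y w (by simp [pmul, hbx, hcv]) (by simp [pmul, hby, hcv])
        have hbtot : Tot b := by
          intro y hy
          by_cases hy0 : y = 0
          · subst hy0; rw [hb0] at hy; exact absurd hy (by simp)
          · exact hbdef y hy0 hy
        have hbsurj := tot_surj hbtot hbinj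
        obtain ⟨v0, hbv0⟩ : ∃ v0, b x0 = some v0 := by
          cases h : b x0 with
          | none => exact absurd h (hbdef x0 hx00)
          | some v => exact ⟨v, rfl⟩
        have hcv0 : c v0 = some 0 := by
          have h1 := hax0
          simp only [pmul, hbv0, Option.bind_some] at h1
          exact h1
        refine ⟨hc0, ?_, ?_, v0, hcv0⟩
        · intro y y' w hcy hcy'
          obtain ⟨x, hx⟩ := hbsurj y
          obtain ⟨x', hx'⟩ := hbsurj y'
          have h3 := hainj x x' w (by simp [pmul, hx, hcy]) (by simp [pmul, hx', hcy'])
          subst h3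
          rw [hx] at hx'
          exact Option.some_injective _ hx'
        · intro z hz hcz
          obtain ⟨x, hx⟩ := hbsurj z
          have hx0' : x ≠ 0 := by
            rintro rfl
            rw [hb0] at hx
            exact hz (Option.some_injective _ hx).symm
          exact hadom x hx0' (by simp [pmul, hx, hcz])
      · exact (b0_ne_zero_contra (hHF2 b hbM u hb0 hu) hvp hvq hvr dpq dpr dqr).elim
  | none =>
      have hbinj : PInj b := by
        intro x y v hbx hby
        have hx0 : x ≠ 0 := by rintro rfl; rw [hb0] at hbx; simp at hbx
        have hy0 : y ≠ 0 := by rintro rfl; rw [hb0] at hby; simp at hby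
        cases hcv : c v with
        | none =>
            exact absurd (show pmul b c x = none by simp [pmul, hbx, hcv]) (hadom x hx0)
        | some w =>
            exact hainj x y w (by simp [pmul, hbx, hcv]) (by simp [pmul, hby, hcv])
      by_cases hbz : ∃ x, b x = some 0
      · left
        exact ⟨hb0, hbinj, hbdef, hbz⟩
      · right
        push_neg at hbz
        obtain ⟨v0, hbv0⟩ : ∃ v0, b x0 = some v0 := by
          cases h : b x0 with
          | none => exact absurd h (hbdef x0 hx00)
          | some v => exact ⟨v, rfl⟩
        have hv00 : v0 ≠ 0 := fun h => hbz x0 (h ▸ hbv0)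
        have hcv0 : c v0 = some 0 := by
          have h1 := hax0
          simp only [pmul, hbv0, Option.bind_some] at h1
          exact h1
        have hc0 : c 0 = none := by
          cases hc0' : c 0 with
          | none => rfl
          | some w =>
              exfalso
              by_cases hw : w = 0
              · subst hw
                exact hHF3 c hcM hc0' v0 0 hv00 hcv0 rfl
              · have hvals := hHF2 c hcM w hc0' hw
                have h1 : vp = 0 ∨ vp = w := by
                  obtain ⟨m, hm, hm'⟩ := pmul_eq_some hvp
                  exact hvals m vp hm'
                have h2 : vq = 0 ∨ vq = w := by
                  obtain ⟨m, hm, hm'⟩ := pmul_eq_some hvq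
                  exact hvals m vq hm'
                have h3 : vr = 0 ∨ vr = w := by
                  obtain ⟨m, hm, hm'⟩ := pmul_eq_some hvr
                  exact hvals m vr hm'
                exact not_three_in_two (A := some 0) (B := some w)
                  (h1.imp (fun h => by rw [h]) (fun h => by rw [h]))
                  (h2.imp (fun h => by rw [h]) (fun h => by rw [h]))
                  (h3.imp (fun h => by rw [h]) (fun h => by rw [h]))
                  (fun h => dpq (Option.some_injective _ h))
                  (fun h => dpr (Option.some_injective _ h))
                  (fun h => dqr (Option.some_injective _ h))
        have hbsurjL : ∀ z : Fin n, z ≠ 0 → ∃ x, b x = some z := by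
          set g : Fin n → Fin n := fun x => (b x).getD 0 with hg
          have hbsome : ∀ x : Fin n, x ≠ 0 → ∃ v, b x = some v ∧ v ≠ 0 := by
            intro x hx
            cases h : b x with
            | none => exact absurd h (hbdef x hx)
            | some v => exact ⟨v, rfl, fun hv => hbz x (hv ▸ h)⟩
          have hginj : Function.Injective g := by
            intro x y hxy
            by_cases hx0 : x = 0 <;> by_cases hy0 : y = 0
            · exact hx0.trans hy0.symm
            · exfalso
              subst hx0
              obtain ⟨v, hv, hv0⟩ := hbsome y hy0
              rw [hg] at hxy
              simp only [hb0, Option.getD_none, hv, Option.getD_some] at hxy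
              exact hv0 hxy.symm
            · exfalso
              subst hy0
              obtain ⟨v, hv, hv0⟩ := hbsome x hx0
              rw [hg] at hxy
              simp only [hb0, Option.getD_none, hv, Option.getD_some] at hxy
              exact hv0 hxy
            · obtain ⟨v, hv, _⟩ := hbsome x hx0
              obtain ⟨v', hv', _⟩ := hbsome y hy0
              rw [hg] at hxy
              simp only [hv, hv', Option.getD_some] at hxy
              subst hxy
              exact hbinj x y v hv hv'
          have hgsurj := Finite.injective_iff_surjective.mp hginj
          intro z hz
          obtain ⟨x, hx⟩ := hgsurj z
          have hx0 : x ≠ 0 := by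
            rintro rfl
            rw [hg] at hx
            simp only [hb0, Option.getD_none] at hx
            exact hz hx.symm
          obtain ⟨v, hv, _⟩ := hbsome x hx0
          rw [hg] at hx
          simp only [hv, Option.getD_some] at hx
          exact ⟨x, hx ▸ hv⟩
        refine ⟨hc0, ?_, ?_, v0, hcv0⟩
        · intro y y' w hcy hcy'
          have hy0 : y ≠ 0 := by rintro rfl; rw [hc0] at hcy; simp at hcy
          have hy'0 : y' ≠ 0 := by rintro rfl; rw [hc0] at hcy'; simp at hcy'
          obtain ⟨x, hx⟩ := hbsurjL y hy0
          obtain ⟨x', hx'⟩ := hbsurjL y' hy'0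
          have h3 := hainj x x' w (by simp [pmul, hx, hcy]) (by simp [pmul, hx', hcy'])
          subst h3
          rw [hx] at hx'
          exact Option.some_injective _ hx'
        · intro z hz hcz
          obtain ⟨x, hx⟩ := hbsurjL z hz
          have hx0 : x ≠ 0 := by rintro rfl; rw [hb0] at hx; simp at hx
          exact hadom x hx0 (by simp [pmul, hx, hcz])

include hn hHF2 in
lemma Ct_closed : ∀ a b c, a ∈ Ct n → b ∈ M → c ∈ M → a = pmul b c →
    b ∈ Ct n ∨ c ∈ Ct n := by
  intro a b c haC hbM hcM heq
  obtain ⟨hatot, ha0, hani, i, hi0, hinj'⟩ := haC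
  subst heq
  have hoff : ∀ x y v, x ≠ i → y ≠ i → pmul b c x = some v → pmul b c y = some v →
      x = y := by
    intro x y v hx hy h1 h2
    exact hinj' x y v (by simp [offp, hx, h1]) (by simp [offp, hy, h2])
  have hbtot : Tot b := fun y hy => hatot y (by simp [pmul, hy])
  obtain ⟨p, q, r, hpb, hqb, hrb, hpq, hpr, hqr⟩ := pick3 hn i
  have hdef : ∀ x, ∃ v, pmul b c x = some v := by
    intro x
    cases hax : pmul b c x with
    | none => exact absurd hax (hatot x)
    | some v => exact ⟨v, rfl⟩
  obtain ⟨vp, hvp⟩ := hdef p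
  obtain ⟨vq, hvq⟩ := hdef q
  obtain ⟨vr, hvr⟩ := hdef r
  have dpq : vp ≠ vq := fun h => hpq (hoff p q vp hpb hqb hvp (by rw [h]; exact hvq))
  have dpr : vp ≠ vr := fun h => hpr (hoff p r vp hpb hrb hvp (by rw [h]; exact hvr))
  have dqr : vq ≠ vr := fun h => hqr (hoff q r vq hqb hrb hvq (by rw [h]; exact hvr))
  have hb0 : b 0 = some 0 := by
    cases hb0' : b 0 with
    | none => exact absurd hb0' (hbtot 0)
    | some u =>
        by_cases hu : u = 0
        · subst hu; exact rfl
        · exact (b0_ne_zero_contra (hHF2 b hbM u hb0' hu) hvp hvq hvr dpq dpr dqr).elim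
  have hc0 : c 0 = some 0 := by
    have h1 := ha0
    simp only [pmul, hb0, Option.bind_some] at h1
    exact h1
  by_cases hbinj : PInj b
  · right
    have hbsurj := tot_surj hbtot hbinj
    have hani' : ∃ x y v, pmul b c x = some v ∧ pmul b c y = some v ∧ x ≠ y := by
      unfold PInj at hani
      push_neg at hani
      obtain ⟨x, y, v, h1, h2, hxy⟩ := hani
      exact ⟨x, y, v, h1, h2, hxy⟩
    obtain ⟨x, y, v, h1, h2, hxy⟩ := hani'
    obtain ⟨m, hbi⟩ : ∃ m, b i = some m := by
      cases h : b i with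
      | none => exact absurd h (hbtot i)
      | some m => exact ⟨m, rfl⟩
    have hm0 : m ≠ 0 := by
      rintro rfl
      exact hi0 (hbinj i 0 0 hbi hb0)
    have hctot : Tot c := by
      intro z hz
      obtain ⟨x', hx'⟩ := hbsurj z
      exact hatot x' (by simp [pmul, hx', hz])
    refine ⟨hctot, hc0, ?_, m, hm0, ?_⟩
    · intro hcinj
      apply hxy
      obtain ⟨m1, hm1, hm1'⟩ := pmul_eq_some h1
      obtain ⟨m2, hm2, hm2'⟩ := pmul_eq_some h2
      have h3 := hcinj m1 m2 v hm1' hm2'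
      subst h3
      exact hbinj x y m1 hm1 hm2
    · intro z z' w hcz hcz'
      simp only [offp] at hcz hcz'
      by_cases hz : z = m
      · rw [if_pos hz] at hcz; exact absurd hcz (by simp)
      rw [if_neg hz] at hcz
      by_cases hz' : z' = m
      · rw [if_pos hz'] at hcz'; exact absurd hcz' (by simp)
      rw [if_neg hz'] at hcz'
      obtain ⟨x', hx'⟩ := hbsurj z
      obtain ⟨x'', hx''⟩ := hbsurj z'
      have hx'i : x' ≠ i := by
        rintro rfl
        rw [hbi] at hx'
        exact hz (Option.some_injective _ hx').symm
      have hx''i : x'' ≠ i := by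
        rintro rfl
        rw [hbi] at hx''
        exact hz' (Option.some_injective _ hx'').symm
      have h3 := hoff x' x'' w hx'i hx''i (by simp [pmul, hx', hcz])
        (by simp [pmul, hx'', hcz'])
      subst h3
      rw [hx'] at hx''
      exact Option.some_injective _ hx''
  · left
    refine ⟨hbtot, hb0, hbinj, i, hi0, ?_⟩
    intro x y v hbx hby
    simp only [offp] at hbx hby
    by_cases hx : x = i
    · rw [if_pos hx] at hbx; exact absurd hbx (by simp)
    rw [if_neg hx] at hbx
    by_cases hy : y = i
    · rw [if_pos hy] at hby; exact absurd hby (by simp)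
    rw [if_neg hy] at hby
    cases hcv : c v with
    | none => exact absurd (show pmul b c x = none by simp [pmul, hbx, hcv]) (hatot x)
    | some w =>
        exact hoff x y w hx hy (by simp [pmul, hbx, hcv]) (by simp [pmul, hby, hcv])

include hn hHF2 in
lemma Cw_closed : ∀ a b c, a ∈ Cw n → b ∈ M → c ∈ M → a = pmul b c →
    b ∈ Cw n ∨ c ∈ Cw n := by
  intro a b c haC hbM hcM heq
  obtain ⟨hatot, ha0, i, hi0, hai, hinj'⟩ := haC
  subst heq
  have hoff : ∀ x y v, x ≠ i → y ≠ i → pmul b c x = some v → pmul b c y = some v →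
      x = y := by
    intro x y v hx hy h1 h2
    exact hinj' x y v (by simp [offp, hx, h1]) (by simp [offp, hy, h2])
  have hbtot : Tot b := fun y hy => hatot y (by simp [pmul, hy])
  obtain ⟨p, q, r, hpb, hqb, hrb, hpq, hpr, hqr⟩ := pick3 hn i
  have hdef : ∀ x, ∃ v, pmul b c x = some v := by
    intro x
    cases hax : pmul b c x with
    | none => exact absurd hax (hatot x)
    | some v => exact ⟨v, rfl⟩
  obtain ⟨vp, hvp⟩ := hdef p
  obtain ⟨vq, hvq⟩ := hdef q
  obtain ⟨vr, hvr⟩ := hdef r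
  have dpq : vp ≠ vq := fun h => hpq (hoff p q vp hpb hqb hvp (by rw [h]; exact hvq))
  have dpr : vp ≠ vr := fun h => hpr (hoff p r vp hpb hrb hvp (by rw [h]; exact hvr))
  have dqr : vq ≠ vr := fun h => hqr (hoff q r vq hqb hrb hvq (by rw [h]; exact hvr))
  have hb0 : b 0 = some 0 := by
    cases hb0' : b 0 with
    | none => exact absurd hb0' (hbtot 0)
    | some u =>
        by_cases hu : u = 0
        · subst hu; exact rfl
        · exact (b0_ne_zero_contra (hHF2 b hbM u hb0' hu) hvp hvq hvr dpq dpr dqr).elim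
  have hc0 : c 0 = some 0 := by
    have h1 := ha0
    simp only [pmul, hb0, Option.bind_some] at h1
    exact h1
  obtain ⟨m, hbi⟩ : ∃ m, b i = some m := by
    cases h : b i with
    | none => exact absurd h (hbtot i)
    | some m => exact ⟨m, rfl⟩
  have hcm : c m = some 0 := by
    have h1 := hai
    simp only [pmul, hbi, Option.bind_some] at h1
    exact h1
  have h0i : (0 : Fin n) ≠ i := fun h => hi0 h.symm
  by_cases hm : m = 0
  · left
    subst hm
    refine ⟨hbtot, hb0, i, hi0, hbi, ?_⟩
    intro x y v hbx hby
    simp only [offp] at hbx hby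
    by_cases hx : x = i
    · rw [if_pos hx] at hbx; exact absurd hbx (by simp)
    rw [if_neg hx] at hbx
    by_cases hy : y = i
    · rw [if_pos hy] at hby; exact absurd hby (by simp)
    rw [if_neg hy] at hby
    cases hcv : c v with
    | none => exact absurd (show pmul b c x = none by simp [pmul, hbx, hcv]) (hatot x)
    | some w =>
        exact hoff x y w hx hy (by simp [pmul, hbx, hcv]) (by simp [pmul, hby, hcv])
  · right
    have hbinj : PInj b := by
      intro x y v hbx hby
      by_cases hxy : x = y
      · exact hxy
      exfalso
      by_cases hx : x = i <;> by_cases hy : y = i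
      · exact hxy (hx.trans hy.symm)
      · subst hx
        rw [hbi] at hbx
        have hvm : m = v := Option.some_injective _ hbx
        subst hvm
        have hay : pmul b c y = some 0 := by simp [pmul, hby, hcm]
        have h3 := hoff y 0 0 hy h0i hay ha0
        subst h3
        rw [hb0] at hby
        exact hm (Option.some_injective _ hby).symm
      · subst hy
        rw [hbi] at hby
        have hvm : m = v := Option.some_injective _ hby
        subst hvm
        have hax : pmul b c x = some 0 := by simp [pmul, hbx, hcm]
        have h3 := hoff x 0 0 hx h0i hax ha0
        subst h3
        rw [hb0] at hbx
        exact hm (Option.some_injective _ hbx).symm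
      · cases hcv : c v with
        | none => exact hatot x (by simp [pmul, hbx, hcv])
        | some w =>
            exact hxy (hoff x y w hx hy (by simp [pmul, hbx, hcv])
              (by simp [pmul, hby, hcv]))
    have hbsurj := tot_surj hbtot hbinj
    have hctot : Tot c := by
      intro z hz
      obtain ⟨x', hx'⟩ := hbsurj z
      exact hatot x' (by simp [pmul, hx', hz])
    refine ⟨hctot, hc0, m, hm, hcm, ?_⟩
    intro z z' w hcz hcz'
    simp only [offp] at hcz hcz'
    by_cases hz : z = m
    · rw [if_pos hz] at hcz; exact absurd hcz (by simp)
    rw [if_neg hz] at hcz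
    by_cases hz' : z' = m
    · rw [if_pos hz'] at hcz'; exact absurd hcz' (by simp)
    rw [if_neg hz'] at hcz'
    obtain ⟨x', hx'⟩ := hbsurj z
    obtain ⟨x'', hx''⟩ := hbsurj z'
    have hx'i : x' ≠ i := by
      rintro rfl
      rw [hbi] at hx'
      exact hz (Option.some_injective _ hx').symm
    have hx''i : x'' ≠ i := by
      rintro rfl
      rw [hbi] at hx''
      exact hz' (Option.some_injective _ hx'').symm
    have h3 := hoff x' x'' w hx'i hx''i (by simp [pmul, hx', hcz])
      (by simp [pmul, hx'', hcz'])
    subst h3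
    rw [hx'] at hx''
    exact Option.some_injective _ hx''

end Closures2

end Star
namespace Star

variable {n : ℕ} [NeZero n]

lemma gen_sub {S M : Set (Fin n → Option (Fin n))} (hSM : S ⊆ M)
    (hid : (fun x : Fin n => some x) ∈ M)
    (hmul : ∀ a b, a ∈ M → b ∈ M → pmul a b ∈ M) :
    ∀ a, genFrom S a → a ∈ M := by
  intro a hg
  induction hg with
  | one => exact hid
  | mem a h => exact hSM h
  | mul a b ha hb iha ihb => exact hmul a b iha ihb

lemma ncard_six {β : Type*} {x1 x2 x3 x4 x5 x6 : β}
    (d12 : x1 ≠ x2) (d13 : x1 ≠ x3) (d14 : x1 ≠ x4) (d15 : x1 ≠ x5) (d16 : x1 ≠ x6)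
    (d23 : x2 ≠ x3) (d24 : x2 ≠ x4) (d25 : x2 ≠ x5) (d26 : x2 ≠ x6)
    (d34 : x3 ≠ x4) (d35 : x3 ≠ x5) (d36 : x3 ≠ x6)
    (d45 : x4 ≠ x5) (d46 : x4 ≠ x6) (d56 : x5 ≠ x6) :
    ({x1, x2, x3, x4, x5, x6} : Set β).ncard = 6 := by
  rw [Set.ncard_insert_of_notMem (by simp [d12, d13, d14, d15, d16]),
      Set.ncard_insert_of_notMem (by simp [d23, d24, d25, d26]),
      Set.ncard_insert_of_notMem (by simp [d34, d35, d36]),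
      Set.ncard_insert_of_notMem (by simp [d45, d46]),
      Set.ncard_insert_of_notMem (by simp [d56]),
      Set.ncard_singleton]

lemma ncard_seven {β : Type*} {x1 x2 x3 x4 x5 x6 x7 : β}
    (d12 : x1 ≠ x2) (d13 : x1 ≠ x3) (d14 : x1 ≠ x4) (d15 : x1 ≠ x5) (d16 : x1 ≠ x6)
    (d17 : x1 ≠ x7)
    (d23 : x2 ≠ x3) (d24 : x2 ≠ x4) (d25 : x2 ≠ x5) (d26 : x2 ≠ x6) (d27 : x2 ≠ x7)
    (d34 : x3 ≠ x4) (d35 : x3 ≠ x5) (d36 : x3 ≠ x6) (d37 : x3 ≠ x7)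
    (d45 : x4 ≠ x5) (d46 : x4 ≠ x6) (d47 : x4 ≠ x7) (d56 : x5 ≠ x6) (d57 : x5 ≠ x7)
    (d67 : x6 ≠ x7) :
    ({x1, x2, x3, x4, x5, x6, x7} : Set β).ncard = 7 := by
  rw [Set.ncard_insert_of_notMem (by simp [d12, d13, d14, d15, d16, d17]),
      Set.ncard_insert_of_notMem (by simp [d23, d24, d25, d26, d27]),
      Set.ncard_insert_of_notMem (by simp [d34, d35, d36, d37]),
      Set.ncard_insert_of_notMem (by simp [d45, d46, d47]),
      Set.ncard_insert_of_notMem (by simp [d56, d57]),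
      Set.ncard_insert_of_notMem (by simp [d67]),
      Set.ncard_singleton]

lemma fin_six {β : Type*} (x1 x2 x3 x4 x5 x6 : β) :
    ({x1, x2, x3, x4, x5, x6} : Set β).Finite := by
  apply Set.Finite.insert; apply Set.Finite.insert; apply Set.Finite.insert
  apply Set.Finite.insert; apply Set.Finite.insert; exact Set.finite_singleton _

lemma fin_seven {β : Type*} (x1 x2 x3 x4 x5 x6 x7 : β) :
    ({x1, x2, x3, x4, x5, x6, x7} : Set β).Finite := by
  apply Set.Finite.insert; exact fin_six _ _ _ _ _ _

lemma card_L (hn : 4 ≤ n) : Fintype.card {x : Fin n // x ≠ 0} = n - 1 := by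
  have h1 := Fintype.card_subtype_compl (fun x : Fin n => x = 0)
  simp only [Fintype.card_subtype_eq, Fintype.card_fin] at h1
  exact h1

lemma exists_nonvalue (hn : 4 ≤ n) {α : Fin n → Option (Fin n)}
    (hz : ∃ x, x ≠ 0 ∧ α x = some 0) :
    ∃ w, w ≠ 0 ∧ ∀ x, x ≠ 0 → α x ≠ some w := by
  by_contra hc
  push_neg at hc
  have hall : ∀ w : Fin n, ∃ x, x ≠ 0 ∧ α x = some w := by
    intro w
    by_cases hw : w = 0
    · subst hw; exact hz
    · obtain ⟨x, hx, hxv⟩ := hc w hw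
      exact ⟨x, hx, hxv⟩
  choose f hf1 hf2 using hall
  have hinj : Function.Injective (fun w => (⟨f w, hf1 w⟩ : {x : Fin n // x ≠ 0})) := by
    intro w w' h
    have : f w = f w' := congrArg Subtype.val h
    have h2 := hf2 w
    rw [this, hf2 w'] at h2
    exact (Option.some_injective _ h2).symm
  have hcard := Fintype.card_le_of_injective _ hinj
  rw [card_L hn, Fintype.card_fin] at hcard
  omega

variable {hn : 4 ≤ n}

-- memberships of generators
lemma tmap_ps : IsPsEnd (tmap hn) := by
  apply mk_ps_pres
  intro x v hxv
  unfold tmap at hxv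
  by_cases hx : x = llast hn
  · rw [if_pos hx] at hxv
    have hv := Option.some_injective _ hxv
    subst hv
    constructor
    · intro h; exact absurd (hx ▸ h) (llast_ne_zero (hn := hn))
    · intro h; exact absurd h (lone_ne_zero (hn := hn))
  · rw [if_neg hx] at hxv
    have hv := Option.some_injective _ hxv
    subst hv
    rfl

lemma pid_ps (p : Fin n → Prop) [DecidablePred p] : IsPsEnd (pid p) := by
  apply mk_ps_pres
  intro x v hxv
  unfold pid at hxv
  by_cases hx : p x
  · rw [if_pos hx] at hxv
    have hv := Option.some_injective _ hxv
    subst hv; rfl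
  · rw [if_neg hx] at hxv; exact absurd hxv (by simp)

lemma pid_pinj (p : Fin n → Prop) [DecidablePred p] : PInj (pid p) := by
  intro x y v hx hy
  unfold pid at hx hy
  by_cases hpx : p x
  · rw [if_pos hpx] at hx
    by_cases hpy : p y
    · rw [if_pos hpy] at hy
      exact (Option.some_injective _ hx).trans (Option.some_injective _ hy).symm
    · rw [if_neg hpy] at hy; exact absurd hy (by simp)
  · rw [if_neg hpx] at hx; exact absurd hx (by simp)

lemma emap_ps : IsPsEnd (emap hn) := pid_ps _
lemma emap_pinj : PInj (emap hn) := pid_pinj _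

lemma dmap_ps : IsPsEnd (dmap (n := n)) := by
  apply mk_ps_pres
  intro x v hxv
  unfold dmap at hxv
  by_cases hx : x = 0
  · rw [if_pos hx] at hxv; exact absurd hxv (by simp)
  · rw [if_neg hx] at hxv
    have hv := Option.some_injective _ hxv
    subst hv; rfl

lemma dmap_pinj : PInj (dmap (n := n)) := by
  intro x y v hx hy
  unfold dmap at hx hy
  by_cases hpx : x = 0
  · rw [if_pos hpx] at hx; exact absurd hx (by simp)
  · rw [if_neg hpx] at hx
    by_cases hpy : y = 0
    · rw [if_pos hpy] at hy; exact absurd hy (by simp)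
    · rw [if_neg hpy] at hy
      exact (Option.some_injective _ hx).trans (Option.some_injective _ hy).symm

lemma gam_ps : IsPsEnd (gam hn) := by
  apply mk_ps_swap (c := lone hn) (by unfold gam; rw [if_pos rfl]) lone_ne_zero
  intro x v hx hxv
  unfold gam at hxv
  rw [if_neg hx] at hxv
  exact (Option.some_injective _ hxv).symm

lemma gam'_ps : IsPsEnd (gam' hn) := by
  apply mk_ps_swap (c := lone hn) (by unfold gam'; rw [if_pos rfl]) lone_ne_zero
  intro x v hx hxv
  unfold gam' at hxv
  rw [if_neg hx] at hxv
  by_cases h1 : x = lone hn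
  · rw [if_pos h1] at hxv; exact (Option.some_injective _ hxv).symm
  · rw [if_neg h1] at hxv; exact absurd hxv (by simp)

lemma gam'_pinj : PInj (gam' hn) := by
  intro x y v hx hy
  unfold gam' at hx hy
  by_cases hx0 : x = 0 <;> by_cases hy0 : y = 0
  · exact hx0.trans hy0.symm
  · exfalso
    rw [if_pos hx0] at hx
    rw [if_neg hy0] at hy
    by_cases h1 : y = lone hn
    · rw [if_pos h1] at hy
      exact lone_ne_zero (hn := hn)
        ((Option.some_injective _ hx).trans (Option.some_injective _ hy).symm)
    · rw [if_neg h1] at hy; exact absurd hy (by simp)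
  · exfalso
    rw [if_pos hy0] at hy
    rw [if_neg hx0] at hx
    by_cases h1 : x = lone hn
    · rw [if_pos h1] at hx
      exact lone_ne_zero (hn := hn)
        ((Option.some_injective _ hy).trans (Option.some_injective _ hx).symm)
    · rw [if_neg h1] at hx; exact absurd hx (by simp)
  · rw [if_neg hx0] at hx
    rw [if_neg hy0] at hy
    by_cases h1 : x = lone hn <;> by_cases h2 : y = lone hn
    · exact h1.trans h2.symm
    · rw [if_pos h1] at hx
      rw [if_neg h2] at hy
      exact absurd hy (by simp)
    · rw [if_pos h2] at hy
      rw [if_neg h1] at hx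
      exact absurd hx (by simp)
    · rw [if_neg h1] at hx
      exact absurd hx (by simp)

lemma del_p : IsPEnd (del hn) := mk_p_nodom0 (by unfold del; rw [if_pos rfl])

lemma del_pinj : PInj (del hn) := by
  intro x y v hx hy
  unfold del at hx hy
  by_cases hx0 : x = 0
  · rw [if_pos hx0] at hx; exact absurd hx (by simp)
  rw [if_neg hx0] at hx
  by_cases hy0 : y = 0
  · rw [if_pos hy0] at hy; exact absurd hy (by simp)
  rw [if_neg hy0] at hy
  by_cases h1 : x = lone hn <;> by_cases h2 : y = lone hn
  · exact h1.trans h2.symm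
  · exfalso
    rw [if_pos h1] at hx
    rw [if_neg h2] at hy
    have hv := (Option.some_injective _ hx).symm
    subst hv
    exact hy0 (Option.some_injective _ hy)
  · exfalso
    rw [if_pos h2] at hy
    rw [if_neg h1] at hx
    have hv := (Option.some_injective _ hy).symm
    subst hv
    exact hx0 (Option.some_injective _ hx)
  · rw [if_neg h1] at hx
    rw [if_neg h2] at hy
    exact (Option.some_injective _ hx).trans (Option.some_injective _ hy).symm

lemma wmap_pw : IsPwEnd (wmap hn) := by
  intro u v a b hu hv he hne
  unfold wmap at hu hv
  rw [edge_iff] at he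
  rcases he with ⟨hu0, hv0⟩ | ⟨hv0, hu0⟩
  · subst hu0
    rw [if_neg (fun h => lone_ne_zero (hn := hn) h.symm)] at hu
    have ha := (Option.some_injective _ hu).symm
    subst ha
    by_cases h1 : v = lone hn
    · rw [if_pos h1] at hv
      exact absurd ((Option.some_injective _ hv).symm.trans rfl) (fun h => hne h.symm)
    · rw [if_neg h1] at hv
      have hb := (Option.some_injective _ hv).symm
      subst hb
      rw [edge_iff]
      exact Or.inl ⟨rfl, hv0⟩
  · subst hv0
    rw [if_neg (fun h => lone_ne_zero (hn := hn) h.symm)] at hv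
    have hb := (Option.some_injective _ hv).symm
    subst hb
    by_cases h1 : u = lone hn
    · rw [if_pos h1] at hu
      exact absurd (Option.some_injective _ hu) (fun h => hne h.symm)
    · rw [if_neg h1] at hu
      have ha := (Option.some_injective _ hu).symm
      subst ha
      rw [edge_iff]
      exact Or.inr ⟨rfl, hu0⟩

lemma zmap_psw : IsPswEnd (zmap (n := n)) := by
  intro u v a b hu hv
  unfold zmap at hu hv
  have ha := (Option.some_injective _ hu).symm
  have hb := (Option.some_injective _ hv).symm
  subst ha; subst hb
  constructor
  · rintro ⟨_, hne⟩; exact absurd rfl hne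
  · intro he; exact absurd he (not_edge_self _)

-- distinctness helpers
lemma fne {α β : Fin n → Option (Fin n)} (x : Fin n) (h : α x ≠ β x) : α ≠ β :=
  fun he => h (congrFun he x)

lemma tmap_not_pinj : ¬ PInj (tmap hn) := by
  intro h
  have h1 : tmap hn (llast hn) = some (lone hn) := by unfold tmap; rw [if_pos rfl]
  have h2 : tmap hn (lone hn) = some (lone hn) := by
    unfold tmap; rw [if_neg (fun hc => llast_ne_lone (hn := hn) hc.symm)]
  exact llast_ne_lone (hn := hn) (h _ _ _ h1 h2)

lemma gam_not_pinj : ¬ PInj (gam hn) := by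
  intro h
  have h1 : gam hn (lone hn) = some 0 := by
    unfold gam; rw [if_neg (lone_ne_zero (hn := hn))]
  have h2 : gam hn (ltwo hn) = some 0 := by
    unfold gam; rw [if_neg (ltwo_ne_zero (hn := hn))]
  exact lone_ne_ltwo (hn := hn) (h _ _ _ h1 h2)

lemma pe_pinj_ne {σ : Equiv.Perm (Fin n)} {α : Fin n → Option (Fin n)}
    (h : ¬ PInj α) : pe σ ≠ α := fun he => h (he ▸ pe_pinj σ)

lemma pe_tot_ne {σ : Equiv.Perm (Fin n)} {α : Fin n → Option (Fin n)} {x : Fin n}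
    (h : α x = none) : pe σ ≠ α := fun he => by
  rw [← he] at h
  exact absurd h (by simp [pe])

end Star
namespace Star

variable {n : ℕ} [NeZero n]

lemma upper_Ps (hn : 4 ≤ n) : ∃ S : Set (Fin n → Option (Fin n)),
    S.Finite ∧ S.ncard = 6 ∧ S ⊆ PsEndS n ∧ {a | genFrom S a} = PsEndS n := by
  classical
  obtain ⟨g1, g2, hgne, ⟨σ1, hσ1, hg1σ⟩, ⟨σ2, hσ2, hg2σ⟩, hgenU⟩ := exists_units hn
  set S : Set (Fin n → Option (Fin n)) := {g1, g2, tmap hn, emap hn, gam hn, dmap}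
    with hS
  have hg1S : g1 ∈ S := by rw [hS]; left; rfl
  have hg2S : g2 ∈ S := by rw [hS]; right; left; rfl
  have htS : tmap hn ∈ S := by rw [hS]; right; right; left; rfl
  have heS : emap hn ∈ S := by rw [hS]; right; right; right; left; rfl
  have hgamS : gam hn ∈ S := by rw [hS]; right; right; right; right; left; rfl
  have hdS : dmap ∈ S := by rw [hS]; right; right; right; right; right; rfl
  have hGP := hgenU S hg1S hg2S
  have hemlast : emap hn (llast hn) = none := by
    unfold emap pid; rw [if_neg (by simp)]
  have hdm0 : dmap (0 : Fin n) = none := by unfold dmap; rw [if_pos rfl]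
  have htm0 : tmap hn 0 = some 0 := by
    unfold tmap; rw [if_neg (fun h => llast_ne_zero (hn := hn) h.symm)]
  have hem0 : emap hn 0 = some 0 := by
    unfold emap pid; rw [if_pos (fun h => llast_ne_zero (hn := hn) h.symm)]
  have hgam0 : gam hn 0 = some (lone hn) := by unfold gam; rw [if_pos rfl]
  have hsub : S ⊆ PsEndS n := by
    intro s hs
    rw [hS] at hs
    simp only [Set.mem_insert_iff, Set.mem_singleton_iff] at hs
    rcases hs with rfl | rfl | rfl | rfl | rfl | rfl
    · rw [hg1σ]; exact pe_mem_psEnd hσ1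
    · rw [hg2σ]; exact pe_mem_psEnd hσ2
    · exact tmap_ps
    · exact emap_ps
    · exact gam_ps
    · exact dmap_ps
  have hgenM : ∀ α, IsPsEnd α → genFrom S α := by
    intro α hα
    cases h0 : α 0 with
    | some c =>
        by_cases hc : c = 0
        · subst hc
          exact gen_classI hGP htS heS α h0
            (fun x v hx hxv => hf3_p (IsPsEnd.toPEnd hα) h0 x v hx hxv)
        · have hK0 : (0 : Fin n) ∉ Finset.univ.filter (fun x => α x = none) := by
            simp [h0]
          have heq : α = pmul (pmul
              (pid (· ∉ Finset.univ.filter (fun x => α x = none))) (gam hn))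
              (pe (Equiv.swap (lone hn) c)) := by
            funext x
            by_cases hx0 : x = 0
            · subst hx0
              rw [h0]
              simp only [pmul, pid]
              rw [if_pos (by simp [h0])]
              simp only [Option.bind_some]
              unfold gam
              rw [if_pos rfl]
              simp only [Option.bind_some, pe, Equiv.swap_apply_left]
            · cases hax : α x with
              | none =>
                  simp only [pmul, pid]
                  rw [if_neg (by simp [hax])]
                  simp
              | some v =>
                  have hv : v = 0 := p_0c (IsPsEnd.toPEnd hα) h0 hc x v hx0 hax
                  subst hv
                  simp only [pmul, pid]
                  rw [if_pos (by simp [hax])]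
                  simp only [Option.bind_some]
                  unfold gam
                  rw [if_neg hx0]
                  simp only [Option.bind_some, pe]
                  rw [swap_zero lone_ne_zero hc]
          rw [heq]
          exact genFrom.mul _ _
            (genFrom.mul _ _ (gen_pid hGP heS _ hK0) (genFrom.mem _ hgamS))
            (hGP _ (swap_zero lone_ne_zero hc))
    | none =>
        by_cases hz : ∃ x, α x = some 0
        · obtain ⟨x0, hx0v⟩ := hz
          have hx00 : x0 ≠ 0 := fun h => by rw [h, h0] at hx0v; exact absurd hx0v (by simp)
          have hall : ∀ x v, α x = some v → v = 0 := by
            intro x v hxv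
            have hx0' : x ≠ 0 := fun h => by rw [h, h0] at hxv; exact absurd hxv (by simp)
            exact (ps_pair hα hx0' hx00 hxv hx0v).mpr rfl
          set K := Finset.univ.filter (fun x => α x = none ∧ x ≠ 0) with hK
          have hK0 : (0 : Fin n) ∉ K := by simp [hK]
          have heq : α = pmul (fun x => if x = 0 ∨ x ∈ K then none else some x)
              (gam hn) := by
            funext x
            by_cases hx0 : x = 0
            · subst hx0; rw [h0]; simp [pmul]
            · cases hax : α x with
              | none =>
                  have hxK : x ∈ K := by simp [hK, hax, hx0]
                  simp [pmul, hxK]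
              | some v =>
                  have hv := hall x v hax
                  subst hv
                  have hxK : ¬(x = 0 ∨ x ∈ K) := by simp [hK, hax, hx0]
                  simp only [pmul]
                  rw [if_neg hxK]
                  simp only [Option.bind_some]
                  unfold gam
                  rw [if_neg hx0]
          rw [heq]
          exact genFrom.mul _ _ (gen_pid0 hGP heS hdS K hK0) (genFrom.mem _ hgamS)
        · push_neg at hz
          set β : Fin n → Option (Fin n) := fun x => if x = 0 then some 0 else α x
            with hβ
          have heq : α = pmul dmap β := by
            funext x
            by_cases hx0 : x = 0
            · subst hx0; rw [h0]; simp [pmul, dmap]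
            · simp [pmul, dmap, hx0, hβ]
          rw [heq]
          refine genFrom.mul _ _ (genFrom.mem _ hdS)
            (gen_classI hGP htS heS β (by simp [hβ]) ?_)
          intro x v hx hxv
          rw [hβ] at hxv
          simp only [if_neg hx] at hxv
          exact fun hv => hz x (hv ▸ hxv)
  refine ⟨S, by rw [hS]; exact fin_six _ _ _ _ _ _, ?_, hsub, ?_⟩
  · rw [hS]
    refine ncard_six hgne ?_ ?_ ?_ ?_ ?_ ?_ ?_ ?_ ?_ ?_ ?_ ?_ ?_ ?_
    · rw [hg1σ]; exact pe_pinj_ne tmap_not_pinj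
    · rw [hg1σ]; exact pe_tot_ne hemlast
    · rw [hg1σ]; exact pe_pinj_ne gam_not_pinj
    · rw [hg1σ]; exact pe_tot_ne hdm0
    · rw [hg2σ]; exact pe_pinj_ne tmap_not_pinj
    · rw [hg2σ]; exact pe_tot_ne hemlast
    · rw [hg2σ]; exact pe_pinj_ne gam_not_pinj
    · rw [hg2σ]; exact pe_tot_ne hdm0
    · refine fne (llast hn) ?_
      rw [hemlast]
      unfold tmap
      rw [if_pos rfl]
      simp
    · refine fne 0 ?_
      rw [htm0, hgam0]
      exact fun h => lone_ne_zero (hn := hn) (Option.some_injective _ h).symm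
    · refine fne 0 ?_
      rw [htm0, hdm0]
      simp
    · refine fne 0 ?_
      rw [hem0, hgam0]
      exact fun h => lone_ne_zero (hn := hn) (Option.some_injective _ h).symm
    · refine fne 0 ?_
      rw [hem0, hdm0]
      simp
    · refine fne 0 ?_
      rw [hgam0, hdm0]
      simp
  · ext α
    constructor
    · intro h
      exact gen_sub hsub isPsEnd_id (fun a b ha hb => IsPsEnd.pmul ha hb) α h
    · intro hα
      exact hgenM α hα

end Star
namespace Star

variable {n : ℕ} [NeZero n]

lemma ltwo_ne_llast {hn : 4 ≤ n} : ltwo hn ≠ llast hn := by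
  intro h; have := congrArg Fin.val h; simp [ltwo, llast] at this; omega

lemma zmap_not_pinj {hn : 4 ≤ n} : ¬ PInj (zmap (n := n)) := by
  intro h
  exact lone_ne_ltwo (hn := hn) (h _ _ _ rfl rfl)

lemma upper_Psw (hn : 4 ≤ n) : ∃ S : Set (Fin n → Option (Fin n)),
    S.Finite ∧ S.ncard = 7 ∧ S ⊆ PswEndS n ∧ {a | genFrom S a} = PswEndS n := by
  classical
  obtain ⟨g1, g2, hgne, ⟨σ1, hσ1, hg1σ⟩, ⟨σ2, hσ2, hg2σ⟩, hgenU⟩ := exists_units hn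
  set S : Set (Fin n → Option (Fin n)) :=
    {g1, g2, tmap hn, emap hn, gam hn, dmap, zmap} with hS
  have hg1S : g1 ∈ S := by rw [hS]; left; rfl
  have hg2S : g2 ∈ S := by rw [hS]; right; left; rfl
  have htS : tmap hn ∈ S := by rw [hS]; right; right; left; rfl
  have heS : emap hn ∈ S := by rw [hS]; right; right; right; left; rfl
  have hgamS : gam hn ∈ S := by rw [hS]; right; right; right; right; left; rfl
  have hdS : dmap ∈ S := by rw [hS]; right; right; right; right; right; left; rfl
  have hzS : zmap ∈ S := by rw [hS]; right; right; right; right; right; right; rfl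
  have hGP := hgenU S hg1S hg2S
  have hemlast : emap hn (llast hn) = none := by
    unfold emap pid; rw [if_neg (by simp)]
  have hdm0 : dmap (0 : Fin n) = none := by unfold dmap; rw [if_pos rfl]
  have htm0 : tmap hn 0 = some 0 := by
    unfold tmap; rw [if_neg (fun h => llast_ne_zero (hn := hn) h.symm)]
  have hem0 : emap hn 0 = some 0 := by
    unfold emap pid; rw [if_pos (fun h => llast_ne_zero (hn := hn) h.symm)]
  have hgam0 : gam hn 0 = some (lone hn) := by unfold gam; rw [if_pos rfl]
  have htlast : tmap hn (llast hn) = some (lone hn) := by unfold tmap; rw [if_pos rfl]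
  have hsub : S ⊆ PswEndS n := by
    intro s hs
    rw [hS] at hs
    simp only [Set.mem_insert_iff, Set.mem_singleton_iff] at hs
    rcases hs with rfl | rfl | rfl | rfl | rfl | rfl | rfl
    · rw [hg1σ]; exact IsPsEnd.toPswEnd (pe_mem_psEnd hσ1)
    · rw [hg2σ]; exact IsPsEnd.toPswEnd (pe_mem_psEnd hσ2)
    · exact IsPsEnd.toPswEnd tmap_ps
    · exact IsPsEnd.toPswEnd emap_ps
    · exact IsPsEnd.toPswEnd gam_ps
    · exact IsPsEnd.toPswEnd dmap_ps
    · exact zmap_psw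
  have hgenM : ∀ α, IsPswEnd α → genFrom S α := by
    intro α hα
    cases h0 : α 0 with
    | some c =>
        by_cases hc : c = 0
        · subst hc
          by_cases hz : ∃ x, x ≠ 0 ∧ α x = some 0
          · obtain ⟨x0, hx00, hx0v⟩ := hz
            have hall : ∀ x v, α x = some v → v = 0 := by
              intro x v hxv
              by_cases hx0 : x = 0
              · subst hx0; rw [h0] at hxv; exact (Option.some_injective _ hxv).symm
              · exact (psw_pair hα hx0 hx00 hxv hx0v).mpr rfl
            set K := Finset.univ.filter (fun x => α x = none) with hK
            have hK0 : (0 : Fin n) ∉ K := by simp [hK, h0]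
            have heq : α = pmul (pid (· ∉ K)) zmap := by
              funext x
              cases hax : α x with
              | none =>
                  have hxK : x ∈ K := by simp [hK, hax]
                  simp only [pmul, pid]
                  rw [if_neg (by simp [hxK])]
                  simp
              | some v =>
                  have hv := hall x v hax
                  subst hv
                  simp only [pmul, pid]
                  rw [if_pos (by simp [hK, hax])]
                  simp [zmap]
            rw [heq]
            exact genFrom.mul _ _ (gen_pid hGP heS K hK0) (genFrom.mem _ hzS)
          · push_neg at hz
            exact gen_classI hGP htS heS α h0
              (fun x v hx hxv => fun hv => hz x hx (hv ▸ hxv))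
        · by_cases hz : ∃ x, x ≠ 0 ∧ α x = some 0
          · obtain ⟨x0, hx00, hx0v⟩ := hz
            have hK0 : (0 : Fin n) ∉ Finset.univ.filter (fun x => α x = none) := by
              simp [h0]
            have heq : α = pmul (pmul
                (pid (· ∉ Finset.univ.filter (fun x => α x = none))) (gam hn))
                (pe (Equiv.swap (lone hn) c)) := by
              funext x
              by_cases hx0 : x = 0
              · subst hx0
                rw [h0]
                simp only [pmul, pid]
                rw [if_pos (by simp [h0])]
                simp only [Option.bind_some]
                unfold gam
                rw [if_pos rfl]
                simp only [Option.bind_some, pe, Equiv.swap_apply_left]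
              · cases hax : α x with
                | none =>
                    simp only [pmul, pid]
                    rw [if_neg (by simp [hax])]
                    simp
                | some v =>
                    have hv : v = 0 := (psw_pair hα hx0 hx00 hax hx0v).mpr rfl
                    subst hv
                    simp only [pmul, pid]
                    rw [if_pos (by simp [hax])]
                    simp only [Option.bind_some]
                    unfold gam
                    rw [if_neg hx0]
                    simp only [Option.bind_some, pe]
                    rw [swap_zero lone_ne_zero hc]
            rw [heq]
            exact genFrom.mul _ _
              (genFrom.mul _ _ (gen_pid hGP heS _ hK0) (genFrom.mem _ hgamS))
              (hGP _ (swap_zero lone_ne_zero hc))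
          · push_neg at hz
            have hall : ∀ x v, α x = some v → v = c := by
              intro x v hxv
              by_cases hx0 : x = 0
              · subst hx0; rw [h0] at hxv; exact (Option.some_injective _ hxv).symm
              · rcases hf2_psw hα h0 hc x v hxv with h | h
                · exact absurd (h ▸ hxv) (hz x hx0)
                · exact h
            set K := Finset.univ.filter (fun x => α x = none) with hK
            have hK0 : (0 : Fin n) ∉ K := by simp [hK, h0]
            have heq : α = pmul (pmul (pmul (pid (· ∉ K)) zmap) (gam hn))
                (pe (Equiv.swap (lone hn) c)) := by
              funext x
              cases hax : α x with
              | none =>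
                  simp only [pmul, pid]
                  rw [if_neg (by simp [hK, hax])]
                  simp
              | some v =>
                  have hv := hall x v hax
                  subst hv
                  simp only [pmul, pid]
                  rw [if_pos (by simp [hK, hax])]
                  simp only [Option.bind_some, zmap]
                  unfold gam
                  rw [if_pos rfl]
                  simp only [Option.bind_some, pe, Equiv.swap_apply_left]
            rw [heq]
            exact genFrom.mul _ _
              (genFrom.mul _ _
                (genFrom.mul _ _ (gen_pid hGP heS K hK0) (genFrom.mem _ hzS))
                (genFrom.mem _ hgamS))
              (hGP _ (swap_zero lone_ne_zero hc))
    | none =>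
        by_cases hz : ∃ x, α x = some 0
        · obtain ⟨x0, hx0v⟩ := hz
          have hx00 : x0 ≠ 0 := fun h => by
            rw [h, h0] at hx0v; exact absurd hx0v (by simp)
          have hall : ∀ x v, α x = some v → v = 0 := by
            intro x v hxv
            have hx0' : x ≠ 0 := fun h => by
              rw [h, h0] at hxv; exact absurd hxv (by simp)
            exact (psw_pair hα hx0' hx00 hxv hx0v).mpr rfl
          set K := Finset.univ.filter (fun x => α x = none ∧ x ≠ 0) with hK
          have hK0 : (0 : Fin n) ∉ K := by simp [hK]
          have heq : α = pmul (fun x => if x = 0 ∨ x ∈ K then none else some x)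
              (gam hn) := by
            funext x
            by_cases hx0 : x = 0
            · subst hx0; rw [h0]; simp [pmul]
            · cases hax : α x with
              | none =>
                  have hxK : x ∈ K := by simp [hK, hax, hx0]
                  simp [pmul, hxK]
              | some v =>
                  have hv := hall x v hax
                  subst hv
                  have hxK : ¬(x = 0 ∨ x ∈ K) := by simp [hK, hax, hx0]
                  simp only [pmul]
                  rw [if_neg hxK]
                  simp only [Option.bind_some]
                  unfold gam
                  rw [if_neg hx0]
          rw [heq]
          exact genFrom.mul _ _ (gen_pid0 hGP heS hdS K hK0) (genFrom.mem _ hgamS)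
        · push_neg at hz
          set β : Fin n → Option (Fin n) := fun x => if x = 0 then some 0 else α x
            with hβ
          have heq : α = pmul dmap β := by
            funext x
            by_cases hx0 : x = 0
            · subst hx0; rw [h0]; simp [pmul, dmap]
            · simp [pmul, dmap, hx0, hβ]
          rw [heq]
          refine genFrom.mul _ _ (genFrom.mem _ hdS)
            (gen_classI hGP htS heS β (by simp [hβ]) ?_)
          intro x v hx hxv
          rw [hβ] at hxv
          simp only [if_neg hx] at hxv
          exact fun hv => hz x (hv ▸ hxv)
  refine ⟨S, by rw [hS]; exact fin_seven _ _ _ _ _ _ _, ?_, hsub, ?_⟩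
  · rw [hS]
    refine ncard_seven hgne ?_ ?_ ?_ ?_ ?_ ?_ ?_ ?_ ?_ ?_ ?_ ?_ ?_ ?_ ?_ ?_ ?_ ?_ ?_ ?_
    · rw [hg1σ]; exact pe_pinj_ne tmap_not_pinj
    · rw [hg1σ]; exact pe_tot_ne hemlast
    · rw [hg1σ]; exact pe_pinj_ne gam_not_pinj
    · rw [hg1σ]; exact pe_tot_ne hdm0
    · rw [hg1σ]; exact pe_pinj_ne (zmap_not_pinj (hn := hn))
    · rw [hg2σ]; exact pe_pinj_ne tmap_not_pinj
    · rw [hg2σ]; exact pe_tot_ne hemlast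
    · rw [hg2σ]; exact pe_pinj_ne gam_not_pinj
    · rw [hg2σ]; exact pe_tot_ne hdm0
    · rw [hg2σ]; exact pe_pinj_ne (zmap_not_pinj (hn := hn))
    · refine fne (llast hn) ?_
      rw [hemlast, htlast]
      simp
    · refine fne 0 ?_
      rw [htm0, hgam0]
      exact fun h => lone_ne_zero (hn := hn) (Option.some_injective _ h).symm
    · refine fne 0 ?_
      rw [htm0, hdm0]
      simp
    · refine fne (llast hn) ?_
      rw [htlast]
      simp only [zmap, ne_eq, Option.some_inj]
      exact lone_ne_zero (hn := hn)
    · refine fne 0 ?_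
      rw [hem0, hgam0]
      exact fun h => lone_ne_zero (hn := hn) (Option.some_injective _ h).symm
    · refine fne 0 ?_
      rw [hem0, hdm0]
      simp
    · refine fne (llast hn) ?_
      rw [hemlast]
      simp [zmap]
    · refine fne 0 ?_
      rw [hgam0, hdm0]
      simp
    · refine fne 0 ?_
      rw [hgam0]
      exact fun h => lone_ne_zero (hn := hn) (Option.some_injective _ h)
    · refine fne 0 ?_
      rw [hdm0]
      simp [zmap]
  · ext α
    constructor
    · intro h
      exact gen_sub hsub
        (IsPsEnd.toPswEnd isPsEnd_id)
        (fun a b ha hb => IsPswEnd.pmul ha hb) α h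
    · intro hα
      exact hgenM α hα

end Star
namespace Star

variable {n : ℕ} [NeZero n]

lemma upper_P (hn : 4 ≤ n) : ∃ S : Set (Fin n → Option (Fin n)),
    S.Finite ∧ S.ncard = 7 ∧ S ⊆ PEndS n ∧ {a | genFrom S a} = PEndS n := by
  classical
  obtain ⟨g1, g2, hgne, ⟨σ1, hσ1, hg1σ⟩, ⟨σ2, hσ2, hg2σ⟩, hgenU⟩ := exists_units hn
  set S : Set (Fin n → Option (Fin n)) :=
    {g1, g2, tmap hn, emap hn, gam hn, dmap, del hn} with hS
  have hg1S : g1 ∈ S := by rw [hS]; left; rfl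
  have hg2S : g2 ∈ S := by rw [hS]; right; left; rfl
  have htS : tmap hn ∈ S := by rw [hS]; right; right; left; rfl
  have heS : emap hn ∈ S := by rw [hS]; right; right; right; left; rfl
  have hgamS : gam hn ∈ S := by rw [hS]; right; right; right; right; left; rfl
  have hdS : dmap ∈ S := by rw [hS]; right; right; right; right; right; left; rfl
  have hdelS : del hn ∈ S := by rw [hS]; right; right; right; right; right; right; rfl
  have hGP := hgenU S hg1S hg2S
  have hemlast : emap hn (llast hn) = none := by
    unfold emap pid; rw [if_neg (by simp)]
  have hdm0 : dmap (0 : Fin n) = none := by unfold dmap; rw [if_pos rfl]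
  have htm0 : tmap hn 0 = some 0 := by
    unfold tmap; rw [if_neg (fun h => llast_ne_zero (hn := hn) h.symm)]
  have hem0 : emap hn 0 = some 0 := by
    unfold emap pid; rw [if_pos (fun h => llast_ne_zero (hn := hn) h.symm)]
  have hgam0 : gam hn 0 = some (lone hn) := by unfold gam; rw [if_pos rfl]
  have htlast : tmap hn (llast hn) = some (lone hn) := by unfold tmap; rw [if_pos rfl]
  have hdel0 : del hn 0 = none := by unfold del; rw [if_pos rfl]
  have hdellone : del hn (lone hn) = some 0 := by
    unfold del; rw [if_neg lone_ne_zero, if_pos rfl]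
  have hdmlone : dmap (lone hn) = some (lone hn) := by
    unfold dmap; rw [if_neg lone_ne_zero]
  have hsub : S ⊆ PEndS n := by
    intro s hs
    rw [hS] at hs
    simp only [Set.mem_insert_iff, Set.mem_singleton_iff] at hs
    rcases hs with rfl | rfl | rfl | rfl | rfl | rfl | rfl
    · rw [hg1σ]; exact IsPsEnd.toPEnd (pe_mem_psEnd hσ1)
    · rw [hg2σ]; exact IsPsEnd.toPEnd (pe_mem_psEnd hσ2)
    · exact IsPsEnd.toPEnd tmap_ps
    · exact IsPsEnd.toPEnd emap_ps
    · exact IsPsEnd.toPEnd gam_ps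
    · exact IsPsEnd.toPEnd dmap_ps
    · exact del_p
  have hgenM : ∀ α, IsPEnd α → genFrom S α := by
    intro α hα
    cases h0 : α 0 with
    | some c =>
        by_cases hc : c = 0
        · subst hc
          exact gen_classI hGP htS heS α h0
            (fun x v hx hxv => hf3_p hα h0 x v hx hxv)
        · have hK0 : (0 : Fin n) ∉ Finset.univ.filter (fun x => α x = none) := by
            simp [h0]
          have heq : α = pmul (pmul
              (pid (· ∉ Finset.univ.filter (fun x => α x = none))) (gam hn))
              (pe (Equiv.swap (lone hn) c)) := by
            funext x
            by_cases hx0 : x = 0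
            · subst hx0
              rw [h0]
              simp only [pmul, pid]
              rw [if_pos (by simp [h0])]
              simp only [Option.bind_some]
              unfold gam
              rw [if_pos rfl]
              simp only [Option.bind_some, pe, Equiv.swap_apply_left]
            · cases hax : α x with
              | none =>
                  simp only [pmul, pid]
                  rw [if_neg (by simp [hax])]
                  simp
              | some v =>
                  have hv : v = 0 := p_0c hα h0 hc x v hx0 hax
                  subst hv
                  simp only [pmul, pid]
                  rw [if_pos (by simp [hax])]
                  simp only [Option.bind_some]
                  unfold gam
                  rw [if_neg hx0]
                  simp only [Option.bind_some, pe]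
                  rw [swap_zero lone_ne_zero hc]
          rw [heq]
          exact genFrom.mul _ _
            (genFrom.mul _ _ (gen_pid hGP heS _ hK0) (genFrom.mem _ hgamS))
            (hGP _ (swap_zero lone_ne_zero hc))
    | none =>
        by_cases hz : ∃ x, α x = some 0
        · obtain ⟨x0, hx0v⟩ := hz
          have hz' : ∃ x, x ≠ 0 ∧ α x = some 0 :=
            ⟨x0, fun h => by rw [h, h0] at hx0v; exact absurd hx0v (by simp), hx0v⟩
          obtain ⟨ww, hww0, hwwnv⟩ := exists_nonvalue hn hz'
          set σ := Equiv.swap (lone hn) ww with hσdef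
          have hσ0 : σ 0 = 0 := swap_zero lone_ne_zero hww0
          set β : Fin n → Option (Fin n) := fun x => if x = 0 then some 0 else
            (α x).map (fun v => if v = 0 then lone hn else σ v) with hβ
          have hβ0 : β 0 = some 0 := by rw [hβ]; simp
          have hβl : ∀ x v, x ≠ 0 → β x = some v → v ≠ 0 := by
            intro x v hx hxv
            rw [hβ] at hxv
            simp only [if_neg hx] at hxv
            cases hax : α x with
            | none => rw [hax] at hxv; exact absurd hxv (by simp)
            | some w =>
                rw [hax] at hxv
                simp only [Option.map_some] at hxv
                have hv := Option.some_injective _ hxv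
                rw [← hv]
                by_cases hw : w = 0
                · simp only [if_pos hw]; exact lone_ne_zero
                · simp only [if_neg hw]
                  exact fun h => hw (σ.injective (h.trans hσ0.symm))
          have heq : α = pmul (pmul β (del hn)) (pe σ) := by
            funext x
            by_cases hx0 : x = 0
            · subst hx0
              rw [h0]
              simp only [pmul, hβ0, Option.bind_some]
              unfold del
              rw [if_pos rfl]
              simp
            · cases hax : α x with
              | none =>
                  have hβx : β x = none := by rw [hβ]; simp [hx0, hax]
                  simp [pmul, hβx]
              | some v =>
                  by_cases hv0 : v = 0
                  · subst hv0
                    have hβx : β x = some (lone hn) := by rw [hβ]; simp [hx0, hax]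
                    simp only [pmul, hβx, Option.bind_some, hdellone,
                      Option.bind_some, pe, hσ0]
                  · have hβx : β x = some (σ v) := by rw [hβ]; simp [hx0, hax, hv0]
                    simp only [pmul, hβx, Option.bind_some]
                    unfold del
                    have hσv0 : σ v ≠ 0 := fun h => hv0 (σ.injective (h.trans hσ0.symm))
                    have hσvl : σ v ≠ lone hn := by
                      intro h
                      have hvw : v = ww :=
                        σ.injective (h.trans (Equiv.swap_apply_right _ _).symm)
                      exact hwwnv x hx0 (hvw ▸ hax)
                    rw [if_neg hσv0, if_neg hσvl]
                    simp only [Option.bind_some, pe]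
                    rw [hσdef, Equiv.swap_apply_self]
          rw [heq]
          exact genFrom.mul _ _
            (genFrom.mul _ _ (gen_classI hGP htS heS β hβ0 hβl) (genFrom.mem _ hdelS))
            (hGP σ hσ0)
        · push_neg at hz
          set β : Fin n → Option (Fin n) := fun x => if x = 0 then some 0 else α x
            with hβ
          have heq : α = pmul dmap β := by
            funext x
            by_cases hx0 : x = 0
            · subst hx0; rw [h0]; simp [pmul, dmap]
            · simp [pmul, dmap, hx0, hβ]
          rw [heq]
          refine genFrom.mul _ _ (genFrom.mem _ hdS)
            (gen_classI hGP htS heS β (by simp [hβ]) ?_)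
          intro x v hx hxv
          rw [hβ] at hxv
          simp only [if_neg hx] at hxv
          exact fun hv => hz x (hv ▸ hxv)
  refine ⟨S, by rw [hS]; exact fin_seven _ _ _ _ _ _ _, ?_, hsub, ?_⟩
  · rw [hS]
    refine ncard_seven hgne ?_ ?_ ?_ ?_ ?_ ?_ ?_ ?_ ?_ ?_ ?_ ?_ ?_ ?_ ?_ ?_ ?_ ?_ ?_ ?_
    · rw [hg1σ]; exact pe_pinj_ne tmap_not_pinj
    · rw [hg1σ]; exact pe_tot_ne hemlast
    · rw [hg1σ]; exact pe_pinj_ne gam_not_pinj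
    · rw [hg1σ]; exact pe_tot_ne hdm0
    · rw [hg1σ]; exact pe_tot_ne hdel0
    · rw [hg2σ]; exact pe_pinj_ne tmap_not_pinj
    · rw [hg2σ]; exact pe_tot_ne hemlast
    · rw [hg2σ]; exact pe_pinj_ne gam_not_pinj
    · rw [hg2σ]; exact pe_tot_ne hdm0
    · rw [hg2σ]; exact pe_tot_ne hdel0
    · refine fne (llast hn) ?_
      rw [hemlast, htlast]
      simp
    · refine fne 0 ?_
      rw [htm0, hgam0]
      exact fun h => lone_ne_zero (hn := hn) (Option.some_injective _ h).symm
    · refine fne 0 ?_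
      rw [htm0, hdm0]
      simp
    · refine fne 0 ?_
      rw [htm0, hdel0]
      simp
    · refine fne 0 ?_
      rw [hem0, hgam0]
      exact fun h => lone_ne_zero (hn := hn) (Option.some_injective _ h).symm
    · refine fne 0 ?_
      rw [hem0, hdm0]
      simp
    · refine fne 0 ?_
      rw [hem0, hdel0]
      simp
    · refine fne 0 ?_
      rw [hgam0, hdm0]
      simp
    · refine fne 0 ?_
      rw [hgam0, hdel0]
      simp
    · refine fne (lone hn) ?_
      rw [hdmlone, hdellone]
      exact fun h => lone_ne_zero (hn := hn) (Option.some_injective _ h)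
  · ext α
    constructor
    · intro h
      exact gen_sub hsub (IsPsEnd.toPEnd isPsEnd_id)
        (fun a b ha hb => IsPEnd.pmul ha hb) α h
    · intro hα
      exact hgenM α hα

end Star
namespace Star

variable {n : ℕ} [NeZero n]

lemma wmap_not_pinj {hn : 4 ≤ n} : ¬ PInj (wmap hn) := by
  intro h
  have h1 : wmap hn 0 = some 0 := by
    unfold wmap; rw [if_neg (fun hc => lone_ne_zero (hn := hn) hc.symm)]
  have h2 : wmap hn (lone hn) = some 0 := by unfold wmap; rw [if_pos rfl]
  exact lone_ne_zero (hn := hn) (h _ _ _ h2 h1)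

lemma upper_Pw (hn : 4 ≤ n) : ∃ S : Set (Fin n → Option (Fin n)),
    S.Finite ∧ S.ncard = 7 ∧ S ⊆ PwEndS n ∧ {a | genFrom S a} = PwEndS n := by
  classical
  obtain ⟨g1, g2, hgne, ⟨σ1, hσ1, hg1σ⟩, ⟨σ2, hσ2, hg2σ⟩, hgenU⟩ := exists_units hn
  set S : Set (Fin n → Option (Fin n)) :=
    {g1, g2, tmap hn, emap hn, gam hn, dmap, wmap hn} with hS
  have hg1S : g1 ∈ S := by rw [hS]; left; rfl
  have hg2S : g2 ∈ S := by rw [hS]; right; left; rfl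
  have htS : tmap hn ∈ S := by rw [hS]; right; right; left; rfl
  have heS : emap hn ∈ S := by rw [hS]; right; right; right; left; rfl
  have hgamS : gam hn ∈ S := by rw [hS]; right; right; right; right; left; rfl
  have hdS : dmap ∈ S := by rw [hS]; right; right; right; right; right; left; rfl
  have hwS : wmap hn ∈ S := by rw [hS]; right; right; right; right; right; right; rfl
  have hGP := hgenU S hg1S hg2S
  have hemlast : emap hn (llast hn) = none := by
    unfold emap pid; rw [if_neg (by simp)]
  have hdm0 : dmap (0 : Fin n) = none := by unfold dmap; rw [if_pos rfl]
  have htm0 : tmap hn 0 = some 0 := by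
    unfold tmap; rw [if_neg (fun h => llast_ne_zero (hn := hn) h.symm)]
  have hem0 : emap hn 0 = some 0 := by
    unfold emap pid; rw [if_pos (fun h => llast_ne_zero (hn := hn) h.symm)]
  have hgam0 : gam hn 0 = some (lone hn) := by unfold gam; rw [if_pos rfl]
  have htlast : tmap hn (llast hn) = some (lone hn) := by unfold tmap; rw [if_pos rfl]
  have hwm0 : wmap hn 0 = some 0 := by
    unfold wmap; rw [if_neg (fun hc => lone_ne_zero (hn := hn) hc.symm)]
  have hwmlone : wmap hn (lone hn) = some 0 := by unfold wmap; rw [if_pos rfl]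
  have htlone : tmap hn (lone hn) = some (lone hn) := by
    unfold tmap; rw [if_neg (fun hc => llast_ne_lone (hn := hn) hc.symm)]
  have hwmllast : wmap hn (llast hn) = some (llast hn) := by
    unfold wmap; rw [if_neg (fun hc => llast_ne_lone (hn := hn) hc)]
  have hsub : S ⊆ PwEndS n := by
    intro s hs
    rw [hS] at hs
    simp only [Set.mem_insert_iff, Set.mem_singleton_iff] at hs
    rcases hs with rfl | rfl | rfl | rfl | rfl | rfl | rfl
    · rw [hg1σ]; exact IsPEnd.toPwEnd (IsPsEnd.toPEnd (pe_mem_psEnd hσ1))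
    · rw [hg2σ]; exact IsPEnd.toPwEnd (IsPsEnd.toPEnd (pe_mem_psEnd hσ2))
    · exact IsPEnd.toPwEnd (IsPsEnd.toPEnd tmap_ps)
    · exact IsPEnd.toPwEnd (IsPsEnd.toPEnd emap_ps)
    · exact IsPEnd.toPwEnd (IsPsEnd.toPEnd gam_ps)
    · exact IsPEnd.toPwEnd (IsPsEnd.toPEnd dmap_ps)
    · exact wmap_pw
  have hPwI : ∀ α : Fin n → Option (Fin n), α 0 = some 0 → genFrom S α := by
    intro α h0
    by_cases hz : ∃ x, x ≠ 0 ∧ α x = some 0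
    · obtain ⟨ww, hww0, hwwnv⟩ := exists_nonvalue hn hz
      set σ := Equiv.swap (lone hn) ww with hσdef
      have hσ0 : σ 0 = 0 := swap_zero lone_ne_zero hww0
      set β : Fin n → Option (Fin n) := fun x => if x = 0 then some 0 else
        (α x).map (fun v => if v = 0 then lone hn else σ v) with hβ
      have hβ0 : β 0 = some 0 := by rw [hβ]; simp
      have hβl : ∀ x v, x ≠ 0 → β x = some v → v ≠ 0 := by
        intro x v hx hxv
        rw [hβ] at hxv
        simp only [if_neg hx] at hxv
        cases hax : α x with
        | none => rw [hax] at hxv; exact absurd hxv (by simp)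
        | some w =>
            rw [hax] at hxv
            simp only [Option.map_some] at hxv
            have hv := Option.some_injective _ hxv
            rw [← hv]
            by_cases hw : w = 0
            · simp only [if_pos hw]; exact lone_ne_zero
            · simp only [if_neg hw]
              exact fun h => hw (σ.injective (h.trans hσ0.symm))
      have heq : α = pmul (pmul β (wmap hn)) (pe σ) := by
        funext x
        by_cases hx0 : x = 0
        · subst hx0
          rw [h0]
          simp only [pmul, hβ0, Option.bind_some, hwm0, pe, hσ0]
        · cases hax : α x with
          | none =>
              have hβx : β x = none := by rw [hβ]; simp [hx0, hax]
              simp [pmul, hβx]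
          | some v =>
              by_cases hv0 : v = 0
              · subst hv0
                have hβx : β x = some (lone hn) := by rw [hβ]; simp [hx0, hax]
                simp only [pmul, hβx, Option.bind_some, hwmlone, pe, hσ0]
              · have hβx : β x = some (σ v) := by rw [hβ]; simp [hx0, hax, hv0]
                simp only [pmul, hβx, Option.bind_some]
                unfold wmap
                have hσvl : σ v ≠ lone hn := by
                  intro h
                  have hvw : v = ww :=
                    σ.injective (h.trans (Equiv.swap_apply_right _ _).symm)
                  exact hwwnv x hx0 (hvw ▸ hax)
                rw [if_neg hσvl]
                simp only [Option.bind_some, pe]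
                rw [hσdef, Equiv.swap_apply_self]
      rw [heq]
      exact genFrom.mul _ _
        (genFrom.mul _ _ (gen_classI hGP htS heS β hβ0 hβl) (genFrom.mem _ hwS))
        (hGP σ hσ0)
    · push_neg at hz
      exact gen_classI hGP htS heS α h0
        (fun x v hx hxv hv => hz x hx (hv ▸ hxv))
  have hgenM : ∀ α, IsPwEnd α → genFrom S α := by
    intro α hα
    cases h0 : α 0 with
    | some c =>
        by_cases hc : c = 0
        · subst hc; exact hPwI α h0
        · set m : Fin n → Option (Fin n) := fun x => if x = 0 then some 0 else
            (α x).bind (fun v => if v = 0 then some (ltwo hn) else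
              if v = c then some (0 : Fin n) else none) with hm
          have hm0 : m 0 = some 0 := by rw [hm]; simp
          have heq : α = pmul (pmul m (gam hn)) (pe (Equiv.swap (lone hn) c)) := by
            funext x
            by_cases hx0 : x = 0
            · subst hx0
              rw [h0]
              simp only [pmul, hm0, Option.bind_some]
              unfold gam
              rw [if_pos rfl]
              simp only [Option.bind_some, pe, Equiv.swap_apply_left]
            · cases hax : α x with
              | none =>
                  have hmx : m x = none := by rw [hm]; simp [hx0, hax]
                  simp [pmul, hmx]
              | some v =>
                  rcases hf2_pw hα h0 hc x v hax with hv | hv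
                  · subst hv
                    have hmx : m x = some (ltwo hn) := by rw [hm]; simp [hx0, hax]
                    simp only [pmul, hmx, Option.bind_some]
                    unfold gam
                    rw [if_neg ltwo_ne_zero]
                    simp only [Option.bind_some, pe]
                    rw [swap_zero lone_ne_zero hc]
                  · subst hv
                    have hmx : m x = some 0 := by rw [hm]; simp [hx0, hax, hc]
                    simp only [pmul, hmx, Option.bind_some]
                    unfold gam
                    rw [if_pos rfl]
                    simp only [Option.bind_some, pe, Equiv.swap_apply_left]
          rw [heq]
          exact genFrom.mul _ _
            (genFrom.mul _ _ (hPwI m hm0) (genFrom.mem _ hgamS))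
            (hGP _ (swap_zero lone_ne_zero hc))
    | none =>
        set β : Fin n → Option (Fin n) := fun x => if x = 0 then some 0 else α x
          with hβ
        have heq : α = pmul dmap β := by
          funext x
          by_cases hx0 : x = 0
          · subst hx0; rw [h0]; simp [pmul, dmap]
          · simp [pmul, dmap, hx0, hβ]
        rw [heq]
        exact genFrom.mul _ _ (genFrom.mem _ hdS) (hPwI β (by simp [hβ]))
  refine ⟨S, by rw [hS]; exact fin_seven _ _ _ _ _ _ _, ?_, hsub, ?_⟩
  · rw [hS]
    refine ncard_seven hgne ?_ ?_ ?_ ?_ ?_ ?_ ?_ ?_ ?_ ?_ ?_ ?_ ?_ ?_ ?_ ?_ ?_ ?_ ?_ ?_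
    · rw [hg1σ]; exact pe_pinj_ne tmap_not_pinj
    · rw [hg1σ]; exact pe_tot_ne hemlast
    · rw [hg1σ]; exact pe_pinj_ne gam_not_pinj
    · rw [hg1σ]; exact pe_tot_ne hdm0
    · rw [hg1σ]; exact pe_pinj_ne (wmap_not_pinj (hn := hn))
    · rw [hg2σ]; exact pe_pinj_ne tmap_not_pinj
    · rw [hg2σ]; exact pe_tot_ne hemlast
    · rw [hg2σ]; exact pe_pinj_ne gam_not_pinj
    · rw [hg2σ]; exact pe_tot_ne hdm0
    · rw [hg2σ]; exact pe_pinj_ne (wmap_not_pinj (hn := hn))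
    · refine fne (llast hn) ?_
      rw [hemlast, htlast]
      simp
    · refine fne 0 ?_
      rw [htm0, hgam0]
      exact fun h => lone_ne_zero (hn := hn) (Option.some_injective _ h).symm
    · refine fne 0 ?_
      rw [htm0, hdm0]
      simp
    · refine fne (lone hn) ?_
      rw [htlone, hwmlone]
      exact fun h => lone_ne_zero (hn := hn) (Option.some_injective _ h)
    · refine fne 0 ?_
      rw [hem0, hgam0]
      exact fun h => lone_ne_zero (hn := hn) (Option.some_injective _ h).symm
    · refine fne 0 ?_
      rw [hem0, hdm0]
      simp
    · refine fne (llast hn) ?_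
      rw [hemlast, hwmllast]
      simp
    · refine fne 0 ?_
      rw [hgam0, hdm0]
      simp
    · refine fne 0 ?_
      rw [hgam0, hwm0]
      exact fun h => lone_ne_zero (hn := hn) (Option.some_injective _ h)
    · refine fne 0 ?_
      rw [hdm0, hwm0]
      simp
  · ext α
    constructor
    · intro h
      exact gen_sub hsub (IsPEnd.toPwEnd (IsPsEnd.toPEnd isPsEnd_id))
        (fun a b ha hb => IsPwEnd.pmul ha hb) α h
    · intro hα
      exact hgenM α hα

end Star
namespace Star

variable {n : ℕ} [NeZero n]

lemma upper_I (hn : 4 ≤ n) : ∃ S : Set (Fin n → Option (Fin n)),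
    S.Finite ∧ S.ncard = 6 ∧ S ⊆ IEndS n ∧ {a | genFrom S a} = IEndS n := by
  classical
  obtain ⟨g1, g2, hgne, ⟨σ1, hσ1, hg1σ⟩, ⟨σ2, hσ2, hg2σ⟩, hgenU⟩ := exists_units hn
  set S : Set (Fin n → Option (Fin n)) :=
    {g1, g2, emap hn, dmap, gam' hn, del hn} with hS
  have hg1S : g1 ∈ S := by rw [hS]; left; rfl
  have hg2S : g2 ∈ S := by rw [hS]; right; left; rfl
  have heS : emap hn ∈ S := by rw [hS]; right; right; left; rfl
  have hdS : dmap ∈ S := by rw [hS]; right; right; right; left; rfl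
  have hgam'S : gam' hn ∈ S := by rw [hS]; right; right; right; right; left; rfl
  have hdelS : del hn ∈ S := by rw [hS]; right; right; right; right; right; rfl
  have hGP := hgenU S hg1S hg2S
  have hemlast : emap hn (llast hn) = none := by
    unfold emap pid; rw [if_neg (by simp)]
  have hdm0 : dmap (0 : Fin n) = none := by unfold dmap; rw [if_pos rfl]
  have hem0 : emap hn 0 = some 0 := by
    unfold emap pid; rw [if_pos (fun h => llast_ne_zero (hn := hn) h.symm)]
  have hgam'0 : gam' hn 0 = some (lone hn) := by unfold gam'; rw [if_pos rfl]
  have hgam'ltwo : gam' hn (ltwo hn) = none := by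
    unfold gam'
    rw [if_neg ltwo_ne_zero, if_neg (fun h => lone_ne_ltwo (hn := hn) h.symm)]
  have hdel0 : del hn 0 = none := by unfold del; rw [if_pos rfl]
  have hdellone : del hn (lone hn) = some 0 := by
    unfold del; rw [if_neg lone_ne_zero, if_pos rfl]
  have hgam'lone : gam' hn (lone hn) = some 0 := by
    unfold gam'; rw [if_neg lone_ne_zero, if_pos rfl]
  have hdmlone : dmap (lone hn) = some (lone hn) := by
    unfold dmap; rw [if_neg lone_ne_zero]
  have hemlone : emap hn (lone hn) = some (lone hn) := by
    unfold emap pid; rw [if_pos (fun h => llast_ne_lone (hn := hn) h.symm)]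
  have hemltwo : emap hn (ltwo hn) = some (ltwo hn) := by
    unfold emap pid; rw [if_pos (ltwo_ne_llast (hn := hn))]
  have hsub : S ⊆ IEndS n := by
    intro s hs
    rw [hS] at hs
    simp only [Set.mem_insert_iff, Set.mem_singleton_iff] at hs
    rcases hs with rfl | rfl | rfl | rfl | rfl | rfl
    · rw [hg1σ]; exact ⟨pe_pinj σ1, IsPsEnd.toPEnd (pe_mem_psEnd hσ1)⟩
    · rw [hg2σ]; exact ⟨pe_pinj σ2, IsPsEnd.toPEnd (pe_mem_psEnd hσ2)⟩
    · exact ⟨emap_pinj, IsPsEnd.toPEnd emap_ps⟩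
    · exact ⟨dmap_pinj, IsPsEnd.toPEnd dmap_ps⟩
    · exact ⟨gam'_pinj, IsPsEnd.toPEnd gam'_ps⟩
    · exact ⟨del_pinj, del_p⟩
  have hgenM : ∀ α : Fin n → Option (Fin n), PInj α → IsPEnd α → genFrom S α := by
    intro α hαi hαp
    cases h0 : α 0 with
    | some c =>
        by_cases hc : c = 0
        · subst hc
          exact gen_pinj hGP heS α hαi h0
        · by_cases hdomx : ∃ x, x ≠ 0 ∧ α x ≠ none
          · obtain ⟨i0, hi0ne, hi0def⟩ := hdomx
            obtain ⟨v0, hv0⟩ : ∃ v, α i0 = some v := by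
              cases h : α i0 with
              | none => exact absurd h hi0def
              | some v => exact ⟨v, rfl⟩
            have hv00 : v0 = 0 := p_0c hαp h0 hc i0 v0 hi0ne hv0
            subst hv00
            have huniq : ∀ y, y ≠ 0 → y ≠ i0 → α y = none := by
              intro y hy0 hyi
              cases hay : α y with
              | none => rfl
              | some w =>
                  have hw := p_0c hαp h0 hc y w hy0 hay
                  subst hw
                  exact absurd (hαi y i0 0 hay hv0) hyi
            set τ := Equiv.swap i0 (lone hn) with hτdef
            have hτ0 : τ 0 = 0 := swap_zero hi0ne lone_ne_zero
            have hτi0 : τ i0 = lone hn := Equiv.swap_apply_left _ _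
            have heq : α = pmul (pmul (pe τ) (gam' hn))
                (pe (Equiv.swap (lone hn) c)) := by
              funext x
              by_cases hx0 : x = 0
              · subst hx0
                rw [h0]
                simp only [pmul, pe, Option.bind_some, hτ0, hgam'0,
                  Equiv.swap_apply_left]
              · by_cases hxi : x = i0
                · subst hxi
                  rw [hv0]
                  simp only [pmul, pe, Option.bind_some, hτi0, hdellone]
                  rw [hgam'lone]
                  simp only [Option.bind_some, pe]
                  rw [swap_zero lone_ne_zero hc]
                · rw [huniq x hx0 hxi]
                  simp only [pmul, pe, Option.bind_some]
                  unfold gam'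
                  have h1 : τ x ≠ 0 := fun h => hx0 (τ.injective (h.trans hτ0.symm))
                  have h2 : τ x ≠ lone hn := fun h => hxi (τ.injective (h.trans hτi0.symm))
                  rw [if_neg h1, if_neg h2]
                  simp
            rw [heq]
            exact genFrom.mul _ _
              (genFrom.mul _ _ (hGP τ hτ0) (genFrom.mem _ hgam'S))
              (hGP _ (swap_zero lone_ne_zero hc))
          · push_neg at hdomx
            have hdomx' : ∀ x, x ≠ 0 → α x = none := hdomx
            set K := Finset.univ.filter (fun x : Fin n => x ≠ 0) with hK
            have hK0 : (0 : Fin n) ∉ K := by simp [hK]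
            have heq : α = pmul (pmul (pid (· ∉ K)) (gam' hn))
                (pe (Equiv.swap (lone hn) c)) := by
              funext x
              by_cases hx0 : x = 0
              · subst hx0
                rw [h0]
                simp only [pmul, pid]
                rw [if_pos (by simp [hK])]
                simp only [Option.bind_some, hgam'0, Option.bind_some, pe,
                  Equiv.swap_apply_left]
              · rw [hdomx' x hx0]
                simp only [pmul, pid]
                rw [if_neg (by simp [hK, hx0])]
                simp
            rw [heq]
            exact genFrom.mul _ _
              (genFrom.mul _ _ (gen_pid hGP heS K hK0) (genFrom.mem _ hgam'S))
              (hGP _ (swap_zero lone_ne_zero hc))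
    | none =>
        by_cases hz : ∃ x, α x = some 0
        · obtain ⟨x0, hx0v⟩ := hz
          have hx00 : x0 ≠ 0 := fun h => by
            rw [h, h0] at hx0v; exact absurd hx0v (by simp)
          set g' := Equiv.swap x0 (lone hn) with hg'def
          have hg'0 : g' 0 = 0 := swap_zero hx00 lone_ne_zero
          have hg'x0 : g' x0 = lone hn := Equiv.swap_apply_left _ _
          set q : Fin n → Option (Fin n) := fun y => if y = 0 then some 0 else
            (α (g' y)).bind (fun v => if v = 0 then none else some v) with hq
          have hq0 : q 0 = some 0 := by rw [hq]; simp
          have hqval : ∀ y, y ≠ 0 → q y =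
              (α (g' y)).bind (fun v => if v = 0 then none else some v) := by
            intro y hy
            rw [hq]
            simp only [if_neg hy]
          have hqinj : PInj q := by
            intro y y' w hy hy'
            by_cases hy0 : y = 0 <;> by_cases hy'0 : y' = 0
            · exact hy0.trans hy'0.symm
            · exfalso
              subst hy0
              rw [hq0] at hy
              have hw : w = 0 := (Option.some_injective _ hy).symm
              subst hw
              rw [hqval y' hy'0] at hy'
              cases hay : α (g' y') with
              | none => rw [hay] at hy'; exact absurd hy' (by simp)
              | some v =>
                  rw [hay] at hy'
                  simp only [Option.bind_some] at hy'
                  by_cases hv : v = 0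
                  · rw [if_pos hv] at hy'; exact absurd hy' (by simp)
                  · rw [if_neg hv] at hy'; exact hv (Option.some_injective _ hy')
            · exfalso
              subst hy'0
              rw [hq0] at hy'
              have hw : w = 0 := (Option.some_injective _ hy').symm
              subst hw
              rw [hqval y hy0] at hy
              cases hay : α (g' y) with
              | none => rw [hay] at hy; exact absurd hy (by simp)
              | some v =>
                  rw [hay] at hy
                  simp only [Option.bind_some] at hy
                  by_cases hv : v = 0
                  · rw [if_pos hv] at hy; exact absurd hy (by simp)
                  · rw [if_neg hv] at hy; exact hv (Option.some_injective _ hy)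
            · rw [hqval y hy0] at hy
              rw [hqval y' hy'0] at hy'
              have hval : ∀ z w', (α (g' z)).bind
                  (fun v => if v = 0 then none else some v) = some w' →
                  α (g' z) = some w' := by
                intro z w' hzz
                cases haz : α (g' z) with
                | none => rw [haz] at hzz; exact absurd hzz (by simp)
                | some v =>
                    rw [haz] at hzz
                    simp only [Option.bind_some] at hzz
                    by_cases hv : v = 0
                    · rw [if_pos hv] at hzz; exact absurd hzz (by simp)
                    · rw [if_neg hv] at hzz
                      exact hzz
              have h1 := hval y w hy
              have h2 := hval y' w hy'
              exact g'.injective (hαi (g' y) (g' y') w h1 h2)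
          obtain ⟨σh, hσh0, hσhval⟩ := ext_perm hqinj hq0
          set K := Finset.univ.filter (fun x => α x = none ∧ x ≠ 0) with hK
          have hK0 : (0 : Fin n) ∉ K := by simp [hK]
          have heq : α = pmul (pmul (pmul
              (fun x => if x = 0 ∨ x ∈ K then none else some x) (pe g')) (del hn))
              (pe σh) := by
            funext x
            by_cases hx0 : x = 0
            · subst hx0; rw [h0]; simp [pmul]
            · cases hax : α x with
              | none =>
                  have hxK : x = 0 ∨ x ∈ K := Or.inr (by simp [hK, hax, hx0])
                  simp only [pmul]
                  rw [if_pos hxK]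
                  simp
              | some v =>
                  have hxK : ¬(x = 0 ∨ x ∈ K) := by simp [hK, hax, hx0]
                  by_cases hxx0 : x = x0
                  · subst hxx0
                    have hv : v = 0 := Option.some_injective _ (hax.symm.trans hx0v)
                    subst hv
                    simp only [pmul]
                    rw [if_neg hxK]
                    simp only [Option.bind_some, pe, hg'x0, hdellone,
                      Option.bind_some, hσh0]
                  · have hv0 : v ≠ 0 := fun hv => hxx0 (hαi x x0 0 (hv ▸ hax) hx0v)
                    have hg'x0' : g' x ≠ 0 := fun h => hx0 (g'.injective (h.trans hg'0.symm))
                    have hg'xl : g' x ≠ lone hn :=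
                      fun h => hxx0 (g'.injective (h.trans hg'x0.symm))
                    have hgg : g' (g' x) = x := by
                      rw [hg'def]; exact Equiv.swap_apply_self _ _ _
                    have hqgx : q (g' x) = some v := by
                      rw [hqval (g' x) hg'x0', hgg, hax]
                      simp only [Option.bind_some, if_neg hv0]
                    simp only [pmul]
                    rw [if_neg hxK]
                    simp only [Option.bind_some, pe]
                    unfold del
                    rw [if_neg hg'x0', if_neg hg'xl]
                    simp only [Option.bind_some, pe]
                    rw [hσhval (g' x) v hqgx]
          rw [heq]
          exact genFrom.mul _ _ (genFrom.mul _ _ (genFrom.mul _ _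
            (gen_pid0 hGP heS hdS K hK0) (hGP g' hg'0)) (genFrom.mem _ hdelS))
            (hGP σh hσh0)
        · push_neg at hz
          set β : Fin n → Option (Fin n) := fun x => if x = 0 then some 0 else α x
            with hβ
          have hβinj : PInj β := by
            intro x y w hx hy
            simp only [hβ] at hx hy
            by_cases hx0 : x = 0 <;> by_cases hy0 : y = 0
            · exact hx0.trans hy0.symm
            · exfalso
              rw [if_pos hx0] at hx
              have hw : w = 0 := (Option.some_injective _ hx).symm
              subst hw
              rw [if_neg hy0] at hy
              exact hz y hy
            · exfalso
              rw [if_pos hy0] at hy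
              have hw : w = 0 := (Option.some_injective _ hy).symm
              subst hw
              rw [if_neg hx0] at hx
              exact hz x hx
            · rw [if_neg hx0] at hx
              rw [if_neg hy0] at hy
              exact hαi x y w hx hy
          have heq : α = pmul dmap β := by
            funext x
            by_cases hx0 : x = 0
            · subst hx0; rw [h0]; simp [pmul, dmap]
            · simp [pmul, dmap, hx0, hβ]
          rw [heq]
          exact genFrom.mul _ _ (genFrom.mem _ hdS)
            (gen_pinj hGP heS β hβinj (by simp [hβ]))
  refine ⟨S, by rw [hS]; exact fin_six _ _ _ _ _ _, ?_, hsub, ?_⟩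
  · rw [hS]
    refine ncard_six hgne ?_ ?_ ?_ ?_ ?_ ?_ ?_ ?_ ?_ ?_ ?_ ?_ ?_ ?_
    · rw [hg1σ]; exact pe_tot_ne hemlast
    · rw [hg1σ]; exact pe_tot_ne hdm0
    · rw [hg1σ]; exact pe_tot_ne hgam'ltwo
    · rw [hg1σ]; exact pe_tot_ne hdel0
    · rw [hg2σ]; exact pe_tot_ne hemlast
    · rw [hg2σ]; exact pe_tot_ne hdm0
    · rw [hg2σ]; exact pe_tot_ne hgam'ltwo
    · rw [hg2σ]; exact pe_tot_ne hdel0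
    · refine fne 0 ?_
      rw [hem0, hdm0]
      simp
    · refine fne (ltwo hn) ?_
      rw [hemltwo, hgam'ltwo]
      simp
    · refine fne (lone hn) ?_
      rw [hemlone, hdellone]
      exact fun h => lone_ne_zero (hn := hn) (Option.some_injective _ h)
    · refine fne 0 ?_
      rw [hdm0, hgam'0]
      simp
    · refine fne (lone hn) ?_
      rw [hdmlone, hdellone]
      exact fun h => lone_ne_zero (hn := hn) (Option.some_injective _ h)
    · refine fne 0 ?_
      rw [hgam'0, hdel0]
      simp
  · ext α
    constructor
    · intro h
      exact gen_sub hsub ⟨pinj_id, IsPsEnd.toPEnd isPsEnd_id⟩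
        (fun a b ha hb => ⟨PInj.pmul ha.1 hb.1, IsPEnd.pmul ha.2 hb.2⟩) α h
    · intro hα
      exact hgenM α hα.1 hα.2

end Star
namespace Star

variable {n : ℕ} [NeZero n]

lemma two_units (hn : 4 ≤ n) {S M : Set (Fin n → Option (Fin n))}
    (hgen : {a | genFrom S a} = M)
    (h12M : pe (Equiv.swap (lone hn) (ltwo hn)) ∈ M)
    (h13M : pe (Equiv.swap (lone hn) (lthree hn)) ∈ M) :
    ∃ u1 u2, u1 ∈ S ∧ u2 ∈ S ∧ u1 ≠ u2 ∧ (Tot u1 ∧ PInj u1) ∧ (Tot u2 ∧ PInj u2) := by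
  have hg12 : genFrom S (pe (Equiv.swap (lone hn) (ltwo hn))) := by
    rw [show genFrom S (pe (Equiv.swap (lone hn) (ltwo hn))) =
      (pe (Equiv.swap (lone hn) (ltwo hn)) ∈ {a | genFrom S a}) from rfl, hgen]
    exact h12M
  have hg13 : genFrom S (pe (Equiv.swap (lone hn) (lthree hn))) := by
    rw [show genFrom S (pe (Equiv.swap (lone hn) (lthree hn))) =
      (pe (Equiv.swap (lone hn) (lthree hn)) ∈ {a | genFrom S a}) from rfl, hgen]
    exact h13M
  have hg12U : genFrom (S ∩ US) (pe (Equiv.swap (lone hn) (ltwo hn))) :=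
    gen_units hg12 ⟨pe_tot _, pe_pinj _⟩
  have hg13U : genFrom (S ∩ US) (pe (Equiv.swap (lone hn) (lthree hn))) :=
    gen_units hg13 ⟨pe_tot _, pe_pinj _⟩
  by_cases hss : (S ∩ US).Subsingleton
  · exfalso
    rcases hss.eq_empty_or_singleton with he | ⟨g, hg⟩
    · rw [he] at hg12U
      have hid := gen_empty hg12U
      have := congrFun hid (lone hn)
      simp only [pe, idm, Option.some_inj, Equiv.swap_apply_left] at this
      exact lone_ne_ltwo (hn := hn) this.symm
    · rw [hg] at hg12U hg13U
      have hcomm := gen_comm_single hg12U hg13U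
      have heval := congrFun hcomm (lone hn)
      simp only [pmul, pe, Option.bind_some, Option.some_inj,
        Equiv.swap_apply_left] at heval
      rw [Equiv.swap_apply_of_ne_of_ne (fun h => lone_ne_ltwo (hn := hn) h.symm)
        (ltwo_ne_lthree (hn := hn)),
        Equiv.swap_apply_of_ne_of_ne (fun h => lone_ne_lthree (hn := hn) h.symm)
        (fun h => ltwo_ne_lthree (hn := hn) h.symm)] at heval
      exact ltwo_ne_lthree (hn := hn) heval
  · rw [Set.not_subsingleton_iff] at hss
    obtain ⟨u1, hu1, u2, hu2, hne⟩ := hss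
    exact ⟨u1, u2, hu1.1, hu2.1, hne, hu1.2, hu2.2⟩

lemma unit_zero (hn : 4 ≤ n) {u : Fin n → Option (Fin n)}
    (hHF2u : ∀ w : Fin n, u 0 = some w → w ≠ 0 → ∀ x v, u x = some v → v = 0 ∨ v = w)
    (htot : Tot u) (hinj : PInj u) : u 0 = some 0 := by
  have hv : ∀ x : Fin n, ∃ v, u x = some v := by
    intro x
    cases h : u x with
    | none => exact absurd h (htot x)
    | some v => exact ⟨v, rfl⟩
  cases h0 : u 0 with
  | none => exact absurd h0 (htot 0)
  | some w =>
      by_cases hw : w = 0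
      · subst hw; exact rfl
      · exfalso
        obtain ⟨vp, hvp⟩ := hv (lone hn)
        obtain ⟨vq, hvq⟩ := hv (ltwo hn)
        obtain ⟨vr, hvr⟩ := hv (lthree hn)
        have dpq : vp ≠ vq := fun h =>
          lone_ne_ltwo (hn := hn) (hinj _ _ vp hvp (by rw [h]; exact hvq))
        have dpr : vp ≠ vr := fun h =>
          lone_ne_lthree (hn := hn) (hinj _ _ vp hvp (by rw [h]; exact hvr))
        have dqr : vq ≠ vr := fun h =>
          ltwo_ne_lthree (hn := hn) (hinj _ _ vq hvq (by rw [h]; exact hvr))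
        have hvals := hHF2u w h0 hw
        have o1 := hvals _ _ hvp
        have o2 := hvals _ _ hvq
        have o3 := hvals _ _ hvr
        exact not_three_in_two (A := some 0) (B := some w)
          (o1.imp (fun h => by rw [h]) (fun h => by rw [h]))
          (o2.imp (fun h => by rw [h]) (fun h => by rw [h]))
          (o3.imp (fun h => by rw [h]) (fun h => by rw [h]))
          (fun h => dpq (Option.some_injective _ h))
          (fun h => dpr (Option.some_injective _ h))
          (fun h => dqr (Option.some_injective _ h))

-- units are in none of the classes
section UnitsNotIn

variable {u : Fin n → Option (Fin n)} (hu0 : u 0 = some 0) (htot : Tot u)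
  (hinj : PInj u)

include htot hinj in
lemma unit_notin_Ct : u ∉ Ct n := fun h => h.2.2.1 hinj

include hu0 htot hinj in
lemma unit_notin_Cw : u ∉ Cw n := by
  rintro ⟨_, hu0', i, hi, hui, _⟩
  exact hi (hinj i 0 0 hui hu0)

include htot in
lemma unit_notin_Ce : u ∉ Ce n := by
  rintro ⟨_, _, x, hx, _⟩
  exact htot x hx

include hu0 in
lemma unit_notin_Cd : u ∉ Cd n := by
  rintro ⟨h0, _⟩
  rw [hu0] at h0
  exact absurd h0 (by simp)

include hu0 in
lemma unit_notin_Cz : u ∉ Cz n := by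
  rintro ⟨h0, _⟩
  rw [hu0] at h0
  exact absurd h0 (by simp)

include hu0 in
lemma unit_notin_Cswap0 : u ∉ Cswap0 n := by
  rintro ⟨w, h0, hw⟩
  rw [hu0] at h0
  exact hw (Option.some_injective _ h0).symm

include hu0 hinj in
lemma unit_notin_Cswap : u ∉ Cswap n := by
  rintro (⟨w, h0, hw⟩ | ⟨x, hx, hx0⟩)
  · rw [hu0] at h0
    exact hw (Option.some_injective _ h0).symm
  · exact hx (hinj x 0 0 hx0 hu0)

include hu0 in
lemma unit_notin_Cgam : u ∉ Cgam n := by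
  rintro ⟨⟨w, h0, hw⟩, _⟩
  rw [hu0] at h0
  exact hw (Option.some_injective _ h0).symm

include hinj in
lemma unit_notin_Cseven : u ∉ Cseven n := by
  rintro ⟨w, h0, i, hi, hiw⟩
  exact hi (hinj i 0 w hiw h0)

include htot hinj in
lemma unit_notin_Ctp : u ∉ Ctp n := fun h => unit_notin_Ct htot hinj h.1

end UnitsNotIn

-- the identity is in none of the classes
lemma id_notin_Ct : idm (Fin n) ∉ Ct n := fun h => h.2.2.1 pinj_id
lemma id_notin_Ctp : idm (Fin n) ∉ Ctp n := fun h => id_notin_Ct h.1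
lemma id_notin_Cw : idm (Fin n) ∉ Cw n := by
  rintro ⟨_, _, i, hi, hii, _⟩
  exact hi (Option.some_injective _ hii)
lemma id_notin_Ce : idm (Fin n) ∉ Ce n := by
  rintro ⟨_, _, x, hx, _⟩
  exact absurd hx (by simp [idm])
lemma id_notin_Cd : idm (Fin n) ∉ Cd n := by
  rintro ⟨h0, _⟩
  exact absurd h0 (by simp [idm])
lemma id_notin_Cz : idm (Fin n) ∉ Cz n := by
  rintro ⟨h0, _⟩
  exact absurd h0 (by simp [idm])
lemma id_notin_Cswap0 : idm (Fin n) ∉ Cswap0 n := by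
  rintro ⟨w, h0, hw⟩
  exact hw (Option.some_injective _ h0).symm
lemma id_notin_Cswap : idm (Fin n) ∉ Cswap n := by
  rintro (⟨w, h0, hw⟩ | ⟨x, hx, hx0⟩)
  · exact hw (Option.some_injective _ h0).symm
  · exact hx (Option.some_injective _ hx0)
lemma id_notin_Cgam : idm (Fin n) ∉ Cgam n := by
  rintro ⟨⟨w, h0, hw⟩, _⟩
  exact hw (Option.some_injective _ h0).symm
lemma id_notin_Cseven : idm (Fin n) ∉ Cseven n := by
  rintro ⟨w, h0, i, hi, hiw⟩
  have h1 : (0 : Fin n) = w := Option.some_injective _ h0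
  have h2 : i = w := Option.some_injective _ hiw
  exact hi (h2.trans h1.symm)

end Star
namespace Star

variable {n : ℕ} [NeZero n] {hn : 4 ≤ n}

lemma tmap_Ct : tmap hn ∈ Ct n := by
  refine ⟨fun x => by unfold tmap; split <;> simp, ?_, tmap_not_pinj, llast hn,
    llast_ne_zero, ?_⟩
  · unfold tmap; rw [if_neg (fun h => llast_ne_zero (hn := hn) h.symm)]
  · intro x y v hx hy
    simp only [offp] at hx hy
    by_cases h1 : x = llast hn
    · rw [if_pos h1] at hx; exact absurd hx (by simp)
    rw [if_neg h1] at hx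
    by_cases h2 : y = llast hn
    · rw [if_pos h2] at hy; exact absurd hy (by simp)
    rw [if_neg h2] at hy
    unfold tmap at hx hy
    rw [if_neg h1] at hx
    rw [if_neg h2] at hy
    exact (Option.some_injective _ hx).trans (Option.some_injective _ hy).symm

lemma tmap_Ctp : tmap hn ∈ Ctp n := by
  refine ⟨tmap_Ct, ?_⟩
  intro x hx h
  unfold tmap at h
  by_cases h1 : x = llast hn
  · rw [if_pos h1] at h
    exact lone_ne_zero (hn := hn) (Option.some_injective _ h)
  · rw [if_neg h1] at h
    exact hx (Option.some_injective _ h)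

lemma emap_Ce : emap hn ∈ Ce n := by
  have h1 : emap hn 0 = some 0 := by
    unfold emap pid; rw [if_pos (fun h => llast_ne_zero (hn := hn) h.symm)]
  have h2 : emap hn (llast hn) = none := by
    unfold emap pid; rw [if_neg (by simp)]
  have h3 : ∀ y, emap hn y = none → y = llast hn := by
    intro y hy
    unfold emap pid at hy
    by_cases hc : y = llast hn
    · exact hc
    · rw [if_pos hc] at hy; exact absurd hy (by simp)
  exact ⟨h1, emap_pinj, llast hn, h2, h3⟩

lemma dmap_Cd : dmap ∈ Cd n := by
  refine ⟨by unfold dmap; rw [if_pos rfl], dmap_pinj, ?_, ?_⟩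
  · intro x hx
    unfold dmap; rw [if_neg hx]; simp
  · intro x v hxv
    unfold dmap at hxv
    by_cases h1 : x = 0
    · rw [if_pos h1] at hxv; exact absurd hxv (by simp)
    · rw [if_neg h1] at hxv
      rw [← Option.some_injective _ hxv]
      exact h1

lemma del_Cz : del hn ∈ Cz n := by
  refine ⟨by unfold del; rw [if_pos rfl], del_pinj, ?_, lone hn, ?_⟩
  · intro x hx
    unfold del
    rw [if_neg hx]
    split <;> simp
  · unfold del; rw [if_neg lone_ne_zero, if_pos rfl]

lemma gam_Cswap0 : gam hn ∈ Cswap0 n :=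
  ⟨lone hn, by unfold gam; rw [if_pos rfl], lone_ne_zero⟩

lemma gam_Cswap : gam hn ∈ Cswap n := Or.inl gam_Cswap0

lemma gam_Cgam : gam hn ∈ Cgam n :=
  ⟨gam_Cswap0, lone hn, lone_ne_zero,
    by unfold gam; rw [if_neg (lone_ne_zero (hn := hn))]⟩

lemma gam'_Cswap0 : gam' hn ∈ Cswap0 n :=
  ⟨lone hn, by unfold gam'; rw [if_pos rfl], lone_ne_zero⟩

lemma zmap_Cseven (hn' : 4 ≤ n) : zmap ∈ Cseven n :=
  ⟨0, rfl, lone hn', lone_ne_zero, rfl⟩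

lemma wmap_Cw : wmap hn ∈ Cw n := by
  refine ⟨fun x => by unfold wmap; split <;> simp, ?_, lone hn, lone_ne_zero,
    by unfold wmap; rw [if_pos rfl], ?_⟩
  · unfold wmap; rw [if_neg (fun h => lone_ne_zero (hn := hn) h.symm)]
  · intro x y v hx hy
    simp only [offp] at hx hy
    by_cases h1 : x = lone hn
    · rw [if_pos h1] at hx; exact absurd hx (by simp)
    rw [if_neg h1] at hx
    by_cases h2 : y = lone hn
    · rw [if_pos h2] at hy; exact absurd hy (by simp)
    rw [if_neg h2] at hy
    unfold wmap at hx hy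
    rw [if_neg h1] at hx
    rw [if_neg h2] at hy
    exact (Option.some_injective _ hx).trans (Option.some_injective _ hy).symm

section CtpClosed

variable (hn : 4 ≤ n)
variable {M : Set (Fin n → Option (Fin n))}
variable (hHF2 : ∀ a ∈ M, ∀ u : Fin n, a 0 = some u → u ≠ 0 →
  ∀ x v, a x = some v → v = 0 ∨ v = u)

include hn hHF2 in
lemma Ctp_closed : ∀ a b c, a ∈ Ctp n → b ∈ M → c ∈ M → a = pmul b c →
    b ∈ Ctp n ∨ c ∈ Ctp n := by
  intro a b c haC hbM hcM heq
  obtain ⟨⟨hatot, ha0, hani, i, hi0, hinj'⟩, hanz⟩ := haC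
  subst heq
  have hoff : ∀ x y v, x ≠ i → y ≠ i → pmul b c x = some v → pmul b c y = some v →
      x = y := by
    intro x y v hx hy h1 h2
    exact hinj' x y v (by simp [offp, hx, h1]) (by simp [offp, hy, h2])
  have hbtot : Tot b := fun y hy => hatot y (by simp [pmul, hy])
  obtain ⟨p, q, r, hpb, hqb, hrb, hpq, hpr, hqr⟩ := pick3 hn i
  have hdef : ∀ x, ∃ v, pmul b c x = some v := by
    intro x
    cases hax : pmul b c x with
    | none => exact absurd hax (hatot x)
    | some v => exact ⟨v, rfl⟩
  obtain ⟨vp, hvp⟩ := hdef p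
  obtain ⟨vq, hvq⟩ := hdef q
  obtain ⟨vr, hvr⟩ := hdef r
  have dpq : vp ≠ vq := fun h => hpq (hoff p q vp hpb hqb hvp (by rw [h]; exact hvq))
  have dpr : vp ≠ vr := fun h => hpr (hoff p r vp hpb hrb hvp (by rw [h]; exact hvr))
  have dqr : vq ≠ vr := fun h => hqr (hoff q r vq hqb hrb hvq (by rw [h]; exact hvr))
  have hb0 : b 0 = some 0 := by
    cases hb0' : b 0 with
    | none => exact absurd hb0' (hbtot 0)
    | some u =>
        by_cases hu : u = 0
        · subst hu; exact rfl
        · exact (b0_ne_zero_contra (hHF2 b hbM u hb0' hu) hvp hvq hvr dpq dpr dqr).elim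
  have hc0 : c 0 = some 0 := by
    have h1 := ha0
    simp only [pmul, hb0, Option.bind_some] at h1
    exact h1
  by_cases hbinj : PInj b
  · right
    have hbsurj := tot_surj hbtot hbinj
    have hani' : ∃ x y v, pmul b c x = some v ∧ pmul b c y = some v ∧ x ≠ y := by
      unfold PInj at hani
      push_neg at hani
      obtain ⟨x, y, v, h1, h2, hxy⟩ := hani
      exact ⟨x, y, v, h1, h2, hxy⟩
    obtain ⟨x, y, v, h1, h2, hxy⟩ := hani'
    obtain ⟨m, hbi⟩ : ∃ m, b i = some m := by
      cases h : b i with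
      | none => exact absurd h (hbtot i)
      | some m => exact ⟨m, rfl⟩
    have hm0 : m ≠ 0 := by
      rintro rfl
      exact hi0 (hbinj i 0 0 hbi hb0)
    have hctot : Tot c := by
      intro z hz
      obtain ⟨x', hx'⟩ := hbsurj z
      exact hatot x' (by simp [pmul, hx', hz])
    refine ⟨⟨hctot, hc0, ?_, m, hm0, ?_⟩, ?_⟩
    · intro hcinj
      apply hxy
      obtain ⟨m1, hm1, hm1'⟩ := pmul_eq_some h1
      obtain ⟨m2, hm2, hm2'⟩ := pmul_eq_some h2
      have h3 := hcinj m1 m2 v hm1' hm2'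
      subst h3
      exact hbinj x y m1 hm1 hm2
    · intro z z' w hcz hcz'
      simp only [offp] at hcz hcz'
      by_cases hz : z = m
      · rw [if_pos hz] at hcz; exact absurd hcz (by simp)
      rw [if_neg hz] at hcz
      by_cases hz' : z' = m
      · rw [if_pos hz'] at hcz'; exact absurd hcz' (by simp)
      rw [if_neg hz'] at hcz'
      obtain ⟨x', hx'⟩ := hbsurj z
      obtain ⟨x'', hx''⟩ := hbsurj z'
      have hx'i : x' ≠ i := by
        rintro rfl
        rw [hbi] at hx'
        exact hz (Option.some_injective _ hx').symm
      have hx''i : x'' ≠ i := by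
        rintro rfl
        rw [hbi] at hx''
        exact hz' (Option.some_injective _ hx'').symm
      have h3 := hoff x' x'' w hx'i hx''i (by simp [pmul, hx', hcz])
        (by simp [pmul, hx'', hcz'])
      subst h3
      rw [hx'] at hx''
      exact Option.some_injective _ hx''
    · intro z hz hcz
      obtain ⟨x', hx'⟩ := hbsurj z
      have hx'0 : x' ≠ 0 := by
        rintro rfl
        rw [hb0] at hx'
        exact hz (Option.some_injective _ hx').symm
      exact hanz x' hx'0 (by simp [pmul, hx', hcz])
  · left
    refine ⟨⟨hbtot, hb0, hbinj, i, hi0, ?_⟩, ?_⟩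
    · intro x y v hbx hby
      simp only [offp] at hbx hby
      by_cases hx : x = i
      · rw [if_pos hx] at hbx; exact absurd hbx (by simp)
      rw [if_neg hx] at hbx
      by_cases hy : y = i
      · rw [if_pos hy] at hby; exact absurd hby (by simp)
      rw [if_neg hy] at hby
      cases hcv : c v with
      | none => exact absurd (show pmul b c x = none by simp [pmul, hbx, hcv]) (hatot x)
      | some w =>
          exact hoff x y w hx hy (by simp [pmul, hbx, hcv]) (by simp [pmul, hby, hcv])
    · intro x hx hbx
      apply hanz x hx
      show pmul b c x = some 0
      simp [pmul, hbx, hc0]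

end CtpClosed

end Star
namespace Star

variable {n : ℕ} [NeZero n]

lemma lower_Ps (hn : 4 ≤ n) {S : Set (Fin n → Option (Fin n))} (hfin : S.Finite)
    (hsub : S ⊆ PsEndS n) (hgen : {a | genFrom S a} = PsEndS n) : 6 ≤ S.ncard := by
  have hHF2 : ∀ a ∈ PsEndS n, ∀ u : Fin n, a 0 = some u → u ≠ 0 →
      ∀ x v, a x = some v → v = 0 ∨ v = u :=
    fun a ha u h0 hu x v hxv =>
      hf2_pw (IsPEnd.toPwEnd (IsPsEnd.toPEnd ha)) h0 hu x v hxv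
  obtain ⟨u1, u2, hu1S, hu2S, hu12, hu1U, hu2U⟩ := two_units hn hgen
    (pe_mem_psEnd (swap_zero lone_ne_zero ltwo_ne_zero))
    (pe_mem_psEnd (swap_zero lone_ne_zero lthree_ne_zero))
  have hu10 : u1 0 = some 0 := unit_zero hn (hHF2 u1 (hsub hu1S)) hu1U.1 hu1U.2
  have hu20 : u2 0 = some 0 := unit_zero hn (hHF2 u2 (hsub hu2S)) hu2U.1 hu2U.2
  obtain ⟨st, hstS, hstC⟩ := keyLB hgen id_notin_Ct (Ct_closed hn hHF2)
    (tmap hn) tmap_ps tmap_Ct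
  obtain ⟨se, hseS, hseC⟩ := keyLB hgen id_notin_Ce (Ce_closed hn hHF2)
    (emap hn) emap_ps emap_Ce
  obtain ⟨sd, hsdS, hsdC⟩ := keyLB hgen id_notin_Cd (Cd_closed hn hHF2)
    dmap dmap_ps dmap_Cd
  obtain ⟨sw, hswS, hswC⟩ := keyLB hgen id_notin_Cswap
    (fun a b c haC _ _ heq => Cswap_closed a b c haC heq)
    (gam hn) gam_ps gam_Cswap
  refine six_le_ncard hfin hu1S hu2S hstS hseS hsdS hswS hu12
    ?_ ?_ ?_ ?_ ?_ ?_ ?_ ?_ ?_ ?_ ?_ ?_ ?_ ?_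
  · exact fun h => unit_notin_Ct hu1U.1 hu1U.2 (by rw [h]; exact hstC)
  · exact fun h => unit_notin_Ce hu1U.1 (by rw [h]; exact hseC)
  · exact fun h => unit_notin_Cd hu10 (by rw [h]; exact hsdC)
  · exact fun h => unit_notin_Cswap hu10 hu1U.2 (by rw [h]; exact hswC)
  · exact fun h => unit_notin_Ct hu2U.1 hu2U.2 (by rw [h]; exact hstC)
  · exact fun h => unit_notin_Ce hu2U.1 (by rw [h]; exact hseC)
  · exact fun h => unit_notin_Cd hu20 (by rw [h]; exact hsdC)
  · exact fun h => unit_notin_Cswap hu20 hu2U.2 (by rw [h]; exact hswC)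
  · intro h
    obtain ⟨x, hx, _⟩ := hseC.2.2
    exact hstC.1 x (by rw [h]; exact hx)
  · intro h
    have h1 := hstC.2.1
    rw [h, hsdC.1] at h1
    exact absurd h1 (by simp)
  · intro h
    have hst0 := hstC.2.1
    rcases hswC with ⟨w, h0, hw⟩ | ⟨x, hx, hx0⟩
    · rw [← h, hst0] at h0
      exact hw (Option.some_injective _ h0).symm
    · exact hf3_p (IsPsEnd.toPEnd (hsub hstS)) hst0 x 0 hx (by rw [h]; exact hx0) rfl
  · intro h
    have h1 := hseC.1
    rw [h, hsdC.1] at h1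
    exact absurd h1 (by simp)
  · intro h
    rcases hswC with ⟨w, h0, hw⟩ | ⟨x, hx, hx0⟩
    · rw [← h, hseC.1] at h0
      exact hw (Option.some_injective _ h0).symm
    · exact hx (hseC.2.1 x 0 0 (by rw [h]; exact hx0) hseC.1)
  · intro h
    rcases hswC with ⟨w, h0, hw⟩ | ⟨x, hx, hx0⟩
    · rw [← h, hsdC.1] at h0
      exact absurd h0 (by simp)
    · exact hsdC.2.2.2 x 0 (by rw [h]; exact hx0) rfl

lemma lower_Psw (hn : 4 ≤ n) {S : Set (Fin n → Option (Fin n))} (hfin : S.Finite)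
    (hsub : S ⊆ PswEndS n) (hgen : {a | genFrom S a} = PswEndS n) : 7 ≤ S.ncard := by
  have hHF2 : ∀ a ∈ PswEndS n, ∀ u : Fin n, a 0 = some u → u ≠ 0 →
      ∀ x v, a x = some v → v = 0 ∨ v = u :=
    fun a ha u h0 hu x v hxv => hf2_psw ha h0 hu x v hxv
  obtain ⟨u1, u2, hu1S, hu2S, hu12, hu1U, hu2U⟩ := two_units hn hgen
    (IsPsEnd.toPswEnd (pe_mem_psEnd (swap_zero lone_ne_zero ltwo_ne_zero)))
    (IsPsEnd.toPswEnd (pe_mem_psEnd (swap_zero lone_ne_zero lthree_ne_zero)))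
  have hu10 : u1 0 = some 0 := unit_zero hn (hHF2 u1 (hsub hu1S)) hu1U.1 hu1U.2
  have hu20 : u2 0 = some 0 := unit_zero hn (hHF2 u2 (hsub hu2S)) hu2U.1 hu2U.2
  obtain ⟨st, hstS, hstC⟩ := keyLB hgen id_notin_Ct (Ct_closed hn hHF2)
    (tmap hn) (IsPsEnd.toPswEnd tmap_ps) tmap_Ct
  obtain ⟨se, hseS, hseC⟩ := keyLB hgen id_notin_Ce (Ce_closed hn hHF2)
    (emap hn) (IsPsEnd.toPswEnd emap_ps) emap_Ce
  obtain ⟨sd, hsdS, hsdC⟩ := keyLB hgen id_notin_Cd (Cd_closed hn hHF2)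
    dmap (IsPsEnd.toPswEnd dmap_ps) dmap_Cd
  obtain ⟨sg, hsgS, hsgC⟩ := keyLB hgen id_notin_Cgam (Cgam_closed hHF2)
    (gam hn) (IsPsEnd.toPswEnd gam_ps) gam_Cgam
  obtain ⟨s7, hs7S, hs7C⟩ := keyLB hgen id_notin_Cseven (Cseven_closed hHF2)
    zmap zmap_psw (zmap_Cseven hn)
  refine seven_le_ncard hfin hu1S hu2S hstS hseS hsdS hsgS hs7S hu12
    ?_ ?_ ?_ ?_ ?_ ?_ ?_ ?_ ?_ ?_ ?_ ?_ ?_ ?_ ?_ ?_ ?_ ?_ ?_ ?_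
  · exact fun h => unit_notin_Ct hu1U.1 hu1U.2 (by rw [h]; exact hstC)
  · exact fun h => unit_notin_Ce hu1U.1 (by rw [h]; exact hseC)
  · exact fun h => unit_notin_Cd hu10 (by rw [h]; exact hsdC)
  · exact fun h => unit_notin_Cgam hu10 (by rw [h]; exact hsgC)
  · exact fun h => unit_notin_Cseven hu1U.2 (by rw [h]; exact hs7C)
  · exact fun h => unit_notin_Ct hu2U.1 hu2U.2 (by rw [h]; exact hstC)
  · exact fun h => unit_notin_Ce hu2U.1 (by rw [h]; exact hseC)
  · exact fun h => unit_notin_Cd hu20 (by rw [h]; exact hsdC)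
  · exact fun h => unit_notin_Cgam hu20 (by rw [h]; exact hsgC)
  · exact fun h => unit_notin_Cseven hu2U.2 (by rw [h]; exact hs7C)
  · intro h
    obtain ⟨x, hx, _⟩ := hseC.2.2
    exact hstC.1 x (by rw [h]; exact hx)
  · intro h
    have h1 := hstC.2.1
    rw [h, hsdC.1] at h1
    exact absurd h1 (by simp)
  · intro h
    obtain ⟨⟨w, h0, hw⟩, _⟩ := hsgC
    rw [← h, hstC.2.1] at h0
    exact hw (Option.some_injective _ h0).symm
  · intro h
    obtain ⟨htot', hst0, _, j, hj, hoffinj⟩ := hstC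
    have hs7C' : st ∈ Cseven n := by rw [h]; exact hs7C
    obtain ⟨w, h0w, i, hi, hiw⟩ := hs7C'
    have hw0 : w = 0 := by
      rw [hst0] at h0w
      exact (Option.some_injective _ h0w).symm
    subst hw0
    have hall : ∀ y v, st y = some v → v = 0 := by
      intro y v hyv
      by_cases hy0 : y = 0
      · subst hy0; rw [hst0] at hyv; exact (Option.some_injective _ hyv).symm
      · exact (psw_pair (hsub hstS) hy0 hi hyv hiw).mpr rfl
    obtain ⟨p, q, r, hpj, hqj, hrj, hpq, hpr, hqr⟩ := pick3 hn j
    obtain ⟨vp, hvp⟩ : ∃ v, st p = some v := by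
      cases hcc : st p with
      | none => exact absurd hcc (htot' p)
      | some v => exact ⟨v, rfl⟩
    obtain ⟨vq, hvq⟩ : ∃ v, st q = some v := by
      cases hcc : st q with
      | none => exact absurd hcc (htot' q)
      | some v => exact ⟨v, rfl⟩
    have hvp0 := hall p vp hvp
    have hvq0 := hall q vq hvq
    subst hvp0; subst hvq0
    exact hpq (hoffinj p q 0 (by simp [offp, hpj, hvp]) (by simp [offp, hqj, hvq]))
  · intro h
    have h1 := hseC.1
    rw [h, hsdC.1] at h1
    exact absurd h1 (by simp)
  · intro h
    obtain ⟨⟨w, h0, hw⟩, _⟩ := hsgC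
    rw [← h, hseC.1] at h0
    exact hw (Option.some_injective _ h0).symm
  · intro h
    obtain ⟨w, h0, i, hi, hiw⟩ := hs7C
    rw [← h] at h0 hiw
    exact hi (hseC.2.1 i 0 w hiw h0)
  · intro h
    obtain ⟨⟨w, h0, hw⟩, _⟩ := hsgC
    rw [← h, hsdC.1] at h0
    exact absurd h0 (by simp)
  · intro h
    obtain ⟨w, h0, i, hi, hiw⟩ := hs7C
    rw [← h, hsdC.1] at h0
    exact absurd h0 (by simp)
  · intro h
    obtain ⟨⟨u, h0, hu⟩, ⟨x, hx, hx0v⟩⟩ := hsgC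
    have hs7C' : sg ∈ Cseven n := by rw [h]; exact hs7C
    obtain ⟨w, h0w, i, hi, hiw⟩ := hs7C'
    have hwu : w = u := by
      rw [h0] at h0w
      exact (Option.some_injective _ h0w).symm
    subst hwu
    have := (psw_pair (hsub hsgS) hx hi hx0v hiw).mp rfl
    exact hu this

lemma lower_P (hn : 4 ≤ n) {S : Set (Fin n → Option (Fin n))} (hfin : S.Finite)
    (hsub : S ⊆ PEndS n) (hgen : {a | genFrom S a} = PEndS n) : 7 ≤ S.ncard := by
  have hHF2 : ∀ a ∈ PEndS n, ∀ u : Fin n, a 0 = some u → u ≠ 0 →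
      ∀ x v, a x = some v → v = 0 ∨ v = u :=
    fun a ha u h0 hu x v hxv => hf2_pw (IsPEnd.toPwEnd ha) h0 hu x v hxv
  have hHF3 : ∀ a ∈ PEndS n, a 0 = some 0 → ∀ x v, x ≠ 0 → a x = some v → v ≠ 0 :=
    fun a ha h0 x v hx hxv => hf3_p ha h0 x v hx hxv
  obtain ⟨u1, u2, hu1S, hu2S, hu12, hu1U, hu2U⟩ := two_units hn hgen
    (IsPsEnd.toPEnd (pe_mem_psEnd (swap_zero lone_ne_zero ltwo_ne_zero)))
    (IsPsEnd.toPEnd (pe_mem_psEnd (swap_zero lone_ne_zero lthree_ne_zero)))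
  have hu10 : u1 0 = some 0 := unit_zero hn (hHF2 u1 (hsub hu1S)) hu1U.1 hu1U.2
  have hu20 : u2 0 = some 0 := unit_zero hn (hHF2 u2 (hsub hu2S)) hu2U.1 hu2U.2
  obtain ⟨st, hstS, hstC⟩ := keyLB hgen id_notin_Ct (Ct_closed hn hHF2)
    (tmap hn) (IsPsEnd.toPEnd tmap_ps) tmap_Ct
  obtain ⟨se, hseS, hseC⟩ := keyLB hgen id_notin_Ce (Ce_closed hn hHF2)
    (emap hn) (IsPsEnd.toPEnd emap_ps) emap_Ce
  obtain ⟨sd, hsdS, hsdC⟩ := keyLB hgen id_notin_Cd (Cd_closed hn hHF2)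
    dmap (IsPsEnd.toPEnd dmap_ps) dmap_Cd
  obtain ⟨sz, hszS, hszC⟩ := keyLB hgen id_notin_Cz (Cz_closed hn hHF2 hHF3)
    (del hn) del_p del_Cz
  obtain ⟨sw, hswS, hswC⟩ := keyLB hgen id_notin_Cswap0
    (fun a b c haC _ _ heq => Cswap0_closed a b c haC heq)
    (gam hn) (IsPsEnd.toPEnd gam_ps) gam_Cswap0
  refine seven_le_ncard hfin hu1S hu2S hstS hseS hsdS hszS hswS hu12
    ?_ ?_ ?_ ?_ ?_ ?_ ?_ ?_ ?_ ?_ ?_ ?_ ?_ ?_ ?_ ?_ ?_ ?_ ?_ ?_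
  · exact fun h => unit_notin_Ct hu1U.1 hu1U.2 (by rw [h]; exact hstC)
  · exact fun h => unit_notin_Ce hu1U.1 (by rw [h]; exact hseC)
  · exact fun h => unit_notin_Cd hu10 (by rw [h]; exact hsdC)
  · exact fun h => unit_notin_Cz hu10 (by rw [h]; exact hszC)
  · exact fun h => unit_notin_Cswap0 hu10 (by rw [h]; exact hswC)
  · exact fun h => unit_notin_Ct hu2U.1 hu2U.2 (by rw [h]; exact hstC)
  · exact fun h => unit_notin_Ce hu2U.1 (by rw [h]; exact hseC)
  · exact fun h => unit_notin_Cd hu20 (by rw [h]; exact hsdC)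
  · exact fun h => unit_notin_Cz hu20 (by rw [h]; exact hszC)
  · exact fun h => unit_notin_Cswap0 hu20 (by rw [h]; exact hswC)
  · intro h
    obtain ⟨x, hx, _⟩ := hseC.2.2
    exact hstC.1 x (by rw [h]; exact hx)
  · intro h
    have h1 := hstC.2.1
    rw [h, hsdC.1] at h1
    exact absurd h1 (by simp)
  · intro h
    have h1 := hstC.2.1
    rw [h, hszC.1] at h1
    exact absurd h1 (by simp)
  · intro h
    obtain ⟨w, h0, hw⟩ := hswC
    rw [← h, hstC.2.1] at h0
    exact hw (Option.some_injective _ h0).symm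
  · intro h
    have h1 := hseC.1
    rw [h, hsdC.1] at h1
    exact absurd h1 (by simp)
  · intro h
    have h1 := hseC.1
    rw [h, hszC.1] at h1
    exact absurd h1 (by simp)
  · intro h
    obtain ⟨w, h0, hw⟩ := hswC
    rw [← h, hseC.1] at h0
    exact hw (Option.some_injective _ h0).symm
  · intro h
    obtain ⟨x, hx0v⟩ := hszC.2.2.2
    exact hsdC.2.2.2 x 0 (by rw [h]; exact hx0v) rfl
  · intro h
    obtain ⟨w, h0, hw⟩ := hswC
    rw [← h, hsdC.1] at h0
    exact absurd h0 (by simp)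
  · intro h
    obtain ⟨w, h0, hw⟩ := hswC
    rw [← h, hszC.1] at h0
    exact absurd h0 (by simp)

lemma lower_Pw (hn : 4 ≤ n) {S : Set (Fin n → Option (Fin n))} (hfin : S.Finite)
    (hsub : S ⊆ PwEndS n) (hgen : {a | genFrom S a} = PwEndS n) : 7 ≤ S.ncard := by
  have hHF2 : ∀ a ∈ PwEndS n, ∀ u : Fin n, a 0 = some u → u ≠ 0 →
      ∀ x v, a x = some v → v = 0 ∨ v = u :=
    fun a ha u h0 hu x v hxv => hf2_pw ha h0 hu x v hxv
  obtain ⟨u1, u2, hu1S, hu2S, hu12, hu1U, hu2U⟩ := two_units hn hgen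
    (IsPEnd.toPwEnd (IsPsEnd.toPEnd (pe_mem_psEnd (swap_zero lone_ne_zero ltwo_ne_zero))))
    (IsPEnd.toPwEnd (IsPsEnd.toPEnd (pe_mem_psEnd (swap_zero lone_ne_zero lthree_ne_zero))))
  have hu10 : u1 0 = some 0 := unit_zero hn (hHF2 u1 (hsub hu1S)) hu1U.1 hu1U.2
  have hu20 : u2 0 = some 0 := unit_zero hn (hHF2 u2 (hsub hu2S)) hu2U.1 hu2U.2
  obtain ⟨st, hstS, hstC⟩ := keyLB hgen id_notin_Ctp (Ctp_closed (hn := hn) hHF2)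
    (tmap hn) (IsPEnd.toPwEnd (IsPsEnd.toPEnd tmap_ps)) tmap_Ctp
  obtain ⟨sw, hswS, hswC⟩ := keyLB hgen id_notin_Cw (Cw_closed hn hHF2)
    (wmap hn) wmap_pw wmap_Cw
  obtain ⟨se, hseS, hseC⟩ := keyLB hgen id_notin_Ce (Ce_closed hn hHF2)
    (emap hn) (IsPEnd.toPwEnd (IsPsEnd.toPEnd emap_ps)) emap_Ce
  obtain ⟨sd, hsdS, hsdC⟩ := keyLB hgen id_notin_Cd (Cd_closed hn hHF2)
    dmap (IsPEnd.toPwEnd (IsPsEnd.toPEnd dmap_ps)) dmap_Cd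
  obtain ⟨sg, hsgS, hsgC⟩ := keyLB hgen id_notin_Cswap0
    (fun a b c haC _ _ heq => Cswap0_closed a b c haC heq)
    (gam hn) (IsPEnd.toPwEnd (IsPsEnd.toPEnd gam_ps)) gam_Cswap0
  refine seven_le_ncard hfin hu1S hu2S hstS hswS hseS hsdS hsgS hu12
    ?_ ?_ ?_ ?_ ?_ ?_ ?_ ?_ ?_ ?_ ?_ ?_ ?_ ?_ ?_ ?_ ?_ ?_ ?_ ?_
  · exact fun h => unit_notin_Ctp hu1U.1 hu1U.2 (by rw [h]; exact hstC)
  · exact fun h => unit_notin_Cw hu10 hu1U.1 hu1U.2 (by rw [h]; exact hswC)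
  · exact fun h => unit_notin_Ce hu1U.1 (by rw [h]; exact hseC)
  · exact fun h => unit_notin_Cd hu10 (by rw [h]; exact hsdC)
  · exact fun h => unit_notin_Cswap0 hu10 (by rw [h]; exact hsgC)
  · exact fun h => unit_notin_Ctp hu2U.1 hu2U.2 (by rw [h]; exact hstC)
  · exact fun h => unit_notin_Cw hu20 hu2U.1 hu2U.2 (by rw [h]; exact hswC)
  · exact fun h => unit_notin_Ce hu2U.1 (by rw [h]; exact hseC)
  · exact fun h => unit_notin_Cd hu20 (by rw [h]; exact hsdC)
  · exact fun h => unit_notin_Cswap0 hu20 (by rw [h]; exact hsgC)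
  · intro h
    obtain ⟨_, _, i, hi, hi0, _⟩ := hswC
    exact hstC.2 i hi (by rw [h]; exact hi0)
  · intro h
    obtain ⟨x, hx, _⟩ := hseC.2.2
    exact hstC.1.1 x (by rw [h]; exact hx)
  · intro h
    have h1 := hstC.1.2.1
    rw [h, hsdC.1] at h1
    exact absurd h1 (by simp)
  · intro h
    obtain ⟨w, h0, hw⟩ := hsgC
    rw [← h, hstC.1.2.1] at h0
    exact hw (Option.some_injective _ h0).symm
  · intro h
    obtain ⟨_, h0', i, hi, hi0, _⟩ := hswC
    rw [h] at h0' hi0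
    exact hi (hseC.2.1 i 0 0 hi0 h0')
  · intro h
    obtain ⟨_, h0', _⟩ := hswC
    rw [h, hsdC.1] at h0'
    exact absurd h0' (by simp)
  · intro h
    obtain ⟨w, h0, hw⟩ := hsgC
    rw [← h, hswC.2.1] at h0
    exact hw (Option.some_injective _ h0).symm
  · intro h
    have h1 := hseC.1
    rw [h, hsdC.1] at h1
    exact absurd h1 (by simp)
  · intro h
    obtain ⟨w, h0, hw⟩ := hsgC
    rw [← h, hseC.1] at h0
    exact hw (Option.some_injective _ h0).symm
  · intro h
    obtain ⟨w, h0, hw⟩ := hsgC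
    rw [← h, hsdC.1] at h0
    exact absurd h0 (by simp)

lemma lower_I (hn : 4 ≤ n) {S : Set (Fin n → Option (Fin n))} (hfin : S.Finite)
    (hsub : S ⊆ IEndS n) (hgen : {a | genFrom S a} = IEndS n) : 6 ≤ S.ncard := by
  have hHF2 : ∀ a ∈ IEndS n, ∀ u : Fin n, a 0 = some u → u ≠ 0 →
      ∀ x v, a x = some v → v = 0 ∨ v = u :=
    fun a ha u h0 hu x v hxv => hf2_pw (IsPEnd.toPwEnd ha.2) h0 hu x v hxv
  have hHF3 : ∀ a ∈ IEndS n, a 0 = some 0 → ∀ x v, x ≠ 0 → a x = some v → v ≠ 0 :=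
    fun a ha h0 x v hx hxv => hf3_p ha.2 h0 x v hx hxv
  obtain ⟨u1, u2, hu1S, hu2S, hu12, hu1U, hu2U⟩ := two_units hn hgen
    ⟨pe_pinj _, IsPsEnd.toPEnd (pe_mem_psEnd (swap_zero lone_ne_zero ltwo_ne_zero))⟩
    ⟨pe_pinj _, IsPsEnd.toPEnd (pe_mem_psEnd (swap_zero lone_ne_zero lthree_ne_zero))⟩
  have hu10 : u1 0 = some 0 := unit_zero hn (hHF2 u1 (hsub hu1S)) hu1U.1 hu1U.2
  have hu20 : u2 0 = some 0 := unit_zero hn (hHF2 u2 (hsub hu2S)) hu2U.1 hu2U.2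
  obtain ⟨se, hseS, hseC⟩ := keyLB hgen id_notin_Ce (Ce_closed hn hHF2)
    (emap hn) ⟨emap_pinj, IsPsEnd.toPEnd emap_ps⟩ emap_Ce
  obtain ⟨sd, hsdS, hsdC⟩ := keyLB hgen id_notin_Cd (Cd_closed hn hHF2)
    dmap ⟨dmap_pinj, IsPsEnd.toPEnd dmap_ps⟩ dmap_Cd
  obtain ⟨sz, hszS, hszC⟩ := keyLB hgen id_notin_Cz (Cz_closed hn hHF2 hHF3)
    (del hn) ⟨del_pinj, del_p⟩ del_Cz
  obtain ⟨sg, hsgS, hsgC⟩ := keyLB hgen id_notin_Cswap0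
    (fun a b c haC _ _ heq => Cswap0_closed a b c haC heq)
    (gam' hn) ⟨gam'_pinj, IsPsEnd.toPEnd gam'_ps⟩ gam'_Cswap0
  refine six_le_ncard hfin hu1S hu2S hseS hsdS hszS hsgS hu12
    ?_ ?_ ?_ ?_ ?_ ?_ ?_ ?_ ?_ ?_ ?_ ?_ ?_ ?_
  · exact fun h => unit_notin_Ce hu1U.1 (by rw [h]; exact hseC)
  · exact fun h => unit_notin_Cd hu10 (by rw [h]; exact hsdC)
  · exact fun h => unit_notin_Cz hu10 (by rw [h]; exact hszC)
  · exact fun h => unit_notin_Cswap0 hu10 (by rw [h]; exact hsgC)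
  · exact fun h => unit_notin_Ce hu2U.1 (by rw [h]; exact hseC)
  · exact fun h => unit_notin_Cd hu20 (by rw [h]; exact hsdC)
  · exact fun h => unit_notin_Cz hu20 (by rw [h]; exact hszC)
  · exact fun h => unit_notin_Cswap0 hu20 (by rw [h]; exact hsgC)
  · intro h
    have h1 := hseC.1
    rw [h, hsdC.1] at h1
    exact absurd h1 (by simp)
  · intro h
    have h1 := hseC.1
    rw [h, hszC.1] at h1
    exact absurd h1 (by simp)
  · intro h
    obtain ⟨w, h0, hw⟩ := hsgC
    rw [← h, hseC.1] at h0
    exact hw (Option.some_injective _ h0).symm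
  · intro h
    obtain ⟨x, hx0v⟩ := hszC.2.2.2
    exact hsdC.2.2.2 x 0 (by rw [h]; exact hx0v) rfl
  · intro h
    obtain ⟨w, h0, hw⟩ := hsgC
    rw [← h, hsdC.1] at h0
    exact absurd h0 (by simp)
  · intro h
    obtain ⟨w, h0, hw⟩ := hsgC
    rw [← h, hszC.1] at h0
    exact absurd h0 (by simp)

end Star

theorem stmt19 (n : ℕ) (hn : 4 ≤ n) :
    rankIs (PsEndS n) 6 ∧ rankIs (PswEndS n) 7 ∧ rankIs (PEndS n) 7
      ∧ rankIs (PwEndS n) 7 ∧ rankIs (IEndS n) 6 := by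
  haveI : NeZero n := ⟨by omega⟩
  refine ⟨⟨?_, ?_⟩, ⟨?_, ?_⟩, ⟨?_, ?_⟩, ⟨?_, ?_⟩, ⟨?_, ?_⟩⟩
  · exact Star.upper_Ps hn
  · rintro k ⟨S, hfin, hcard, hsub, hgen⟩
    rw [← hcard]
    exact Star.lower_Ps hn hfin hsub hgen
  · exact Star.upper_Psw hn
  · rintro k ⟨S, hfin, hcard, hsub, hgen⟩
    rw [← hcard]
    exact Star.lower_Psw hn hfin hsub hgen
  · exact Star.upper_P hn
  · rintro k ⟨S, hfin, hcard, hsub, hgen⟩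
    rw [← hcard]
    exact Star.lower_P hn hfin hsub hgen
  · exact Star.upper_Pw hn
  · rintro k ⟨S, hfin, hcard, hsub, hgen⟩
    rw [← hcard]
    exact Star.lower_Pw hn hfin hsub hgen
  · exact Star.upper_I hn
  · rintro k ⟨S, hfin, hcard, hsub, hgen⟩
    rw [← hcard]
    exact Star.lower_I hn hfin hsub hgen
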